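/- arXiv:1111.3885 — 9 statements merged into one kernel-verified Lean document; each statement's English description precedes it below -/
import Mathlib

section
/- Let 𝒳 be a family of real-valued random variables on a probability space (Ω, F, P). Then 𝒳 is bounded in probability if and only if there exists a nondecreasing unbounded function U : [0,∞) → [0,∞) such that sup_{X ∈ 𝒳} E[U(|X|)] < ∞. Moreover, when 𝒳 is bounded in probability, the function U can be chosen to be concave and to satisfy U(0) = 0. -/
open MeasureTheory Filter Set
open scoped ENNReal NNReal Topology

-- Markov direction
theorem aux_markov {Ω : Type*} [MeasurableSpace Ω] (P : Measure Ω) [IsProbabilityMeasure P]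
    (𝒳 : Set (Ω → ℝ)) (h𝒳 : ∀ X ∈ 𝒳, Measurable X)
    (U : ℝ → ℝ) (hmono : MonotoneOn U (Ici 0))
    (hunb : ∀ C : ℝ, ∃ x, 0 ≤ x ∧ C ≤ U x)
    (hfin : (⨆ X ∈ 𝒳, ∫⁻ ω, ENNReal.ofReal (U |X ω|) ∂P) < ⊤) :
    Tendsto (fun M : ℝ => ⨆ X ∈ 𝒳, P {ω | M ≤ |X ω|}) atTop (𝓝 0) := by
  set S := ⨆ X ∈ 𝒳, ∫⁻ ω, ENNReal.ofReal (U |X ω|) ∂P with hS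
  rw [ENNReal.tendsto_nhds_zero]
  intro ε hε
  set ε' : ℝ≥0∞ := min ε 1 with hε'
  have hε'0 : 0 < ε' := lt_min hε zero_lt_one
  have hε'top : ε' ≠ ⊤ := by
    simp [hε']
  obtain ⟨x, hx0, hxU⟩ := hunb (S.toReal / ε'.toReal + 1)
  have hC1 : (1:ℝ) ≤ S.toReal / ε'.toReal + 1 := by
    have : 0 ≤ S.toReal / ε'.toReal := div_nonneg ENNReal.toReal_nonneg ENNReal.toReal_nonneg
    linarith
  have hUx1 : (1:ℝ) ≤ U x := le_trans hC1 hxU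
  have hUx0 : ENNReal.ofReal (U x) ≠ 0 := by
    simp only [ne_eq, ENNReal.ofReal_eq_zero, not_le]
    linarith
  have hUxtop : ENNReal.ofReal (U x) ≠ ⊤ := ENNReal.ofReal_ne_top
  -- key: S ≤ ofReal (U x) * ε'
  have hkey : S ≤ ENNReal.ofReal (U x) * ε' := by
    have h1 : S / ε' ≤ ENNReal.ofReal (U x) := by
      have : S / ε' = ENNReal.ofReal (S.toReal / ε'.toReal) := by
        rw [ENNReal.ofReal_div_of_pos, ENNReal.ofReal_toReal hfin.ne,
          ENNReal.ofReal_toReal hε'top]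
        exact ENNReal.toReal_pos hε'0.ne' hε'top
      rw [this]
      exact ENNReal.ofReal_le_ofReal (by linarith)
    calc S = S / ε' * ε' := by
            rw [ENNReal.div_mul_cancel hε'0.ne' hε'top]
      _ ≤ ENNReal.ofReal (U x) * ε' := mul_le_mul_left h1 _
  filter_upwards [eventually_ge_atTop x] with M hM
  refine le_trans (iSup₂_le fun X hX => ?_) (min_le_left ε 1)
  have hset : MeasurableSet {ω | M ≤ |X ω|} :=
    (measurableSet_le measurable_const measurable_abs).preimage (h𝒳 X hX)
  have hmark : ENNReal.ofReal (U x) * P {ω | M ≤ |X ω|} ≤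
      ∫⁻ ω, ENNReal.ofReal (U |X ω|) ∂P := by
    rw [← lintegral_indicator_const hset]
    refine lintegral_mono fun ω => ?_
    by_cases hω : M ≤ |X ω|
    · simp only [Set.indicator_apply, Set.mem_setOf_eq, hω, if_true]
      exact ENNReal.ofReal_le_ofReal (hmono (mem_Ici.2 hx0) (mem_Ici.2 (abs_nonneg _)) (le_trans hM hω))
    · simp only [Set.indicator_apply, Set.mem_setOf_eq, hω, if_false]
      exact zero_le
  have hint : (∫⁻ ω, ENNReal.ofReal (U |X ω|) ∂P) ≤ S :=
    le_iSup₂ (f := fun X (_ : X ∈ 𝒳) => ∫⁻ ω, ENNReal.ofReal (U |X ω|) ∂P) X hX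
  have := le_trans hmark (le_trans hint hkey)
  exact (ENNReal.mul_le_mul_iff_right hUx0 hUxtop).mp this

theorem aux_construct {Ω : Type*} [MeasurableSpace Ω] (P : Measure Ω) [IsProbabilityMeasure P]
    (𝒳 : Set (Ω → ℝ)) (h𝒳 : ∀ X ∈ 𝒳, Measurable X)
    (h : Tendsto (fun M : ℝ => ⨆ X ∈ 𝒳, P {ω | M ≤ |X ω|}) atTop (𝓝 0)) :
    ∃ U : ℝ → ℝ, MonotoneOn U (Ici 0) ∧ (∀ x ∈ Ici (0 : ℝ), 0 ≤ U x) ∧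
      (∀ C : ℝ, ∃ x, 0 ≤ x ∧ C ≤ U x) ∧
      (⨆ X ∈ 𝒳, ∫⁻ ω, ENNReal.ofReal (U |X ω|) ∂P) < ⊤ ∧
      ConcaveOn ℝ (Ici 0) U ∧ U 0 = 0 := by
  -- Step 1: choose thresholds K n with sup probability ≤ 2⁻¹ ^ n beyond K n
  have hK : ∀ n : ℕ, ∃ K : ℝ, ∀ m : ℝ, K ≤ m →
      (⨆ X ∈ 𝒳, P {ω | m ≤ |X ω|}) ≤ ENNReal.ofReal ((2⁻¹ : ℝ) ^ n) := by
    intro n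
    have hpos : (0 : ℝ≥0∞) < ENNReal.ofReal ((2⁻¹ : ℝ) ^ n) :=
      ENNReal.ofReal_pos.mpr (by positivity)
    have := h.eventually_le_const hpos
    rw [eventually_atTop] at this
    obtain ⟨K, hKs⟩ := this
    exact ⟨K, hKs⟩
  choose K hKs using hK
  -- Step 2: define M recursively
  set M : ℕ → ℝ := fun n => Nat.rec (max (K 0) 1)
    (fun n Mn => max (K (n + 1)) (2 ^ (n + 1) * Mn)) n with hM
  have hMs : ∀ n, M (n + 1) = max (K (n + 1)) (2 ^ (n + 1) * M n) := fun n => rfl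
  have hM1 : ∀ n, (1 : ℝ) ≤ M n := by
    intro n
    induction n with
    | zero => exact le_max_right _ _
    | succ n ih =>
      rw [hMs]
      refine le_trans ?_ (le_max_right _ _)
      have h2 : (1:ℝ) ≤ 2 ^ (n+1) := one_le_pow₀ (by norm_num)
      nlinarith
  have hMpos : ∀ n, (0 : ℝ) < M n := fun n => lt_of_lt_of_le one_pos (hM1 n)
  have hMK : ∀ n, K n ≤ M n := by
    intro n; cases n with
    | zero => exact le_max_left _ _
    | succ n => rw [hMs]; exact le_max_left _ _
  have hMgrow : ∀ n, 2 ^ (n + 1) * M n ≤ M (n + 1) := by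
    intro n; rw [hMs]; exact le_max_right _ _
  have hMmono : Monotone M := by
    refine monotone_nat_of_le_succ fun n => ?_
    refine le_trans ?_ (hMgrow n)
    have h2 : (1:ℝ) ≤ 2 ^ (n+1) := one_le_pow₀ (by norm_num)
    nlinarith [hMpos n]
  have hMge : ∀ n, (2:ℝ) ^ n ≤ M n := by
    intro n
    induction n with
    | zero => simpa using hM1 0
    | succ n ih =>
      refine le_trans ?_ (hMgrow n)
      have := hM1 n
      have h2 : (0:ℝ) < 2 ^ (n+1) := by positivity
      calc (2:ℝ) ^ (n+1) = 2 ^ (n+1) * 1 := by ring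
        _ ≤ 2 ^ (n+1) * M n := by nlinarith
  -- the function
  set u : ℕ → ℝ → ℝ := fun n x => min (x / M n) 1 with hu
  set U : ℝ → ℝ := fun x => ∑' n, u n x with hUdef
  -- summability
  have husum : ∀ x : ℝ, 0 ≤ x → Summable (fun n => u n x) := by
    intro x hx
    refine Summable.of_nonneg_of_le
      (fun n => le_min (div_nonneg hx (hMpos n).le) zero_le_one) (fun n => ?_)
      ((summable_geometric_of_lt_one (by norm_num) (by norm_num : (2:ℝ)⁻¹ < 1)).mul_left x)
    refine le_trans (min_le_left _ _) ?_
    rw [div_le_iff₀ (hMpos n)]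
    have h2 : (2:ℝ) ^ n ≤ M n := hMge n
    have hxn : x * (2⁻¹:ℝ) ^ n * 2 ^ n = x := by
      rw [mul_assoc, ← mul_pow]; norm_num
    nlinarith [pow_nonneg (by norm_num : (0:ℝ) ≤ 2⁻¹) n, pow_pos (by norm_num : (0:ℝ) < 2) n]
  have hunonneg : ∀ n (x : ℝ), 0 ≤ x → 0 ≤ u n x :=
    fun n x hx => le_min (div_nonneg hx (hMpos n).le) zero_le_one
  -- nonneg
  have hUnonneg : ∀ x ∈ Ici (0:ℝ), 0 ≤ U x := fun x hx =>
    tsum_nonneg (fun n => hunonneg n x hx)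
  -- monotone
  have hUmono : MonotoneOn U (Ici 0) := by
    intro x hx y hy hxy
    refine Summable.tsum_le_tsum (fun n => min_le_min ?_ le_rfl) (husum x hx) (husum y hy)
    exact (div_le_div_iff_of_pos_right (hMpos n)).mpr hxy
  -- unbounded
  have hUunb : ∀ C : ℝ, ∃ x, 0 ≤ x ∧ C ≤ U x := by
    intro C
    obtain ⟨N, hN⟩ := exists_nat_ge C
    refine ⟨M N, (hMpos N).le, ?_⟩
    have hpart : ∀ n ∈ Finset.range (N + 1), (1:ℝ) ≤ u n (M N) := by
      intro n hn
      rw [Finset.mem_range] at hn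
      have : M n ≤ M N := hMmono (Nat.lt_succ_iff.mp hn)
      refine le_min ?_ le_rfl
      rw [le_div_iff₀ (hMpos n)]; linarith
    have h1 : (N + 1 : ℝ) ≤ ∑ n ∈ Finset.range (N + 1), u n (M N) := by
      have := Finset.sum_le_sum hpart
      simpa using this
    have h2 : ∑ n ∈ Finset.range (N + 1), u n (M N) ≤ U (M N) :=
      Summable.sum_le_tsum _ (fun n _ => hunonneg n _ (hMpos N).le) (husum _ (hMpos N).le)
    calc C ≤ (N : ℝ) := hN
      _ ≤ (N + 1 : ℝ) := by linarith
      _ ≤ U (M N) := le_trans h1 h2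
  -- concave
  have hUconc : ConcaveOn ℝ (Ici 0) U := by
    refine ⟨convex_Ici 0, fun x hx y hy a b ha hb hab => ?_⟩
    have hx' : (0:ℝ) ≤ x := hx
    have hy' : (0:ℝ) ≤ y := hy
    have hz : 0 ≤ a * x + b * y := by positivity
    have hsum1 : Summable (fun n => a * u n x + b * u n y) :=
      ((husum x hx').mul_left a).add ((husum y hy').mul_left b)
    have hterm : ∀ n, a * u n x + b * u n y ≤ u n (a * x + b * y) := by
      intro n
      refine le_min ?_ ?_
      · have hux : u n x ≤ x / M n := min_le_left _ _
        have huy : u n y ≤ y / M n := min_le_left _ _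
        have h1 : a * u n x + b * u n y ≤ a * (x / M n) + b * (y / M n) := by
          have := mul_le_mul_of_nonneg_left hux ha
          have := mul_le_mul_of_nonneg_left huy hb
          linarith
        calc a * u n x + b * u n y ≤ a * (x / M n) + b * (y / M n) := h1
          _ = (a * x + b * y) / M n := by rw [add_div, mul_div_assoc, mul_div_assoc]
      · have hux : u n x ≤ 1 := min_le_right _ _
        have huy : u n y ≤ 1 := min_le_right _ _
        have := mul_le_mul_of_nonneg_left hux ha
        have := mul_le_mul_of_nonneg_left huy hb
        linarith
    calc a * U x + b * U y
        = ∑' n, (a * u n x + b * u n y) := by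
          rw [Summable.tsum_add ((husum x hx').mul_left a) ((husum y hy').mul_left b),
            tsum_mul_left, tsum_mul_left]
      _ ≤ U (a * x + b * y) := Summable.tsum_le_tsum hterm hsum1 (husum _ hz)
  -- U 0 = 0
  have hU0 : U 0 = 0 := by
    simp only [hUdef, hu]
    simp [zero_div]
  -- integral bound
  have hint : (⨆ X ∈ 𝒳, ∫⁻ ω, ENNReal.ofReal (U |X ω|) ∂P) < ⊤ := by
    have hsum3 : Summable (fun n : ℕ => 3 * (2⁻¹:ℝ) ^ n) :=
      (summable_geometric_of_lt_one (by norm_num) (by norm_num)).mul_left 3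
    refine lt_of_le_of_lt (iSup₂_le fun X hX => ?_)
      (show ENNReal.ofReal (∑' n : ℕ, 3 * (2⁻¹:ℝ) ^ n) < ⊤ from ENNReal.ofReal_lt_top)
    have hXm := h𝒳 X hX
    have hrw : ∀ ω, ENNReal.ofReal (U |X ω|) = ∑' n, ENNReal.ofReal (u n |X ω|) := fun ω =>
      ENNReal.ofReal_tsum_of_nonneg (fun n => hunonneg n _ (abs_nonneg _))
        (husum _ (abs_nonneg _))
    have hbound : ∀ n : ℕ, (∫⁻ ω, ENNReal.ofReal (u n |X ω|) ∂P) ≤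
        ENNReal.ofReal (3 * (2⁻¹:ℝ) ^ n) := by
      intro n
      cases n with
      | zero =>
        calc (∫⁻ ω, ENNReal.ofReal (u 0 |X ω|) ∂P)
            ≤ ∫⁻ _, 1 ∂P := lintegral_mono fun ω => by
              calc ENNReal.ofReal (u 0 |X ω|) ≤ ENNReal.ofReal 1 :=
                    ENNReal.ofReal_le_ofReal (min_le_right _ _)
                _ = 1 := ENNReal.ofReal_one
          _ = 1 := by simp
          _ ≤ ENNReal.ofReal (3 * (2⁻¹:ℝ) ^ 0) := by
              rw [show (3:ℝ) * (2⁻¹:ℝ) ^ 0 = 3 by norm_num]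
              rw [show (1:ℝ≥0∞) = ENNReal.ofReal 1 from ENNReal.ofReal_one.symm]
              exact ENNReal.ofReal_le_ofReal (by norm_num)
      | succ n =>
        have hset : MeasurableSet {ω | M n ≤ |X ω|} :=
          (measurableSet_le measurable_const measurable_abs).preimage hXm
        have hptw : ∀ ω, ENNReal.ofReal (u (n+1) |X ω|) ≤
            {ω | M n ≤ |X ω|}.indicator (fun _ => 1) ω
              + ENNReal.ofReal (M n / M (n + 1)) := by
          intro ω
          by_cases hω : M n ≤ |X ω|
          · refine le_trans ?_ (le_add_of_nonneg_right zero_le)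
            simp only [Set.indicator_apply, Set.mem_setOf_eq, hω, if_true]
            calc ENNReal.ofReal (u (n+1) |X ω|) ≤ ENNReal.ofReal 1 :=
                  ENNReal.ofReal_le_ofReal (min_le_right _ _)
              _ = 1 := ENNReal.ofReal_one
          · refine le_trans ?_ (le_add_of_nonneg_left zero_le)
            refine ENNReal.ofReal_le_ofReal ?_
            refine le_trans (min_le_left _ _) ?_
            exact (div_le_div_iff_of_pos_right (hMpos (n+1))).mpr (le_of_not_ge hω)
        have hprob : P {ω | M n ≤ |X ω|} ≤ ENNReal.ofReal ((2⁻¹:ℝ) ^ n) := by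
          refine le_trans ?_ (hKs n (M n) (hMK n))
          exact le_iSup₂ (f := fun X (_ : X ∈ 𝒳) => P {ω | M n ≤ |X ω|}) X hX
        have hratio : M n / M (n + 1) ≤ (2⁻¹ : ℝ) ^ (n + 1) := by
          rw [div_le_iff₀ (hMpos (n+1))]
          have := hMgrow n
          have h2 : (2⁻¹:ℝ) ^ (n+1) * (2 ^ (n + 1) * M n) = M n := by
            rw [← mul_assoc, ← mul_pow]; norm_num
          nlinarith [pow_nonneg (by norm_num : (0:ℝ) ≤ 2⁻¹) (n+1), hMpos n]
        calc (∫⁻ ω, ENNReal.ofReal (u (n+1) |X ω|) ∂P)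
            ≤ ∫⁻ ω, ({ω | M n ≤ |X ω|}.indicator (fun _ => 1) ω
                + ENNReal.ofReal (M n / M (n + 1))) ∂P := lintegral_mono hptw
          _ = P {ω | M n ≤ |X ω|} + ENNReal.ofReal (M n / M (n + 1)) := by
              rw [lintegral_add_right _ measurable_const, lintegral_indicator_const hset,
                lintegral_const, measure_univ, mul_one, one_mul]
          _ ≤ ENNReal.ofReal ((2⁻¹:ℝ) ^ n) + ENNReal.ofReal ((2⁻¹:ℝ) ^ (n+1)) :=
              add_le_add hprob (ENNReal.ofReal_le_ofReal hratio)
          _ = ENNReal.ofReal ((2⁻¹:ℝ) ^ n + (2⁻¹:ℝ) ^ (n+1)) :=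
              (ENNReal.ofReal_add (by positivity) (by positivity)).symm
          _ ≤ ENNReal.ofReal (3 * (2⁻¹:ℝ) ^ (n+1)) := by
              refine ENNReal.ofReal_le_ofReal ?_
              have : (2⁻¹:ℝ) ^ n = 2 * (2⁻¹:ℝ) ^ (n+1) := by
                rw [pow_succ]; ring
              linarith [pow_nonneg (by norm_num : (0:ℝ) ≤ 2⁻¹) (n+1)]
    calc (∫⁻ ω, ENNReal.ofReal (U |X ω|) ∂P)
        = ∫⁻ ω, ∑' n, ENNReal.ofReal (u n |X ω|) ∂P := by simp_rw [hrw]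
      _ = ∑' n, ∫⁻ ω, ENNReal.ofReal (u n |X ω|) ∂P :=
          lintegral_tsum fun n =>
            (Measurable.ennreal_ofReal ((hXm.abs.div_const _).min measurable_const)).aemeasurable
      _ ≤ ∑' n : ℕ, ENNReal.ofReal (3 * (2⁻¹:ℝ) ^ n) := ENNReal.tsum_le_tsum hbound
      _ = ENNReal.ofReal (∑' n : ℕ, 3 * (2⁻¹:ℝ) ^ n) :=
          (ENNReal.ofReal_tsum_of_nonneg (fun n => by positivity) hsum3).symm
  exact ⟨U, hUmono, hUnonneg, hUunb, hint, hUconc, hU0⟩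


/-- A family `𝒳` of real-valued random variables is bounded in probability
if and only if there is a nondecreasing unbounded function `U : [0,∞) → [0,∞)` with
`sup_{X ∈ 𝒳} E[U(|X|)] < ∞`; moreover, if `𝒳` is bounded in probability, `U` can be chosen
concave with `U 0 = 0`. -/
theorem statement0 {Ω : Type*} [MeasurableSpace Ω] (P : Measure Ω) [IsProbabilityMeasure P]
    (𝒳 : Set (Ω → ℝ)) (h𝒳 : ∀ X ∈ 𝒳, Measurable X) :
    (Tendsto (fun M : ℝ => ⨆ X ∈ 𝒳, P {ω | M ≤ |X ω|}) atTop (𝓝 0) ↔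
      ∃ U : ℝ → ℝ, MonotoneOn U (Ici 0) ∧ (∀ x ∈ Ici (0 : ℝ), 0 ≤ U x) ∧
        (∀ C : ℝ, ∃ x, 0 ≤ x ∧ C ≤ U x) ∧
        (⨆ X ∈ 𝒳, ∫⁻ ω, ENNReal.ofReal (U |X ω|) ∂P) < ⊤) ∧
    (Tendsto (fun M : ℝ => ⨆ X ∈ 𝒳, P {ω | M ≤ |X ω|}) atTop (𝓝 0) →
      ∃ U : ℝ → ℝ, MonotoneOn U (Ici 0) ∧ (∀ x ∈ Ici (0 : ℝ), 0 ≤ U x) ∧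
        (∀ C : ℝ, ∃ x, 0 ≤ x ∧ C ≤ U x) ∧
        (⨆ X ∈ 𝒳, ∫⁻ ω, ENNReal.ofReal (U |X ω|) ∂P) < ⊤ ∧
        ConcaveOn ℝ (Ici 0) U ∧ U 0 = 0) := by
  constructor
  · constructor
    · intro hb
      obtain ⟨U, h1, h2, h3, h4, _, _⟩ := aux_construct P 𝒳 h𝒳 hb
      exact ⟨U, h1, h2, h3, h4⟩
    · rintro ⟨U, h1, h2, h3, h4⟩
      exact aux_markov P 𝒳 h𝒳 U h1 h3 h4
  · exact aux_construct P 𝒳 h𝒳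
end

section
/- Let 𝒳 be a convex family of nonnegative random variables on a probability space (Ω, F, P). Then 𝒳 is bounded in probability if and only if there exists a random variable Z with P(Z > 0) = 1 such that sup_{X ∈ 𝒳} E[X Z] < ∞. -/
open MeasureTheory Filter Set
open scoped ENNReal NNReal Topology


noncomputable def uu (x : ℝ) : ℝ := 1 - Real.exp (-x)

lemma uu_continuous : Continuous uu :=
  continuous_const.sub (Real.continuous_exp.comp continuous_neg)

lemma uu_le_one (x : ℝ) : uu x ≤ 1 := by
  have := Real.exp_pos (-x); unfold uu; linarith

lemma uu_nonneg {x : ℝ} (hx : 0 ≤ x) : 0 ≤ uu x := by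
  have : Real.exp (-x) ≤ 1 := Real.exp_le_one_iff.mpr (by linarith)
  unfold uu; linarith

lemma convexOn_expNeg : ConvexOn ℝ univ fun x : ℝ => Real.exp (-x) := by
  refine ⟨convex_univ, fun x _ y _ a b ha hb hab => ?_⟩
  have h := convexOn_exp.2 (mem_univ (-x)) (mem_univ (-y)) ha hb hab
  simpa [smul_eq_mul, mul_neg, neg_add, ← neg_mul, add_comm] using h

lemma uu_concave_comb {a b l : ℝ} (hl0 : 0 ≤ l) (hl1 : l ≤ 1) :
    l * uu a + (1 - l) * uu b ≤ uu (l * a + (1 - l) * b) := by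
  have h := convexOn_expNeg.2 (mem_univ a) (mem_univ b) hl0 (by linarith : (0:ℝ) ≤ 1 - l)
    (by ring)
  simp only [smul_eq_mul] at h
  unfold uu; nlinarith [h]

lemma exp_add_exp_neg (d : ℝ) : 2 + d ^ 2 / 2 ≤ Real.exp d + Real.exp (-d) := by
  rcases le_total 0 d with hd | hd
  · have h1 := Real.quadratic_le_exp_of_nonneg hd
    have h2 := Real.add_one_le_exp (-d)
    linarith
  · have h1 := Real.quadratic_le_exp_of_nonneg (neg_nonneg.mpr hd)
    have h2 := Real.add_one_le_exp d
    nlinarith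

lemma uu_strong_midpoint {a b K : ℝ} (haK : a ≤ K) (hbK : b ≤ K) :
    (uu a + uu b) / 2 + Real.exp (-K) * (a - b) ^ 2 / 16 ≤ uu (2⁻¹ * a + (1 - 2⁻¹) * b) := by
  set m := (a + b) / 2 with hm
  set d := (a - b) / 2 with hd
  have hKm : Real.exp (-K) ≤ Real.exp (-m) := Real.exp_le_exp.mpr (by simp [hm]; linarith)
  have hkey := exp_add_exp_neg d
  have hexp : Real.exp (-a) + Real.exp (-b) = Real.exp (-m) * (Real.exp (-d) + Real.exp d) := by
    rw [mul_add, ← Real.exp_add, ← Real.exp_add]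
    have : -m + -d = -a := by rw [hm, hd]; ring
    have h2 : -m + d = -b := by rw [hm, hd]; ring
    rw [this, h2]
  have hmid : (2⁻¹ * a + (1 - 2⁻¹) * b) = m := by rw [hm]; ring
  rw [hmid]
  have hexpm := Real.exp_pos (-m)
  have hd2 : d ^ 2 = (a - b) ^ 2 / 4 := by rw [hd]; ring
  unfold uu
  nlinarith [mul_le_mul_of_nonneg_left hkey hexpm.le]

lemma uu_slope_mono {w d s t : ℝ} (hs : 0 < s) (hst : s ≤ t) :
    (uu (w + t * d) - uu w) / t ≤ (uu (w + s * d) - uu w) / s := by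
  have ht : 0 < t := lt_of_lt_of_le hs hst
  rcases lt_trichotomy d 0 with hd | hd | hd
  · -- d < 0
    have hsec := convexOn_expNeg.secant_mono (mem_univ w) (mem_univ (w + t * d))
      (mem_univ (w + s * d)) (by nlinarith) (by nlinarith) (by nlinarith)
    have h1 : w + t * d - w = t * d := by ring
    have h2 : w + s * d - w = s * d := by ring
    rw [h1, h2, ← div_div, ← div_div, div_le_div_right_of_neg hd] at hsec
    unfold uu at *
    have e1 : (1 - Real.exp (-(w + t * d)) - (1 - Real.exp (-w))) / t
        = -((Real.exp (-(w + t * d)) - Real.exp (-w)) / t) := by ring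
    have e2 : (1 - Real.exp (-(w + s * d)) - (1 - Real.exp (-w))) / s
        = -((Real.exp (-(w + s * d)) - Real.exp (-w)) / s) := by ring
    rw [e1, e2]; linarith
  · simp [hd]
  · -- d > 0
    have hsec := convexOn_expNeg.secant_mono (mem_univ w) (mem_univ (w + s * d))
      (mem_univ (w + t * d)) (by nlinarith) (by nlinarith) (by nlinarith)
    have h1 : w + t * d - w = t * d := by ring
    have h2 : w + s * d - w = s * d := by ring
    rw [h1, h2, ← div_div, ← div_div, div_le_div_iff_of_pos_right hd] at hsec
    unfold uu at *
    have e1 : (1 - Real.exp (-(w + t * d)) - (1 - Real.exp (-w))) / t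
        = -((Real.exp (-(w + t * d)) - Real.exp (-w)) / t) := by ring
    have e2 : (1 - Real.exp (-(w + s * d)) - (1 - Real.exp (-w))) / s
        = -((Real.exp (-(w + s * d)) - Real.exp (-w)) / s) := by ring
    rw [e1, e2]; linarith

lemma mul_exp_neg_le (w : ℝ) : w * Real.exp (-w) ≤ Real.exp (-1) := by
  have h := Real.add_one_le_exp (w - 1)
  have h2 : Real.exp (w - 1) = Real.exp w * Real.exp (-1) := by
    rw [← Real.exp_add]; ring_nf
  have h3 : Real.exp (-w) * Real.exp w = 1 := by rw [← Real.exp_add]; simp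
  nlinarith [Real.exp_pos (-w), Real.exp_pos w, Real.exp_pos (-1)]

lemma uu_hasDerivAt (x : ℝ) : HasDerivAt uu (Real.exp (-x)) x := by
  have h : HasDerivAt (fun y : ℝ => Real.exp (-y)) (-Real.exp (-x)) x := by
    simpa [Function.comp_def] using ((Real.hasDerivAt_exp (-x)).comp x (hasDerivAt_neg x))
  have h2 := h.const_sub 1
  simp only [neg_neg] at h2
  exact h2

lemma uu_tendsto_slope (w d : ℝ) :
    Tendsto (fun n : ℕ => (uu (w + 1 / ((n : ℝ) + 1) * d) - uu w) / (1 / ((n : ℝ) + 1)))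
      atTop (𝓝 (Real.exp (-w) * d)) := by
  have hinner : HasDerivAt (fun t : ℝ => w + t * d) d 0 := by
    simpa using ((hasDerivAt_id (0:ℝ)).mul_const d).const_add w
  have houter := (uu_hasDerivAt (w + 0 * d)).comp 0 hinner
  have hF : HasDerivAt (fun t : ℝ => uu (w + t * d)) (Real.exp (-w) * d) 0 := by
    simpa [Function.comp_def] using houter
  have hslope := hasDerivAt_iff_tendsto_slope.mp hF
  have hseq : Tendsto (fun n : ℕ => 1 / ((n : ℝ) + 1)) atTop (𝓝[≠] (0:ℝ)) := by
    refine tendsto_nhdsWithin_of_tendsto_nhds_of_eventually_within _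
      tendsto_one_div_add_atTop_nhds_zero_nat ?_
    filter_upwards with n
    simp only [mem_compl_iff, mem_singleton_iff]
    positivity
  have := hslope.comp hseq
  refine this.congr fun n => ?_
  simp [slope_def_field]



lemma reverse_dir {Ω : Type*} [MeasurableSpace Ω] (P : Measure Ω) [IsProbabilityMeasure P]
    (𝒳 : Set (Ω → ℝ)) (h𝒳meas : ∀ X ∈ 𝒳, Measurable X)
    (h𝒳nonneg : ∀ X ∈ 𝒳, ∀ ω, 0 ≤ X ω)
    (Z : Ω → ℝ) (hZm : Measurable Z) (hZpos : P {ω | 0 < Z ω} = 1)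
    (hC : (⨆ X ∈ 𝒳, ∫⁻ ω, ENNReal.ofReal (X ω * Z ω) ∂P) < ⊤) :
    Tendsto (fun M : ℝ => ⨆ X ∈ 𝒳, P {ω | M ≤ |X ω|}) atTop (𝓝 0) := by
  set C := ⨆ X ∈ 𝒳, ∫⁻ ω, ENNReal.ofReal (X ω * Z ω) ∂P with hCdef
  rw [ENNReal.tendsto_nhds_zero]
  intro ε hε
  have hε2 : (0 : ℝ≥0∞) < ε / 2 := ENNReal.half_pos hε.ne'
  -- find δ with P {Z < δ} ≤ ε/2
  have hZ0 : P {ω | Z ω ≤ 0} = 0 := by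
    have hs : {ω | Z ω ≤ 0} = {ω | 0 < Z ω}ᶜ := by ext ω; simp [not_lt]
    rw [hs, measure_compl (measurableSet_lt measurable_const hZm) (measure_ne_top P _),
      hZpos, measure_univ, tsub_self]
  have hiInter : (⋂ n : ℕ, {ω | Z ω < 1 / ((n : ℝ) + 1)}) = {ω | Z ω ≤ 0} := by
    ext ω
    simp only [mem_iInter, mem_setOf_eq]
    constructor
    · intro h
      by_contra hpos
      push_neg at hpos
      obtain ⟨n, hn⟩ := exists_nat_one_div_lt hpos
      exact absurd (h n) (not_lt.mpr hn.le)
    · intro h n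
      exact lt_of_le_of_lt h (by positivity)
  have htend : Tendsto (fun n : ℕ => P {ω | Z ω < 1 / ((n : ℝ) + 1)}) atTop (𝓝 0) := by
    have h := tendsto_measure_iInter_atTop (μ := P)
      (s := fun n : ℕ => {ω | Z ω < 1 / ((n:ℝ)+1)})
      (fun n : ℕ => (measurableSet_lt hZm measurable_const).nullMeasurableSet)
      (by
        intro n m hnm ω hω
        simp only [mem_setOf_eq] at *
        refine lt_of_lt_of_le hω (one_div_le_one_div_of_le (by positivity) ?_)
        have : (n : ℝ) ≤ (m : ℝ) := Nat.cast_le.mpr hnm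
        linarith)
      ⟨0, measure_ne_top P _⟩
    rwa [hiInter, hZ0] at h
  obtain ⟨n₀, hn₀⟩ := (ENNReal.tendsto_nhds_zero.mp htend (ε / 2) hε2).exists
  set δ : ℝ := 1 / ((n₀ : ℝ) + 1) with hδdef
  have hδ : 0 < δ := by positivity
  -- the Markov term tends to 0
  have hdiv : Tendsto (fun M : ℝ => C / ENNReal.ofReal (M * δ)) atTop (𝓝 0) := by
    have h1 : Tendsto (fun M : ℝ => M * δ) atTop atTop :=
      Tendsto.atTop_mul_const hδ tendsto_id
    have h2 : Tendsto (fun M : ℝ => ENNReal.ofReal (M * δ)) atTop (𝓝 ⊤) :=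
      ENNReal.tendsto_ofReal_atTop.comp h1
    have h3 : Tendsto (fun M : ℝ => (ENNReal.ofReal (M * δ))⁻¹) atTop (𝓝 0) := by
      have := ENNReal.tendsto_inv_iff.mpr h2
      simpa using this
    have h4 := ENNReal.Tendsto.const_mul h3 (Or.inr hC.ne)
    simp only [mul_zero] at h4
    simpa [div_eq_mul_inv] using h4
  filter_upwards [hdiv.eventually_le_const hε2, eventually_gt_atTop (0 : ℝ)] with M hM1 hM2
  refine iSup_le fun X => iSup_le fun hX => ?_
  have habs : {ω | M ≤ |X ω|} = {ω | M ≤ X ω} := by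
    ext ω; simp [abs_of_nonneg (h𝒳nonneg X hX ω)]
  have hsub : {ω | M ≤ X ω} ⊆
      {ω | ENNReal.ofReal (M * δ) ≤ ENNReal.ofReal (X ω * Z ω)} ∪ {ω | Z ω < δ} := by
    intro ω hω
    rcases lt_or_ge (Z ω) δ with h | h
    · exact Or.inr h
    · refine Or.inl ?_
      have : M * δ ≤ X ω * Z ω :=
        mul_le_mul hω h hδ.le (le_trans hM2.le hω)
      exact ENNReal.ofReal_le_ofReal this
  have hmarkov : P {ω | ENNReal.ofReal (M * δ) ≤ ENNReal.ofReal (X ω * Z ω)} ≤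
      C / ENNReal.ofReal (M * δ) := by
    refine le_trans (meas_ge_le_lintegral_div
      ((ENNReal.measurable_ofReal.comp ((h𝒳meas X hX).mul hZm)).aemeasurable)
      (by simp [ENNReal.ofReal_pos.mpr (by positivity : (0:ℝ) < M * δ), ne_of_gt]) 
      ENNReal.ofReal_ne_top) ?_
    refine ENNReal.div_le_div_right ?_ _
    exact le_iSup₂_of_le X hX le_rfl
  calc P {ω | M ≤ |X ω|} = P {ω | M ≤ X ω} := by rw [habs]
    _ ≤ P ({ω | ENNReal.ofReal (M * δ) ≤ ENNReal.ofReal (X ω * Z ω)} ∪ {ω | Z ω < δ}) :=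
        measure_mono hsub
    _ ≤ P {ω | ENNReal.ofReal (M * δ) ≤ ENNReal.ofReal (X ω * Z ω)} + P {ω | Z ω < δ} :=
        measure_union_le _ _
    _ ≤ ε / 2 + ε / 2 := add_le_add (le_trans hmarkov hM1) hn₀
    _ = ε := ENNReal.add_halves ε

lemma forward_dir {Ω : Type*} [MeasurableSpace Ω] (P : Measure Ω) [IsProbabilityMeasure P]
    (𝒳 : Set (Ω → ℝ)) (h𝒳meas : ∀ X ∈ 𝒳, Measurable X)
    (h𝒳nonneg : ∀ X ∈ 𝒳, ∀ ω, 0 ≤ X ω)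
    (h𝒳convex : ∀ X ∈ 𝒳, ∀ Y ∈ 𝒳, ∀ l : ℝ, l ∈ Icc (0 : ℝ) 1 →
      (fun ω => l * X ω + (1 - l) * Y ω) ∈ 𝒳)
    (hbdd : Tendsto (fun M : ℝ => ⨆ X ∈ 𝒳, P {ω | M ≤ |X ω|}) atTop (𝓝 0)) :
    ∃ Z : Ω → ℝ, Measurable Z ∧ P {ω | 0 < Z ω} = 1 ∧
      (⨆ X ∈ 𝒳, ∫⁻ ω, ENNReal.ofReal (X ω * Z ω) ∂P) < ⊤ := by
  rcases eq_empty_or_nonempty 𝒳 with hempty | hne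
  · refine ⟨fun _ => 1, measurable_const, ?_, ?_⟩
    · have h : {ω : Ω | (0:ℝ) < 1} = univ := by ext ω; simp
      rw [h, measure_univ]
    · simp [hempty]
  -- tails
  have tails : ∀ η : ℝ≥0∞, 0 < η → ∃ K : ℝ, 0 ≤ K ∧ ∀ X ∈ 𝒳, P {ω | K ≤ X ω} ≤ η := by
    intro η hη
    obtain ⟨M, hM⟩ := (ENNReal.tendsto_nhds_zero.mp hbdd η hη).exists
    refine ⟨max M 0, le_max_right _ _, fun X hX => ?_⟩
    refine le_trans (measure_mono ?_) (le_trans (le_iSup₂_of_le X hX le_rfl) hM)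
    intro ω hω
    simp only [mem_setOf_eq] at *
    exact le_trans (le_max_left _ _) (le_trans hω (le_abs_self _))
  -- integrability of uu ∘ V
  have int_uu : ∀ V : Ω → ℝ, Measurable V → (∀ᵐ ω ∂P, 0 ≤ V ω) →
      Integrable (fun ω => uu (V ω)) P := by
    intro V hVm hV0
    refine (integrable_const (1:ℝ)).mono'
      ((uu_continuous.measurable.comp hVm).aestronglyMeasurable) ?_
    filter_upwards [hV0] with ω h
    rw [Real.norm_eq_abs, abs_le]
    exact ⟨by linarith [uu_nonneg h], uu_le_one _⟩
  -- the value function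
  set S : Set ℝ := (fun X : Ω → ℝ => ∫ ω, uu (X ω) ∂P) '' 𝒳 with hS
  have hSne : S.Nonempty := hne.image _
  have hSbdd : BddAbove S := by
    refine ⟨1, fun y hy => ?_⟩
    obtain ⟨X, hX, rfl⟩ := hy
    calc ∫ ω, uu (X ω) ∂P ≤ ∫ _ω, (1:ℝ) ∂P :=
          integral_mono (int_uu X (h𝒳meas X hX) (ae_of_all _ (h𝒳nonneg X hX)))
            (integrable_const 1) (fun ω => uu_le_one _)
      _ = 1 := by simp
  set α := sSup S with hα
  have hmemle : ∀ X ∈ 𝒳, ∫ ω, uu (X ω) ∂P ≤ α := fun X hX => le_csSup hSbdd ⟨X, hX, rfl⟩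
  -- truncation levels
  have hK0 : ∀ n : ℕ, ∃ K : ℝ, 0 ≤ K ∧ ∀ X ∈ 𝒳, P {ω | K ≤ X ω} ≤ 2⁻¹ ^ (n + 2) :=
    fun n => tails _ (ENNReal.pow_pos (ENNReal.inv_pos.mpr (by norm_num)) _)
  choose K0 hK0nn hK0tail using hK0
  set K : ℕ → ℝ := fun n => Nat.rec (K0 0) (fun m ih => max (K0 (m + 1)) ih) n with hK
  have hKsucc : ∀ n, K (n + 1) = max (K0 (n + 1)) (K n) := fun n => rfl
  have hKmono : Monotone K := monotone_nat_of_le_succ fun n => by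
    rw [hKsucc]; exact le_max_right _ _
  have hKge : ∀ n, K0 n ≤ K n := fun n => by
    cases n with
    | zero => exact le_rfl
    | succ m => rw [hKsucc]; exact le_max_left _ _
  have hKnn : ∀ n, 0 ≤ K n := fun n => le_trans (hK0nn n) (hKge n)
  have hKtail : ∀ n, ∀ X ∈ 𝒳, P {ω | K n ≤ X ω} ≤ 2⁻¹ ^ (n + 2) := by
    intro n X hX
    refine le_trans (measure_mono fun ω hω => ?_) (hK0tail n X hX)
    exact le_trans (hKge n) hω
  -- gaps
  set δ : ℕ → ℝ := fun n => Real.exp (-K n) * ((2:ℝ)⁻¹ ^ n) ^ 2 / 16 with hδ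
  set γ : ℕ → ℝ := fun n => δ n * 2⁻¹ ^ (n + 1) with hγ
  have hδpos : ∀ n, 0 < δ n := fun n => by
    have := Real.exp_pos (-K n); positivity
  have hγpos : ∀ n, 0 < γ n := fun n => by
    have := hδpos n; positivity
  have hδanti : ∀ n, δ (n + 1) ≤ δ n := by
    intro n
    have h1 : Real.exp (-K (n+1)) ≤ Real.exp (-K n) :=
      Real.exp_le_exp.mpr (neg_le_neg (hKmono (Nat.le_succ n)))
    have h2 : ((2:ℝ)⁻¹ ^ (n+1)) ^ 2 ≤ ((2:ℝ)⁻¹ ^ n) ^ 2 := by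
      have h3 : (2:ℝ)⁻¹ ^ (n+1) ≤ 2⁻¹ ^ n :=
        pow_le_pow_of_le_one (by norm_num) (by norm_num) (Nat.le_succ n)
      have h4 : (0:ℝ) < 2⁻¹ ^ (n+1) := by positivity
      nlinarith
    have h5 := mul_le_mul h1 h2 (by positivity) (Real.exp_pos _).le
    simp only [hδ]
    linarith
  have hγanti : ∀ n, γ (n + 1) ≤ γ n := by
    intro n
    have h1 := hδanti n
    have h2 : (2:ℝ)⁻¹ ^ (n+2) ≤ 2⁻¹ ^ (n+1) :=
      pow_le_pow_of_le_one (by norm_num) (by norm_num) (by omega)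
    have h3 : (0:ℝ) < 2⁻¹ ^ (n+2) := by positivity
    have h4 := hδpos (n+1)
    simp only [hγ]
    nlinarith
  have hγle : ∀ n, γ n ≤ 2⁻¹ ^ n := by
    intro n
    have h1 : Real.exp (-K n) ≤ 1 := Real.exp_le_one_iff.mpr (neg_nonpos.mpr (hKnn n))
    have h2 : ((2:ℝ)⁻¹ ^ n) ^ 2 ≤ 1 := by
      have : (2:ℝ)⁻¹ ^ n ≤ 1 := pow_le_one₀ (by norm_num) (by norm_num)
      nlinarith [pow_pos (by norm_num : (0:ℝ) < 2⁻¹) n]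
    have h3 : (2:ℝ)⁻¹ ^ (n+1) ≤ 2⁻¹ ^ n :=
      pow_le_pow_of_le_one (by norm_num) (by norm_num) (Nat.le_succ n)
    have h4 : (0:ℝ) < 2⁻¹ ^ n := by positivity
    have h5 : (0:ℝ) < 2⁻¹ ^ (n+1) := by positivity
    have hδ1 : δ n ≤ 1 := by
      simp only [hδ]
      nlinarith [Real.exp_pos (-K n)]
    have h6 : δ n * 2⁻¹ ^ (n+1) ≤ 2⁻¹ ^ (n+1) := by
      nlinarith [hδpos n]
    simp only [hγ]
    linarith
  -- maximizing sequence
  have hYex : ∀ n : ℕ, ∃ Y, Y ∈ 𝒳 ∧ α - γ n < ∫ ω, uu (Y ω) ∂P := by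
    intro n
    obtain ⟨y, hy, hlt⟩ := exists_lt_of_lt_csSup hSne
      (by linarith [hγpos n] : α - γ n < α)
    obtain ⟨Y, hYmem, rfl⟩ := hy
    exact ⟨Y, hYmem, hlt⟩
  choose Y hYmem hYlt using hYex
  have hYmeas : ∀ n, Measurable (Y n) := fun n => h𝒳meas _ (hYmem n)
  have hYnn : ∀ n, ∀ ω, 0 ≤ Y n ω := fun n => h𝒳nonneg _ (hYmem n)
  have hYint : ∀ n, Integrable (fun ω => uu (Y n ω)) P :=
    fun n => int_uu _ (hYmeas n) (ae_of_all _ (hYnn n))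
  -- pair estimate
  have hpair : ∀ n : ℕ, P {ω | (2:ℝ)⁻¹ ^ n ≤ |Y n ω - Y (n + 1) ω|} ≤
      ENNReal.ofReal ((2:ℝ)⁻¹ ^ (n + 1)) + 2⁻¹ ^ (n + 1) + 2⁻¹ ^ (n + 1) := by
    intro n
    set Ymid : Ω → ℝ := fun ω => 2⁻¹ * Y n ω + (1 - 2⁻¹) * Y (n + 1) ω with hYmiddef
    have hmid𝒳 : Ymid ∈ 𝒳 :=
      h𝒳convex _ (hYmem n) _ (hYmem (n+1)) 2⁻¹ ⟨by norm_num, by norm_num⟩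
    set A : Set Ω :=
      {ω | 2⁻¹ ^ n ≤ |Y n ω - Y (n+1) ω| ∧ Y n ω ≤ K n ∧ Y (n+1) ω ≤ K n} with hA
    have hAmeas : MeasurableSet A := by
      apply MeasurableSet.inter
      · exact measurableSet_le measurable_const ((hYmeas n).sub (hYmeas (n+1))).abs
      · exact MeasurableSet.inter (measurableSet_le (hYmeas n) measurable_const)
          (measurableSet_le (hYmeas (n+1)) measurable_const)
    set g : Ω → ℝ := fun ω => uu (Ymid ω) - (uu (Y n ω) + uu (Y (n+1) ω)) / 2 with hgdef
    have hpoint : ∀ ω ∈ A, δ n ≤ g ω := by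
      intro ω hω
      obtain ⟨h1, h2, h3⟩ := hω
      have hmid := uu_strong_midpoint (a := Y n ω) (b := Y (n+1) ω) (K := K n) h2 h3
      have hsq : ((2:ℝ)⁻¹ ^ n) ^ 2 ≤ (Y n ω - Y (n+1) ω) ^ 2 := by
        rw [← sq_abs (Y n ω - Y (n+1) ω)]
        exact pow_le_pow_left₀ (by positivity : (0:ℝ) ≤ 2⁻¹ ^ n) h1 2
      have he := Real.exp_pos (-K n)
      simp only [hgdef, hδ, hYmiddef]
      nlinarith
    have hgnonneg : ∀ ω, 0 ≤ g ω := by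
      intro ω
      have h := uu_concave_comb (a := Y n ω) (b := Y (n+1) ω) (l := 2⁻¹)
        (by norm_num) (by norm_num)
      simp only [hgdef, hYmiddef]
      nlinarith
    have hint_mid : Integrable (fun ω => uu (Ymid ω)) P :=
      int_uu _ (h𝒳meas _ hmid𝒳) (ae_of_all _ (h𝒳nonneg _ hmid𝒳))
    have hsum : Integrable (fun ω => (uu (Y n ω) + uu (Y (n+1) ω)) / 2) P := by
      exact ((hYint n).add (hYint (n+1))).div_const 2
    have hint_g : Integrable g P := hint_mid.sub hsum
    have hIg : ∫ ω, g ω ∂P ≤ γ n := by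
      have h1 : ∫ ω, uu (Ymid ω) ∂P ≤ α := hmemle _ hmid𝒳
      have h2 := hYlt n
      have h3 := hYlt (n+1)
      have h4 := hγanti n
      have hgeq : ∫ ω, g ω ∂P = (∫ ω, uu (Ymid ω) ∂P) -
          ((∫ ω, uu (Y n ω) ∂P) + ∫ ω, uu (Y (n+1) ω) ∂P) / 2 := by
        simp only [hgdef]
        rw [integral_sub hint_mid hsum, integral_div,
          integral_add (hYint n) (hYint (n+1))]
      rw [hgeq]
      linarith
    have hAine : δ n * (P A).toReal ≤ ∫ ω, g ω ∂P := by
      have h1 : ∫ _ω in A, δ n ∂P ≤ ∫ ω in A, g ω ∂P :=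
        setIntegral_mono_on (integrableOn_const (measure_ne_top P A))
          hint_g.integrableOn hAmeas hpoint
      have h2 : ∫ ω in A, g ω ∂P ≤ ∫ ω, g ω ∂P :=
        setIntegral_le_integral hint_g (ae_of_all _ hgnonneg)
      rw [setIntegral_const, smul_eq_mul, mul_comm, measureReal_def] at h1
      linarith
    have hPA : P A ≤ ENNReal.ofReal ((2:ℝ)⁻¹ ^ (n+1)) := by
      have ht : (P A).toReal ≤ 2⁻¹ ^ (n+1) := by
        have h1 := le_trans hAine hIg
        have h2 := hδpos n
        have h3 : δ n * (P A).toReal ≤ δ n * 2⁻¹ ^ (n+1) := by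
          simp only [hγ] at h1; linarith
        exact le_of_mul_le_mul_left h3 h2
      calc P A = ENNReal.ofReal (P A).toReal :=
            (ENNReal.ofReal_toReal (measure_ne_top P A)).symm
        _ ≤ _ := ENNReal.ofReal_le_ofReal ht
    have hsub : {ω | (2:ℝ)⁻¹ ^ n ≤ |Y n ω - Y (n + 1) ω|} ⊆
        A ∪ {ω | K n ≤ Y n ω} ∪ {ω | K n ≤ Y (n+1) ω} := by
      intro ω hω
      by_cases h2 : Y n ω ≤ K n
      · by_cases h3 : Y (n+1) ω ≤ K n
        · exact Or.inl (Or.inl ⟨hω, h2, h3⟩)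
        · exact Or.inr (not_le.mp h3).le
      · exact Or.inl (Or.inr (not_le.mp h2).le)
    calc P {ω | (2:ℝ)⁻¹ ^ n ≤ |Y n ω - Y (n + 1) ω|}
        ≤ P (A ∪ {ω | K n ≤ Y n ω} ∪ {ω | K n ≤ Y (n+1) ω}) := measure_mono hsub
      _ ≤ P (A ∪ {ω | K n ≤ Y n ω}) + P {ω | K n ≤ Y (n+1) ω} := measure_union_le _ _
      _ ≤ P A + P {ω | K n ≤ Y n ω} + P {ω | K n ≤ Y (n+1) ω} :=
          add_le_add_left (measure_union_le _ _) _
      _ ≤ ENNReal.ofReal ((2:ℝ)⁻¹ ^ (n + 1)) + 2⁻¹ ^ (n + 2) + 2⁻¹ ^ (n + 2) :=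
          add_le_add (add_le_add hPA (hKtail n _ (hYmem n))) (hKtail n _ (hYmem (n+1)))
      _ ≤ _ := by
          have hp : (2:ℝ≥0∞)⁻¹ ^ (n + 2) ≤ 2⁻¹ ^ (n + 1) :=
            pow_le_pow_of_le_one (by positivity) (ENNReal.inv_le_one.mpr (by norm_num : (1:ℝ≥0∞) ≤ 2)) (by omega)
          exact add_le_add (add_le_add le_rfl hp) hp
  -- Borel-Cantelli
  set s : ℕ → Set Ω := fun n => {ω | (2:ℝ)⁻¹ ^ n ≤ |Y n ω - Y (n + 1) ω|} with hsdef
  have hofReal : ∀ m : ℕ, ENNReal.ofReal ((2:ℝ)⁻¹ ^ m) = (2:ℝ≥0∞)⁻¹ ^ m := by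
    intro m
    rw [ENNReal.ofReal_pow (by norm_num)]
    congr 1
    rw [ENNReal.ofReal_inv_of_pos (by norm_num)]
    norm_num
  have hsum : (∑' n, P (s n)) ≠ ⊤ := by
    have hb : ∀ n : ℕ, P (s n) ≤ 3 * 2⁻¹ ^ (n + 1) := by
      intro n
      refine le_trans (hpair n) ?_
      rw [hofReal]
      have h3 : (3:ℝ≥0∞) = 1 + 1 + 1 := by norm_num
      rw [h3, add_mul, add_mul, one_mul]
    refine ne_top_of_le_ne_top ?_ (ENNReal.tsum_le_tsum hb)
    rw [ENNReal.tsum_mul_left]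
    refine ENNReal.mul_ne_top (by norm_num) ?_
    have : (∑' n : ℕ, (2:ℝ≥0∞)⁻¹ ^ (n + 1)) ≤ ∑' n : ℕ, (2:ℝ≥0∞)⁻¹ ^ n := by
      refine ENNReal.tsum_le_tsum fun n => ?_
      exact pow_le_pow_of_le_one (by positivity) (ENNReal.inv_le_one.mpr (by norm_num : (1:ℝ≥0∞) ≤ 2)) (Nat.le_succ n)
    refine ne_top_of_le_ne_top ?_ this
    rw [ENNReal.tsum_geometric, ENNReal.inv_ne_top]
    have h12 : (2:ℝ≥0∞)⁻¹ < 1 := ENNReal.inv_lt_one.mpr (by norm_num : (1:ℝ≥0∞) < 2)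
    simp only [ne_eq, tsub_eq_zero_iff_le]
    exact fun h => absurd (lt_of_lt_of_le h12 h) (lt_irrefl _)
  -- a.e. convergence of the maximizing sequence
  have haeC : ∀ᵐ ω ∂P, ∃ l : ℝ, Tendsto (fun k => Y k ω) atTop (𝓝 l) := by
    filter_upwards [ae_eventually_notMem hsum] with ω hω
    obtain ⟨N, hN⟩ := eventually_atTop.mp hω
    have hcau : CauchySeq fun k : ℕ => Y (N + k) ω := by
      refine cauchySeq_of_le_geometric 2⁻¹ ((2:ℝ)⁻¹ ^ N) (by norm_num) fun k => ?_
      have h1 : ω ∉ s (N + k) := hN (N + k) (Nat.le_add_right N k)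
      have h2 : |Y (N+k) ω - Y (N+k+1) ω| < 2⁻¹ ^ (N+k) := by
        simpa [hsdef, not_le] using h1
      rw [Real.dist_eq]
      calc |Y (N+k) ω - Y (N+k+1) ω| ≤ 2⁻¹ ^ (N+k) := h2.le
        _ = 2⁻¹ ^ N * 2⁻¹ ^ k := pow_add _ _ _
    obtain ⟨l, hl⟩ := cauchySeq_tendsto_of_complete hcau
    have heq : (fun k : ℕ => Y (N + k) ω) = fun k : ℕ => Y (k + N) ω := by
      funext k; rw [Nat.add_comm]
    rw [heq] at hl
    exact ⟨l, (tendsto_add_atTop_iff_nat N).mp hl⟩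
  obtain ⟨W, hWmeas, hWtend⟩ :=
    measurable_limit_of_tendsto_metrizable_ae (fun n => (hYmeas n).aemeasurable) haeC
  have hW0 : ∀ᵐ ω ∂P, 0 ≤ W ω := by
    filter_upwards [hWtend] with ω h
    exact ge_of_tendsto' h fun n => hYnn n ω
  have huuWint : Tendsto (fun n => ∫ ω, uu (Y n ω) ∂P) atTop (𝓝 (∫ ω, uu (W ω) ∂P)) := by
    refine tendsto_integral_of_dominated_convergence (fun _ => (1:ℝ))
      (fun n => (uu_continuous.measurable.comp (hYmeas n)).aestronglyMeasurable)
      (integrable_const 1) (fun n => ae_of_all _ fun ω => ?_) ?_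
    · show ‖uu (Y n ω)‖ ≤ 1
      rw [Real.norm_eq_abs, abs_le]
      exact ⟨by linarith [uu_nonneg (hYnn n ω)], uu_le_one _⟩
    · filter_upwards [hWtend] with ω h
      exact (uu_continuous.tendsto _).comp h
  have hαlim : Tendsto (fun n => ∫ ω, uu (Y n ω) ∂P) atTop (𝓝 α) := by
    have hγ0 : Tendsto γ atTop (𝓝 0) := by
      refine squeeze_zero (fun n => (hγpos n).le) hγle ?_
      exact tendsto_pow_atTop_nhds_zero_of_lt_one (by norm_num) (by norm_num)
    have h1 : Tendsto (fun n => α - γ n) atTop (𝓝 α) := by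
      simpa using tendsto_const_nhds.sub hγ0
    exact tendsto_of_tendsto_of_tendsto_of_le_of_le h1 tendsto_const_nhds
      (fun n => (hYlt n).le) (fun n => hmemle _ (hYmem n))
  have hWα : ∫ ω, uu (W ω) ∂P = α := tendsto_nhds_unique huuWint hαlim
  have hintW : Integrable (fun ω => uu (W ω)) P := int_uu W hWmeas hW0
  -- final bound for each X
  have hbound : ∀ X ∈ 𝒳, ∫⁻ ω, ENNReal.ofReal (X ω * Real.exp (-W ω)) ∂P ≤
      1 + ENNReal.ofReal (Real.exp (-1)) := by
    intro X hX
    set t : ℕ → ℝ := fun n => 1 / ((n:ℝ) + 1) with htdef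
    have htpos : ∀ n, 0 < t n := fun n => by positivity
    have htle1 : ∀ n, t n ≤ 1 := by
      intro n
      rw [htdef, div_le_one (by positivity)]
      simp
    have htanti : ∀ n, t (n+1) ≤ t n := by
      intro n
      simp only [htdef]
      refine one_div_le_one_div_of_le (by positivity) ?_
      push_cast; linarith
    set g : ℕ → Ω → ℝ := fun n ω => (uu (W ω + t n * (X ω - W ω)) - uu (W ω)) / t n
      with hgdef
    have hint_n : ∀ n, Integrable (fun ω => uu (W ω + t n * (X ω - W ω))) P := by
      intro n
      refine int_uu _ (hWmeas.add (((h𝒳meas X hX).sub hWmeas).const_mul (t n))) ?_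
      filter_upwards [hW0] with ω h
      have hXnn := h𝒳nonneg X hX ω
      nlinarith [htpos n, htle1 n]
    have hup : ∀ n, ∫ ω, uu (W ω + t n * (X ω - W ω)) ∂P ≤ α := by
      intro n
      have hl0 : 0 ≤ 1 - t n := by linarith [htle1 n]
      have hl1 : 1 - t n ≤ 1 := by linarith [htpos n]
      have hmem : ∀ m : ℕ, (fun ω => (1 - t n) * Y m ω + (1 - (1 - t n)) * X ω) ∈ 𝒳 :=
        fun m => h𝒳convex _ (hYmem m) _ hX (1 - t n) ⟨hl0, hl1⟩
      have hlim : Tendsto (fun m => ∫ ω, uu ((1 - t n) * Y m ω + (1 - (1 - t n)) * X ω) ∂P)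
          atTop (𝓝 (∫ ω, uu ((1 - t n) * W ω + (1 - (1 - t n)) * X ω) ∂P)) := by
        refine tendsto_integral_of_dominated_convergence (fun _ => (1:ℝ))
          (fun m => (uu_continuous.measurable.comp (((hYmeas m).const_mul _).add
            ((h𝒳meas X hX).const_mul _))).aestronglyMeasurable)
          (integrable_const 1) (fun m => ae_of_all _ fun ω => ?_) ?_
        · show ‖uu ((1 - t n) * Y m ω + (1 - (1 - t n)) * X ω)‖ ≤ 1
          rw [Real.norm_eq_abs, abs_le]
          exact ⟨by linarith [uu_nonneg (h𝒳nonneg _ (hmem m) ω)], uu_le_one _⟩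
        · filter_upwards [hWtend] with ω h
          have h2 : Tendsto (fun m => (1 - t n) * Y m ω + (1 - (1 - t n)) * X ω) atTop
              (𝓝 ((1 - t n) * W ω + (1 - (1 - t n)) * X ω)) :=
            (h.const_mul _).add_const _
          exact (uu_continuous.tendsto _).comp h2
      have hle : ∫ ω, uu ((1 - t n) * W ω + (1 - (1 - t n)) * X ω) ∂P ≤ α :=
        le_of_tendsto hlim (.of_forall fun m => hmemle _ (hmem m))
      refine le_trans (le_of_eq ?_) hle
      refine integral_congr_ae (ae_of_all _ fun ω => ?_)
      show uu (W ω + t n * (X ω - W ω)) = uu ((1 - t n) * W ω + (1 - (1 - t n)) * X ω)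
      rw [show W ω + t n * (X ω - W ω) = (1 - t n) * W ω + (1 - (1 - t n)) * X ω from by ring]
    have hIg : ∀ n, ∫ ω, g n ω ∂P ≤ 0 := by
      intro n
      simp only [hgdef]
      rw [integral_div, integral_sub (hint_n n) hintW, hWα]
      exact div_nonpos_of_nonpos_of_nonneg (by linarith [hup n]) (htpos n).le
    have hg0 : ∀ n ω, -1 ≤ g n ω := by
      intro n ω
      have hs := uu_slope_mono (w := W ω) (d := X ω - W ω) (htpos n) (htle1 n)
      rw [one_mul, div_one, add_sub_cancel] at hs
      have h1 := uu_nonneg (h𝒳nonneg X hX ω)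
      have h2 := uu_le_one (W ω)
      simp only [hgdef]
      refine le_trans ?_ hs
      linarith
    have hgmono : ∀ ω, Monotone fun n => g n ω := fun ω =>
      monotone_nat_of_le_succ fun n => uu_slope_mono (htpos (n+1)) (htanti n)
    have hgtend : ∀ ω, Tendsto (fun n => g n ω) atTop
        (𝓝 (Real.exp (-W ω) * (X ω - W ω))) := fun ω =>
      uu_tendsto_slope (W ω) (X ω - W ω)
    have hgmeas : ∀ n, Measurable (g n) := by
      intro n
      exact ((uu_continuous.measurable.comp
        (hWmeas.add (((h𝒳meas X hX).sub hWmeas).const_mul (t n)))).sub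
        (uu_continuous.measurable.comp hWmeas)).div_const _
    have hlint : ∀ n, ∫⁻ ω, ENNReal.ofReal (g n ω + 1) ∂P ≤ 1 := by
      intro n
      have hgint : Integrable (g n) P := by
        exact ((hint_n n).sub hintW).div_const (t n)
      have h1 : Integrable (fun ω => g n ω + 1) P := hgint.add (integrable_const 1)
      rw [← ofReal_integral_eq_lintegral_ofReal h1
        (ae_of_all _ fun ω => by
          simpa using (by linarith [hg0 n ω] : (0:ℝ) ≤ g n ω + 1))]
      rw [integral_add hgint (integrable_const 1)]
      simp only [integral_const, measureReal_def, measure_univ, ENNReal.toReal_one, smul_eq_mul, one_mul]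
      exact ENNReal.ofReal_le_one.mpr (by linarith [hIg n])
    have hkey : ∫⁻ ω, ENNReal.ofReal (Real.exp (-W ω) * (X ω - W ω) + 1) ∂P ≤ 1 := by
      have hiSup : ∀ ω, ENNReal.ofReal (Real.exp (-W ω) * (X ω - W ω) + 1) =
          ⨆ n, ENNReal.ofReal (g n ω + 1) := by
        intro ω
        have h1 : Tendsto (fun n => ENNReal.ofReal (g n ω + 1)) atTop
            (𝓝 (ENNReal.ofReal (Real.exp (-W ω) * (X ω - W ω) + 1))) :=
          (ENNReal.continuous_ofReal.tendsto _).comp ((hgtend ω).add_const 1)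
        have h2 : Monotone fun n => ENNReal.ofReal (g n ω + 1) := fun a b hab =>
          ENNReal.ofReal_le_ofReal (by linarith [hgmono ω hab])
        exact tendsto_nhds_unique h1 (tendsto_atTop_iSup h2)
      calc ∫⁻ ω, ENNReal.ofReal (Real.exp (-W ω) * (X ω - W ω) + 1) ∂P
          = ∫⁻ ω, ⨆ n, ENNReal.ofReal (g n ω + 1) ∂P := lintegral_congr fun ω => hiSup ω
        _ = ⨆ n, ∫⁻ ω, ENNReal.ofReal (g n ω + 1) ∂P := by
            refine lintegral_iSup (fun n => ENNReal.measurable_ofReal.comp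
              ((hgmeas n).add_const 1)) ?_
            intro a b hab ω
            exact ENNReal.ofReal_le_ofReal (by linarith [hgmono ω hab])
        _ ≤ 1 := iSup_le hlint
    have hfinal : ∀ ω, ENNReal.ofReal (X ω * Real.exp (-W ω)) ≤
        ENNReal.ofReal (Real.exp (-W ω) * (X ω - W ω) + 1) + ENNReal.ofReal (Real.exp (-1)) := by
      intro ω
      refine le_trans (ENNReal.ofReal_le_ofReal ?_) ENNReal.ofReal_add_le
      have hid : X ω * Real.exp (-W ω) =
          Real.exp (-W ω) * (X ω - W ω) + W ω * Real.exp (-W ω) := by ring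
      have h2 := mul_exp_neg_le (W ω)
      linarith
    calc ∫⁻ ω, ENNReal.ofReal (X ω * Real.exp (-W ω)) ∂P
        ≤ ∫⁻ ω, (ENNReal.ofReal (Real.exp (-W ω) * (X ω - W ω) + 1) +
            ENNReal.ofReal (Real.exp (-1))) ∂P := lintegral_mono hfinal
      _ = (∫⁻ ω, ENNReal.ofReal (Real.exp (-W ω) * (X ω - W ω) + 1) ∂P) +
            ENNReal.ofReal (Real.exp (-1)) := by
          rw [lintegral_add_right _ measurable_const, lintegral_const, measure_univ, mul_one]
      _ ≤ 1 + ENNReal.ofReal (Real.exp (-1)) := add_le_add_left hkey _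
  refine ⟨fun ω => Real.exp (-W ω), Real.measurable_exp.comp hWmeas.neg, ?_, ?_⟩
  · have h : {ω | 0 < Real.exp (-W ω)} = univ := eq_univ_of_forall fun ω => Real.exp_pos _
    rw [h, measure_univ]
  · refine lt_of_le_of_lt (iSup_le fun X => iSup_le fun hX => hbound X hX) ?_
    exact ENNReal.add_lt_top.mpr ⟨ENNReal.one_lt_top, ENNReal.ofReal_lt_top⟩

/-- A convex family `𝒳` of nonnegative random variables is bounded in
probability if and only if there exists a random variable `Z` with `P(Z > 0) = 1` such that
`sup_{X ∈ 𝒳} E[X Z] < ∞`. -/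
theorem statement1 {Ω : Type*} [MeasurableSpace Ω] (P : Measure Ω) [IsProbabilityMeasure P]
    (𝒳 : Set (Ω → ℝ)) (h𝒳meas : ∀ X ∈ 𝒳, Measurable X)
    (h𝒳nonneg : ∀ X ∈ 𝒳, ∀ ω, 0 ≤ X ω)
    (h𝒳convex : ∀ X ∈ 𝒳, ∀ Y ∈ 𝒳, ∀ l : ℝ, l ∈ Icc (0 : ℝ) 1 →
      (fun ω => l * X ω + (1 - l) * Y ω) ∈ 𝒳) :
    Tendsto (fun M : ℝ => ⨆ X ∈ 𝒳, P {ω | M ≤ |X ω|}) atTop (𝓝 0) ↔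
      ∃ Z : Ω → ℝ, Measurable Z ∧ P {ω | 0 < Z ω} = 1 ∧
        (⨆ X ∈ 𝒳, ∫⁻ ω, ENNReal.ofReal (X ω * Z ω) ∂P) < ⊤ := by
  constructor
  · exact fun h => forward_dir P 𝒳 h𝒳meas h𝒳nonneg h𝒳convex h
  · rintro ⟨Z, hZm, hZpos, hC⟩
    exact reverse_dir P 𝒳 h𝒳meas h𝒳nonneg Z hZm hZpos hC
end

section
/- Let (Ω, F, P) be a probability space and, for every n ∈ ℕ, let (Aⁿ_k : 1 ≤ k ≤ 2ⁿ) be a measurable partition of Ω with P(Aⁿ_k) = 2^{−n} for all k. Define Xⁿ_k = 2^{2n} 1_{Aⁿ_k}. Then: (i) the family (Xⁿ_k : n ∈ ℕ, 1 ≤ k ≤ 2ⁿ) is bounded in probability; (ii) if Z is a nonnegative random variable and C > 0 is a constant such that E[Z Xⁿ_k] ≤ C for all n and k, then Z = 0 almost surely. In particular, the convexity assumption cannot be dropped from the statement that a bounded-in-probability family of nonnegative random variables admits a strictly positive Z with sup E[XZ] < ∞. -/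
open MeasureTheory Filter Set
open scoped ENNReal NNReal Topology

/-- For measurable partitions `(Aⁿ_k)_{1 ≤ k ≤ 2ⁿ}` of `Ω` with
`P(Aⁿ_k) = 2⁻ⁿ` and `Xⁿ_k = 2^{2n} 1_{Aⁿ_k}`: (i) the family `(Xⁿ_k)` is bounded in
probability; (ii) any nonnegative random variable `Z` with `E[Z Xⁿ_k] ≤ C` for all `n, k`
(for some constant `C > 0`) vanishes almost surely. -/
theorem statement2 {Ω : Type*} [MeasurableSpace Ω] (P : Measure Ω) [IsProbabilityMeasure P]
    (A : (n : ℕ) → Fin (2 ^ n) → Set Ω)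
    (hmeas : ∀ n k, MeasurableSet (A n k))
    (hdisj : ∀ n, Pairwise fun k l => Disjoint (A n k) (A n l))
    (hcover : ∀ n, ⋃ k, A n k = univ)
    (hprob : ∀ n k, P (A n k) = 1 / 2 ^ n)
    (X : (n : ℕ) → Fin (2 ^ n) → Ω → ℝ)
    (hX : ∀ n k ω, X n k ω = 2 ^ (2 * n) * (A n k).indicator 1 ω) :
    Tendsto (fun M : ℝ => ⨆ n, ⨆ k, P {ω | M ≤ |X n k ω|}) atTop (𝓝 0) ∧
    ∀ Z : Ω → ℝ, Measurable Z → (∀ ω, 0 ≤ Z ω) → ∀ C : ℝ, 0 < C →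
      (∀ n k, ∫⁻ ω, ENNReal.ofReal (Z ω * X n k ω) ∂P ≤ ENNReal.ofReal C) →
      ∀ᵐ ω ∂P, Z ω = 0 := by
  constructor
  · rw [ENNReal.tendsto_nhds_zero]
    intro ε hε
    obtain ⟨N, hN⟩ := ENNReal.exists_inv_two_pow_lt hε.ne'
    filter_upwards [eventually_gt_atTop ((2 : ℝ) ^ (2 * N))] with M hM
    have hM0 : (0 : ℝ) < M := lt_of_le_of_lt (by positivity) hM
    refine iSup_le fun n => iSup_le fun k => ?_
    by_cases hn : N ≤ n
    · calc P {ω | M ≤ |X n k ω|} ≤ P (A n k) := by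
            apply measure_mono
            intro ω hω
            simp only [mem_setOf_eq, hX] at hω
            by_contra hA
            rw [indicator_of_notMem hA, mul_zero, abs_zero] at hω
            exact absurd hω (not_le.2 hM0)
        _ = 1 / 2 ^ n := hprob n k
        _ = 2⁻¹ ^ n := by
            rw [one_div, ← ENNReal.inv_pow]
        _ ≤ 2⁻¹ ^ N := pow_le_pow_of_le_one zero_le
            (ENNReal.inv_le_one.2 one_le_two) hn
        _ ≤ ε := hN.le
    · have hempty : {ω | M ≤ |X n k ω|} = ∅ := by
        ext ω
        simp only [mem_setOf_eq, mem_empty_iff_false, iff_false, not_le, hX]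
        by_cases hA : ω ∈ A n k
        · rw [indicator_of_mem hA, Pi.one_apply, mul_one, abs_of_pos (by positivity)]
          calc (2 : ℝ) ^ (2 * n) < 2 ^ (2 * N) := by
                apply pow_lt_pow_right₀ one_lt_two
                omega
            _ < M := hM
        · rw [indicator_of_notMem hA, mul_zero, abs_zero]; exact hM0
      rw [hempty]
      simp
  · intro Z hZm hZ0 C hC hbound
    have key : ∀ δ : ℝ, 0 < δ → P {ω | δ ≤ Z ω} = 0 := by
      intro δ hδ
      by_contra hS
      set S := {ω | δ ≤ Z ω} with hSdef
      have hSm : MeasurableSet S := measurableSet_le measurable_const hZm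
      have hpos : 0 < P S := pos_iff_ne_zero.2 hS
      have hfin : P S ≠ ∞ := measure_ne_top P S
      -- pigeonhole: there is k with P S / 2^n ≤ P (S ∩ A n k)
      have hsum : ∀ n, ∑ k, P (S ∩ A n k) = P S := by
        intro n
        rw [← tsum_fintype (L := SummationFilter.unconditional _), ← measure_iUnion (fun k l hkl => (hdisj n hkl).mono inter_subset_right
              inter_subset_right) (fun k => hSm.inter (hmeas n k)),
          ← inter_iUnion, hcover, inter_univ]
      have hex : ∀ n, ∃ k, P S / 2 ^ n ≤ P (S ∩ A n k) := by
        intro n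
        obtain ⟨k, -, hk⟩ := Finset.exists_max_image Finset.univ
          (fun k => P (S ∩ A n k)) ⟨⟨0, by positivity⟩, Finset.mem_univ _⟩
        refine ⟨k, ENNReal.div_le_of_le_mul ?_⟩
        calc P S = ∑ l, P (S ∩ A n l) := (hsum n).symm
          _ ≤ ∑ _l : Fin (2 ^ n), P (S ∩ A n k) :=
              Finset.sum_le_sum fun l _ => hk l (Finset.mem_univ l)
          _ = P (S ∩ A n k) * 2 ^ n := by
              rw [Finset.sum_const, Finset.card_univ, Fintype.card_fin, nsmul_eq_mul,
                mul_comm]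
              norm_cast
      -- the main estimate
      have hineq : ∀ n : ℕ, ENNReal.ofReal δ * P S * 2 ^ n ≤ ENNReal.ofReal C := by
        intro n
        obtain ⟨k, hk⟩ := hex n
        have hlow : ENNReal.ofReal (δ * 2 ^ (2 * n)) * P (S ∩ A n k) ≤
            ∫⁻ ω, ENNReal.ofReal (Z ω * X n k ω) ∂P := by
          rw [← lintegral_indicator_const (hSm.inter (hmeas n k))]
          apply lintegral_mono
          intro ω
          by_cases hω : ω ∈ S ∩ A n k
          · rw [indicator_of_mem hω]
            apply ENNReal.ofReal_le_ofReal
            rw [hX, indicator_of_mem hω.2, Pi.one_apply, mul_one]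
            exact mul_le_mul_of_nonneg_right hω.1 (by positivity)
          · rw [indicator_of_notMem hω]
            exact zero_le
        have h2n : (2 : ℝ≥0∞) ^ (2 * n) * (P S / 2 ^ n) = P S * 2 ^ n := by
          rw [ENNReal.div_eq_inv_mul, two_mul, pow_add,
            show (2 : ℝ≥0∞) ^ n * 2 ^ n * ((2 ^ n)⁻¹ * P S)
              = (2 ^ n * (2 ^ n)⁻¹) * (P S * 2 ^ n) by ring,
            ENNReal.mul_inv_cancel (pow_ne_zero n two_ne_zero)
              (ENNReal.pow_ne_top ENNReal.ofNat_ne_top), one_mul]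
        calc ENNReal.ofReal δ * P S * 2 ^ n
            = ENNReal.ofReal δ * (2 ^ (2 * n) * (P S / 2 ^ n)) := by
              rw [h2n, mul_assoc]
          _ ≤ ENNReal.ofReal δ * (2 ^ (2 * n) * P (S ∩ A n k)) := by
              gcongr
          _ = ENNReal.ofReal (δ * 2 ^ (2 * n)) * P (S ∩ A n k) := by
              rw [ENNReal.ofReal_mul hδ.le, mul_assoc]
              congr 2
              rw [ENNReal.ofReal_pow (by norm_num : (0:ℝ) ≤ 2)]
              norm_num
          _ ≤ ∫⁻ ω, ENNReal.ofReal (Z ω * X n k ω) ∂P := hlow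
          _ ≤ ENNReal.ofReal C := hbound n k
      -- contradiction
      set a : ℝ≥0∞ := ENNReal.ofReal δ * P S with ha
      have ha0 : a ≠ 0 := by
        simp [ha, ENNReal.ofReal_eq_zero, hS, not_le.2 hδ]
      have haT : a ≠ ∞ := ENNReal.mul_ne_top ENNReal.ofReal_ne_top hfin
      have h2 : ∀ n : ℕ, (2 : ℝ≥0∞) ^ n ≤ ENNReal.ofReal C / a := by
        intro n
        rw [ENNReal.le_div_iff_mul_le (Or.inl ha0) (Or.inl haT), mul_comm]
        exact hineq n
      have hfinD : ENNReal.ofReal C / a ≠ ∞ :=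
        (ENNReal.div_lt_top ENNReal.ofReal_ne_top ha0).ne
      obtain ⟨n, hn⟩ := pow_unbounded_of_one_lt (ENNReal.ofReal C / a).toReal
        (one_lt_two (α := ℝ))
      have := ENNReal.toReal_mono hfinD (h2 n)
      rw [ENNReal.toReal_pow, ENNReal.toReal_ofNat] at this
      exact absurd this (not_le.2 hn)
    rw [ae_iff]
    have hU : P (⋃ m : ℕ, {ω | (1 : ℝ) / (m + 1) ≤ Z ω}) = 0 :=
      measure_iUnion_null fun m => key _ (by positivity)
    refine measure_mono_null (fun ω hω => ?_) hU
    simp only [mem_setOf_eq] at hω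
    have hZpos : 0 < Z ω := lt_of_le_of_ne (hZ0 ω) (Ne.symm hω)
    obtain ⟨m, hm⟩ := exists_nat_one_div_lt hZpos
    exact mem_iUnion.2 ⟨m, hm.le⟩
end

section
/- Let (Ω, F, P) be a probability space and let M₁ be a random variable whose law under P is the standard normal distribution ν on ℝ. For every n ∈ ℕ, let (Aⁿ_k : 1 ≤ k ≤ 2ⁿ) be a Borel partition of ℝ with ν(Aⁿ_k) = 2^{−n} for all k, and define the random variables Xⁿ_k = 2ⁿ 1_{Aⁿ_k}(M₁). Then for every probability measure Q on (Ω, F) with Q ≪ P and every measurable function g : [0,∞) → [0,∞) with lim_{x→∞} g(x)/x = ∞, one has sup_{n,k} E_Q[g(Xⁿ_k)] = ∞. Consequently the family (Xⁿ_k) is not uniformly integrable under any absolutely continuous probability measure Q ≪ P. -/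
open MeasureTheory Filter Set
open scoped ENNReal NNReal Topology

/-- Let `M₁` have standard normal law `ν` under `P`, let `(Aⁿ_k)` be Borel
partitions of `ℝ` with `ν(Aⁿ_k) = 2⁻ⁿ`, and `Xⁿ_k = 2ⁿ 1_{Aⁿ_k}(M₁)`. Then for every
probability measure `Q ≪ P` and every measurable `g : [0,∞) → [0,∞)` with `g(x)/x → ∞`,
`sup_{n,k} E_Q[g(Xⁿ_k)] = ∞`; consequently the family `(Xⁿ_k)` is not uniformly integrable
under any such `Q`. -/
theorem statement3 {Ω : Type*} [MeasurableSpace Ω] (P : Measure Ω) [IsProbabilityMeasure P]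
    (M₁ : Ω → ℝ) (hM₁ : Measurable M₁)
    (hlaw : P.map M₁ = ProbabilityTheory.gaussianReal 0 1)
    (A : (n : ℕ) → Fin (2 ^ n) → Set ℝ)
    (hmeas : ∀ n k, MeasurableSet (A n k))
    (hdisj : ∀ n, Pairwise fun k l => Disjoint (A n k) (A n l))
    (hcover : ∀ n, ⋃ k, A n k = univ)
    (hν : ∀ n k, ProbabilityTheory.gaussianReal 0 1 (A n k) = 1 / 2 ^ n)
    (X : (n : ℕ) → Fin (2 ^ n) → Ω → ℝ)
    (hX : ∀ n k ω, X n k ω = 2 ^ n * (A n k).indicator 1 (M₁ ω)) :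
    ∀ Q : Measure Ω, IsProbabilityMeasure Q → Q ≪ P →
      (∀ g : ℝ → ℝ, Measurable g → (∀ x ∈ Ici (0 : ℝ), 0 ≤ g x) →
        Tendsto (fun x => g x / x) atTop atTop →
        (⨆ n, ⨆ k, ∫⁻ ω, ENNReal.ofReal (g (X n k ω)) ∂Q) = ⊤) ∧
      ¬ Tendsto
          (fun M : ℝ => ⨆ n, ⨆ k, ∫⁻ ω in {ω | M ≤ |X n k ω|}, ENNReal.ofReal |X n k ω| ∂Q)
          atTop (𝓝 0) := by

  intro Q hQ _hQP
  have hBmeas : ∀ n (k : Fin (2 ^ n)), MeasurableSet (M₁ ⁻¹' A n k) :=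
    fun n k => hM₁ (hmeas n k)
  have hXB : ∀ n (k : Fin (2 ^ n)) ω, M₁ ω ∈ A n k → X n k ω = 2 ^ n := by
    intro n k ω hω
    rw [hX, Set.indicator_of_mem hω, Pi.one_apply, mul_one]
  have h2 : ∀ n : ℕ, ENNReal.ofReal ((2 : ℝ) ^ n) = 2 ^ n := by
    intro n
    rw [ENNReal.ofReal_pow (by norm_num)]
    norm_num
  have hkey : ∀ n, ∃ k : Fin (2 ^ n), (1 : ℝ≥0∞) / 2 ^ n ≤ Q (M₁ ⁻¹' A n k) := by
    intro n
    have hsum : ∑ k, Q (M₁ ⁻¹' A n k) = 1 := by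
      rw [← tsum_fintype (L := .unconditional _), ← measure_iUnion (fun k l hkl => (hdisj n hkl).preimage M₁) (hBmeas n),
        ← Set.preimage_iUnion, hcover n, Set.preimage_univ, measure_univ]
    obtain ⟨k₀, -, hk₀⟩ := Finset.exists_max_image Finset.univ
      (fun k : Fin (2 ^ n) => Q (M₁ ⁻¹' A n k)) ⟨⟨0, by positivity⟩, Finset.mem_univ _⟩
    refine ⟨k₀, ?_⟩
    rw [ENNReal.div_le_iff (pow_ne_zero _ two_ne_zero) (ENNReal.pow_ne_top ENNReal.ofNat_ne_top)]
    calc (1 : ℝ≥0∞) = ∑ k, Q (M₁ ⁻¹' A n k) := hsum.symm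
      _ ≤ ∑ _k : Fin (2 ^ n), Q (M₁ ⁻¹' A n k₀) :=
          Finset.sum_le_sum fun k _ => hk₀ k (Finset.mem_univ k)
      _ = Q (M₁ ⁻¹' A n k₀) * 2 ^ n := by
          simp [Finset.sum_const, Finset.card_univ, nsmul_eq_mul, mul_comm]
  constructor
  · intro g _hg _hg0 htend
    by_contra hne
    have hlt : (⨆ n, ⨆ k, ∫⁻ ω, ENNReal.ofReal (g (X n k ω)) ∂Q) < ⊤ :=
      lt_top_iff_ne_top.2 hne
    have hf : Tendsto (fun n : ℕ => ENNReal.ofReal (g ((2 : ℝ) ^ n) / 2 ^ n)) atTop (𝓝 ⊤) :=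
      ENNReal.tendsto_ofReal_atTop.comp
        (htend.comp (tendsto_pow_atTop_atTop_of_one_lt one_lt_two))
    have hub : ∀ n, ENNReal.ofReal (g ((2 : ℝ) ^ n) / 2 ^ n) ≤
        ⨆ n, ⨆ k, ∫⁻ ω, ENNReal.ofReal (g (X n k ω)) ∂Q := by
      intro n
      obtain ⟨k, hk⟩ := hkey n
      have heq : ∫⁻ ω in M₁ ⁻¹' A n k, ENNReal.ofReal (g (X n k ω)) ∂Q
          = ENNReal.ofReal (g ((2 : ℝ) ^ n)) * Q (M₁ ⁻¹' A n k) := by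
        rw [setLIntegral_congr_fun (hBmeas n k)
          (fun ω hω => by rw [hXB n k ω hω]), setLIntegral_const]
      have hb : ENNReal.ofReal (g ((2 : ℝ) ^ n)) * Q (M₁ ⁻¹' A n k)
          ≤ ∫⁻ ω, ENNReal.ofReal (g (X n k ω)) ∂Q := by
        rw [← heq]; exact setLIntegral_le_lintegral _ _
      have hdiv : ENNReal.ofReal (g ((2 : ℝ) ^ n) / 2 ^ n)
          = ENNReal.ofReal (g ((2 : ℝ) ^ n)) * ((1 : ℝ≥0∞) / 2 ^ n) := by
        rw [ENNReal.ofReal_div_of_pos (by positivity), h2 n, one_div,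
          ENNReal.div_eq_inv_mul, mul_comm]
      calc ENNReal.ofReal (g ((2 : ℝ) ^ n) / 2 ^ n)
          ≤ ENNReal.ofReal (g ((2 : ℝ) ^ n)) * Q (M₁ ⁻¹' A n k) := by
            rw [hdiv]; exact mul_le_mul_right hk _
        _ ≤ ∫⁻ ω, ENNReal.ofReal (g (X n k ω)) ∂Q := hb
        _ ≤ _ := le_iSup₂ (f := fun n k => ∫⁻ ω, ENNReal.ofReal (g (X n k ω)) ∂Q) n k
    obtain ⟨n, hn⟩ := (hf.eventually (lt_mem_nhds hlt)).exists
    exact absurd (hub n) (not_le.2 hn)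
  · intro hT
    obtain ⟨M, hM⟩ := (hT.eventually (gt_mem_nhds zero_lt_one)).exists
    obtain ⟨n, hn⟩ := ((tendsto_pow_atTop_atTop_of_one_lt (one_lt_two : (1:ℝ) < 2)).eventually
      (eventually_ge_atTop M)).exists
    obtain ⟨k, hk⟩ := hkey n
    have hsub : M₁ ⁻¹' A n k ⊆ {ω | M ≤ |X n k ω|} := by
      intro ω hω
      simp only [Set.mem_setOf_eq, hXB n k ω hω]
      rw [abs_of_nonneg (by positivity)]
      exact hn
    have hb : (1 : ℝ≥0∞) ≤ ∫⁻ ω in {ω | M ≤ |X n k ω|}, ENNReal.ofReal |X n k ω| ∂Q := by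
      calc (1 : ℝ≥0∞) = (2 : ℝ≥0∞) ^ n * (1 / 2 ^ n) := by
            rw [mul_one_div, ENNReal.div_self (pow_ne_zero _ two_ne_zero) (ENNReal.pow_ne_top ENNReal.ofNat_ne_top)]
        _ ≤ ENNReal.ofReal ((2 : ℝ) ^ n) * Q (M₁ ⁻¹' A n k) := by
            rw [h2 n]; exact mul_le_mul_right hk _
        _ = ∫⁻ ω in M₁ ⁻¹' A n k, ENNReal.ofReal |X n k ω| ∂Q := by
            rw [setLIntegral_congr_fun (hBmeas n k)
              (fun ω hω => by
                rw [hXB n k ω hω, abs_of_nonneg (by positivity : (0:ℝ) ≤ 2 ^ n)]),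
              setLIntegral_const]
        _ ≤ _ := lintegral_mono_set hsub
    have hle : (1 : ℝ≥0∞) ≤ ⨆ n, ⨆ k, ∫⁻ ω in {ω | M ≤ |X n k ω|},
        ENNReal.ofReal |X n k ω| ∂Q :=
      hb.trans (le_iSup₂ (f := fun n k => ∫⁻ ω in {ω | M ≤ |X n k ω|},
        ENNReal.ofReal |X n k ω| ∂Q) n k)
    exact absurd hle (not_le.2 hM)
end

section
/- Let (Ω, F, P) be a probability space with a two-step filtration (F₀, F₁), and let 𝒴 be a family of pairs Y = (Y₀, Y₁) of nonnegative random variables with Y_i being F_i-measurable, such that: (i) 𝒴 is L¹-bounded, i.e. sup_{Y ∈ 𝒴} max_{i=0,1} E[Y_i] < ∞; (ii) 𝒴 is fork-convex: for every Y ∈ 𝒴, Y₀ = 0 implies Y₁ = 0 almost surely, and for all Y¹, Y², Y³ ∈ 𝒴 and every F₀-measurable random variable λ with values in [0,1], the pair (Y¹₀, Y¹₀ (λ Y²₁/Y²₀ + (1−λ) Y³₁/Y³₀)) belongs to 𝒴 (with the convention 0/0 = 0); (iii) 𝒴 contains a pair of the form (1, Y*₁) with Y*₁ strictly positive almost surely.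 Then there exists a strictly positive F₀-measurable random variable Z such that for every Y ∈ 𝒴 the pair (Y₀ Z, Y₁) is a supermartingale, i.e. Y₀Z is integrable and E[1_A Y₁] ≤ E[1_A Y₀ Z] for every A ∈ F₀. Moreover Z can be chosen so that E[Y₀ Z] ≤ sup_{Y ∈ 𝒴} max_{i=0,1} E[Y_i] for every Y ∈ 𝒴. -/
open MeasureTheory Filter Set
open scoped ENNReal NNReal Topology

namespace Statement4Aux

variable {Ω : Type*} {m : MeasurableSpace Ω} {P : Measure Ω}

lemma integrable_of_lintegral_lt_top {f : Ω → ℝ} (hf : AEStronglyMeasurable f P)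
    (h0 : 0 ≤ᵐ[P] f) (hfin : ∫⁻ ω, ENNReal.ofReal (f ω) ∂P < ⊤) : Integrable f P :=
  ⟨hf, (hasFiniteIntegral_iff_ofReal h0).2 hfin⟩

lemma condexp_pos {F0 : MeasurableSpace Ω} (hm : F0 ≤ m) [IsFiniteMeasure P]
    [SigmaFinite (P.trim hm)] {f : Ω → ℝ} (hf : Integrable f P)
    (hpos : ∀ᵐ ω ∂P, 0 < f ω) : ∀ᵐ ω ∂P, 0 < (P[f|F0]) ω := by
  set g := P[f|F0] with hg
  have hg0 : 0 ≤ᵐ[P] g := condExp_nonneg (hpos.mono fun ω h => h.le)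
  set A := {ω | g ω ≤ 0} with hA
  have hAmeas : MeasurableSet[F0] A :=
    measurableSet_le stronglyMeasurable_condExp.measurable measurable_const
  have hAm : MeasurableSet[m] A := hm _ hAmeas
  have hintg : ∫ ω in A, g ω ∂P = ∫ ω in A, f ω ∂P := setIntegral_condExp hm hf hAmeas
  have hgz : g =ᵐ[P.restrict A] 0 := by
    filter_upwards [ae_restrict_mem hAm, ae_restrict_of_ae hg0] with ω h1 h2
    exact le_antisymm h1 h2
  have hintf0 : ∫ ω in A, f ω ∂P = 0 := by
    rw [← hintg, integral_congr_ae hgz]; simp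
  have hfz : f =ᵐ[P.restrict A] 0 := by
    have h1 : 0 ≤ᵐ[P.restrict A] f := ae_restrict_of_ae (hpos.mono fun ω h => h.le)
    have h2 : Integrable f (P.restrict A) := hf.restrict
    exact (integral_eq_zero_iff_of_nonneg_ae h1 h2).1 hintf0
  have hfalse : ∀ᵐ ω ∂P.restrict A, False := by
    filter_upwards [hfz, ae_restrict_of_ae hpos] with ω h1 h2
    exact absurd h1 (by simp only [Pi.zero_apply]; linarith)
  have hPA : P A = 0 := by
    have h := ae_iff.mp hfalse
    simpa [Measure.restrict_apply_univ] using h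
  rw [ae_iff]
  convert hPA using 2
  ext ω
  simp [hA, not_lt]

end Statement4Aux

open Statement4Aux

/-- (One-period supermartingale density.) For an `L¹`-bounded, fork-convex
family `𝒴` of pairs of nonnegative random variables adapted to `(F₀, F₁)` containing a pair
`(1, Y*₁)` with `Y*₁ > 0` a.s., there is a strictly positive `F₀`-measurable `Z` such that
`(Y₀ Z, Y₁)` is a supermartingale for every `Y ∈ 𝒴`, and `Z` can be chosen with
`E[Y₀ Z] ≤ sup_{Y ∈ 𝒴} max_{i=0,1} E[Y_i]`. -/
theorem statement4 {Ω : Type*} {m : MeasurableSpace Ω} (P : Measure Ω) [IsProbabilityMeasure P]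
    (F0 F1 : MeasurableSpace Ω) (h01 : F0 ≤ F1) (h1m : F1 ≤ m)
    (𝒴 : Set ((Ω → ℝ) × (Ω → ℝ)))
    (hadapted : ∀ Y ∈ 𝒴, Measurable[F0] Y.1 ∧ Measurable[F1] Y.2)
    (hnonneg : ∀ Y ∈ 𝒴, ∀ ω, 0 ≤ Y.1 ω ∧ 0 ≤ Y.2 ω)
    (hL1 : (⨆ Y ∈ 𝒴, max (∫⁻ ω, ENNReal.ofReal (Y.1 ω) ∂P)
        (∫⁻ ω, ENNReal.ofReal (Y.2 ω) ∂P)) < ⊤)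
    (hzero : ∀ Y ∈ 𝒴, ∀ᵐ ω ∂P, Y.1 ω = 0 → Y.2 ω = 0)
    (hfork : ∀ Y1 ∈ 𝒴, ∀ Y2 ∈ 𝒴, ∀ Y3 ∈ 𝒴, ∀ l : Ω → ℝ,
      Measurable[F0] l → (∀ ω, l ω ∈ Icc (0 : ℝ) 1) →
      (Y1.1, fun ω => Y1.1 ω * (l ω * (Y2.2 ω / Y2.1 ω) + (1 - l ω) * (Y3.2 ω / Y3.1 ω))) ∈ 𝒴)
    (hstar : ∃ Ys ∈ 𝒴, Ys.1 = (fun _ => (1 : ℝ)) ∧ ∀ᵐ ω ∂P, 0 < Ys.2 ω) :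
    ∃ Z : Ω → ℝ, Measurable[F0] Z ∧ (∀ᵐ ω ∂P, 0 < Z ω) ∧
      ∀ Y ∈ 𝒴,
        Integrable (fun ω => Y.1 ω * Z ω) P ∧
        (∀ A : Set Ω, MeasurableSet[F0] A →
          ∫ ω in A, Y.2 ω ∂P ≤ ∫ ω in A, Y.1 ω * Z ω ∂P) ∧
        ∫⁻ ω, ENNReal.ofReal (Y.1 ω * Z ω) ∂P ≤
          ⨆ Y' ∈ 𝒴, max (∫⁻ ω, ENNReal.ofReal (Y'.1 ω) ∂P)
            (∫⁻ ω, ENNReal.ofReal (Y'.2 ω) ∂P) := by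
    classical
  obtain ⟨Ys, hYsmem, hYs1, hYspos⟩ := hstar
  have hm0 : F0 ≤ m := h01.trans h1m
  haveI hsig : SigmaFinite (P.trim hm0) := inferInstance
  set S := ⨆ Y ∈ 𝒴, max (∫⁻ ω, ENNReal.ofReal (Y.1 ω) ∂P) (∫⁻ ω, ENNReal.ofReal (Y.2 ω) ∂P)
    with hSdef
  have hbound : ∀ Y ∈ 𝒴, (∫⁻ ω, ENNReal.ofReal (Y.1 ω) ∂P) ≤ S ∧
      (∫⁻ ω, ENNReal.ofReal (Y.2 ω) ∂P) ≤ S := by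
    intro Y hY
    have h := le_biSup (f := fun Y : (Ω → ℝ) × (Ω → ℝ) =>
      max (∫⁻ ω, ENNReal.ofReal (Y.1 ω) ∂P) (∫⁻ ω, ENNReal.ofReal (Y.2 ω) ∂P)) hY
    exact ⟨le_trans (le_max_left _ _) h, le_trans (le_max_right _ _) h⟩
  have hint : ∀ Y ∈ 𝒴, Integrable Y.1 P ∧ Integrable Y.2 P := by
    intro Y hY
    constructor
    · exact integrable_of_lintegral_lt_top
        (((hadapted Y hY).1.mono hm0 le_rfl).aestronglyMeasurable)
        (Eventually.of_forall fun ω => (hnonneg Y hY ω).1)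
        (lt_of_le_of_lt (hbound Y hY).1 hL1)
    · exact integrable_of_lintegral_lt_top
        (((hadapted Y hY).2.mono h1m le_rfl).aestronglyMeasurable)
        (Eventually.of_forall fun ω => (hnonneg Y hY ω).2)
        (lt_of_le_of_lt (hbound Y hY).2 hL1)
  have hIcc1 : ∀ ω : Ω, (1:ℝ) ∈ Icc (0:ℝ) 1 := fun _ => ⟨zero_le_one, le_rfl⟩
  have hNmem : ∀ Y ∈ 𝒴, ((fun _ => (1:ℝ)), fun ω => Y.2 ω / Y.1 ω) ∈ 𝒴 := by
    intro Y hY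
    have h := hfork Ys hYsmem Y hY Y hY (fun _ => 1) measurable_const hIcc1
    simpa [hYs1] using h
  have hYs2D : ((fun _ => (1:ℝ)), Ys.2) ∈ 𝒴 := by
    rw [← hYs1]; exact hYsmem
  have hmulmem : ∀ Y ∈ 𝒴, ∀ f : Ω → ℝ, ((fun _ => (1:ℝ)), f) ∈ 𝒴 →
      (Y.1, fun ω => Y.1 ω * f ω) ∈ 𝒴 := by
    intro Y hY f hf
    have h := hfork Y hY _ hf _ hf (fun _ => 1) measurable_const hIcc1
    simpa using h
  have hcomb : ∀ f g : Ω → ℝ, ((fun _ => (1:ℝ)), f) ∈ 𝒴 → ((fun _ => (1:ℝ)), g) ∈ 𝒴 →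
      ∀ l : Ω → ℝ, Measurable[F0] l → (∀ ω, l ω ∈ Icc (0:ℝ) 1) →
      ((fun _ => (1:ℝ)), fun ω => l ω * f ω + (1 - l ω) * g ω) ∈ 𝒴 := by
    intro f g hf hg l hl hl01
    have h := hfork _ hf _ hf _ hg l hl hl01
    simpa using h
  -- the normalized family
  let 𝒟 := {f : Ω → ℝ // ((fun _ => (1:ℝ)), f) ∈ 𝒴}
  haveI : Nonempty 𝒟 := ⟨⟨Ys.2, hYs2D⟩⟩
  have hD_nonneg : ∀ f : 𝒟, 0 ≤ᵐ[P] f.val :=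
    fun f => Eventually.of_forall fun ω => (hnonneg _ f.2 ω).2
  have hD_int : ∀ f : 𝒟, Integrable f.val P := fun f => (hint _ f.2).2
  have hc_nonneg : ∀ f : 𝒟, 0 ≤ᵐ[P] P[f.val|F0] := fun f => condExp_nonneg (hD_nonneg f)
  have hclaimA : ∀ Y ∈ 𝒴, ∀ f : 𝒟,
      ∫⁻ ω, ENNReal.ofReal (Y.1 ω * (P[f.val|F0]) ω) ∂P ≤ S := by
    intro Y hY f
    have hmem := hmulmem Y hY f.val f.2
    have hprodint : Integrable (fun ω => Y.1 ω * f.val ω) P := (hint _ hmem).2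
    have hprodnn : (0 : Ω → ℝ) ≤ᵐ[P] fun ω => Y.1 ω * f.val ω :=
      Eventually.of_forall fun ω => (hnonneg _ hmem ω).2
    have hpull : (P[(fun ω => Y.1 ω * f.val ω)|F0]) =ᵐ[P]
        fun ω => Y.1 ω * (P[f.val|F0]) ω :=
      condExp_mul_of_stronglyMeasurable_left (μ := P) (m := F0)
        ((hadapted Y hY).1.stronglyMeasurable) hprodint (hD_int f)
    have heq : (fun ω => ENNReal.ofReal (Y.1 ω * (P[f.val|F0]) ω)) =ᵐ[P]
        fun ω => ENNReal.ofReal ((P[(fun ω => Y.1 ω * f.val ω)|F0]) ω) := by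
      filter_upwards [hpull] with ω hω
      rw [hω]
    rw [lintegral_congr_ae heq]
    have hcnn : (0 : Ω → ℝ) ≤ᵐ[P] P[(fun ω => Y.1 ω * f.val ω)|F0] := condExp_nonneg hprodnn
    rw [← ofReal_integral_eq_lintegral_ofReal integrable_condExp hcnn,
        integral_condExp hm0,
        ofReal_integral_eq_lintegral_ofReal hprodint hprodnn]
    exact (hbound _ hmem).2
  have hTleS : ∀ f : 𝒟, ∫⁻ ω, ENNReal.ofReal ((P[f.val|F0]) ω) ∂P ≤ S := by
    intro f
    have h := hclaimA _ f.2 f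
    simpa using h
  have hdir : ∀ f g : 𝒟, ∃ u : 𝒟,
      ((P[f.val|F0]) ≤ᵐ[P] P[u.val|F0]) ∧ ((P[g.val|F0]) ≤ᵐ[P] P[u.val|F0]) := by
    intro f g
    set B : Set Ω := {ω | (P[g.val|F0]) ω ≤ (P[f.val|F0]) ω} with hBdef
    have hB : MeasurableSet[F0] B :=
      measurableSet_le stronglyMeasurable_condExp.measurable
        stronglyMeasurable_condExp.measurable
    set l : Ω → ℝ := B.indicator (fun _ => (1:ℝ)) with hldef
    have hlmeas : Measurable[F0] l := measurable_const.indicator hB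
    have hl01 : ∀ ω, l ω ∈ Icc (0:ℝ) 1 := by
      intro ω; by_cases h : ω ∈ B <;> simp [hldef, h]
    have hlbd : ∀ ω, ‖l ω‖ ≤ (1:ℝ) := by
      intro ω
      rw [Real.norm_eq_abs, abs_le]
      constructor <;> [linarith [(hl01 ω).1]; exact (hl01 ω).2]
    have hl'bd : ∀ ω, ‖1 - l ω‖ ≤ (1:ℝ) := by
      intro ω
      rw [Real.norm_eq_abs, abs_le]
      constructor <;> [linarith [(hl01 ω).2]; linarith [(hl01 ω).1]]
    have hlaesm : AEStronglyMeasurable[m] l P := (hlmeas.mono hm0 le_rfl).aestronglyMeasurable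
    have hl'aesm : AEStronglyMeasurable[m] (fun ω => 1 - l ω) P :=
      ((measurable_const.sub hlmeas).mono hm0 le_rfl).aestronglyMeasurable
    have hintlf : Integrable (fun ω => l ω * f.val ω) P :=
      (hD_int f).bdd_mul hlaesm (Eventually.of_forall hlbd)
    have hintlg : Integrable (fun ω => (1 - l ω) * g.val ω) P :=
      (hD_int g).bdd_mul hl'aesm (Eventually.of_forall hl'bd)
    have humem := hcomb f.val g.val f.2 g.2 l hlmeas hl01
    have hadd : (P[(fun ω => l ω * f.val ω + (1 - l ω) * g.val ω)|F0]) =ᵐ[P]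
        (P[(fun ω => l ω * f.val ω)|F0]) + (P[(fun ω => (1 - l ω) * g.val ω)|F0]) :=
      condExp_add hintlf hintlg F0
    have hpf : (P[(fun ω => l ω * f.val ω)|F0]) =ᵐ[P] fun ω => l ω * (P[f.val|F0]) ω :=
      condExp_mul_of_stronglyMeasurable_left (μ := P) (m := F0) hlmeas.stronglyMeasurable
        hintlf (hD_int f)
    have hpg : (P[(fun ω => (1 - l ω) * g.val ω)|F0]) =ᵐ[P]
        fun ω => (1 - l ω) * (P[g.val|F0]) ω :=
      condExp_mul_of_stronglyMeasurable_left (μ := P) (m := F0)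
        (measurable_const.sub hlmeas).stronglyMeasurable hintlg (hD_int g)
    refine ⟨⟨_, humem⟩, ?_, ?_⟩
    · filter_upwards [hadd, hpf, hpg] with ω h1 h2 h3
      simp only [Pi.add_apply] at h1
      rw [h1, h2, h3]
      by_cases h : ω ∈ B
      · simp [hldef, h]
      · have hlt : (P[f.val|F0]) ω < (P[g.val|F0]) ω := not_le.mp h
        simp only [hldef, indicator_of_notMem h]
        simp only [sub_zero, zero_mul, one_mul, zero_add]
        linarith
    · filter_upwards [hadd, hpf, hpg] with ω h1 h2 h3
      simp only [Pi.add_apply] at h1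
      rw [h1, h2, h3]
      by_cases h : ω ∈ B
      · have hle : (P[g.val|F0]) ω ≤ (P[f.val|F0]) ω := h
        simp only [hldef, indicator_of_mem h]
        simp only [sub_self, zero_mul, one_mul, add_zero]
        linarith
      · simp [hldef, h]
  choose dmax hdmax1 hdmax2 using hdir
  set T : 𝒟 → ℝ≥0∞ := fun f => ∫⁻ ω, ENNReal.ofReal ((P[f.val|F0]) ω) ∂P with hTdef
  -- a sequence approximating the supremum of T
  obtain ⟨u, hu_mono, hu_tendsto, hu_mem⟩ :=
    exists_seq_tendsto_sSup (S := range T) (range_nonempty T) (OrderTop.bddAbove _)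
  choose g hg using hu_mem
  have hus : (⨆ n, u n) = ⨆ f : 𝒟, T f := by
    rw [← sSup_range (f := T)]
    exact iSup_eq_of_tendsto hu_mono hu_tendsto
  -- the increasing sequence V
  let V : ℕ → 𝒟 := fun n => Nat.rec ⟨Ys.2, hYs2D⟩ (fun k Vk => dmax Vk (g k)) n
  have hV0 : V 0 = ⟨Ys.2, hYs2D⟩ := rfl
  have hVs : ∀ n, V (n + 1) = dmax (V n) (g n) := fun n => rfl
  have hVmono : ∀ n, (P[(V n).val|F0]) ≤ᵐ[P] P[(V (n+1)).val|F0] := by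
    intro n; rw [hVs n]; exact hdmax1 _ _
  have hVg : ∀ n, (P[(g n).val|F0]) ≤ᵐ[P] P[(V (n+1)).val|F0] := by
    intro n; rw [hVs n]; exact hdmax2 _ _
  have hVmono_ae : ∀ᵐ ω ∂P, ∀ n, (P[(V n).val|F0]) ω ≤ (P[(V (n+1)).val|F0]) ω :=
    ae_all_iff.2 hVmono
  set Φ : Ω → ℝ≥0∞ := fun ω => ⨆ n, ENNReal.ofReal ((P[(V n).val|F0]) ω) with hΦdef
  have hcmeasm : ∀ f : 𝒟, Measurable[m] (fun ω => ENNReal.ofReal ((P[f.val|F0]) ω)) :=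
    fun f => ((stronglyMeasurable_condExp (m := F0)).measurable.mono hm0 le_rfl).ennreal_ofReal
  have hΦmeasF0 : Measurable[F0] Φ :=
    Measurable.iSup fun n => (stronglyMeasurable_condExp (m := F0)).measurable.ennreal_ofReal
  have hΦmeasm : Measurable[m] Φ := hΦmeasF0.mono hm0 le_rfl
  have hmono01 : ∀ᵐ ω ∂P, Monotone fun n => ENNReal.ofReal ((P[(V n).val|F0]) ω) := by
    filter_upwards [hVmono_ae] with ω hω
    exact monotone_nat_of_le_succ fun n => ENNReal.ofReal_le_ofReal (hω n)
  have hMCT : ∫⁻ ω, Φ ω ∂P = ⨆ n, T (V n) :=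
    lintegral_iSup' (fun n => (hcmeasm (V n)).aemeasurable) hmono01
  have hTVle : (⨆ n, T (V n)) ≤ ⨆ f : 𝒟, T f := iSup_le fun n => le_iSup T (V n)
  have hTVge : (⨆ f : 𝒟, T f) ≤ ⨆ n, T (V n) := by
    rw [← hus]
    refine iSup_le fun n => ?_
    rw [← hg n]
    refine le_trans ?_ (le_iSup (fun k => T (V k)) (n+1))
    refine lintegral_mono_ae ?_
    filter_upwards [hVg n] with ω hω
    exact ENNReal.ofReal_le_ofReal hω
  have hTV : (⨆ n, T (V n)) = ⨆ f : 𝒟, T f := le_antisymm hTVle hTVge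
  have hsleS : (⨆ f : 𝒟, T f) ≤ S := iSup_le hTleS
  have hΦint : ∫⁻ ω, Φ ω ∂P ≤ S := by rw [hMCT, hTV]; exact hsleS
  have hΦfin : ∫⁻ ω, Φ ω ∂P ≠ ⊤ := (lt_of_le_of_lt hΦint hL1).ne
  have hΦlt : ∀ᵐ ω ∂P, Φ ω < ⊤ := ae_lt_top hΦmeasm hΦfin
  -- key domination property
  have hkey : ∀ f : 𝒟, ∀ᵐ ω ∂P, ENNReal.ofReal ((P[f.val|F0]) ω) ≤ Φ ω := by
    intro f
    set Ψ : Ω → ℝ≥0∞ := fun ω => ⨆ n,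
      (ENNReal.ofReal ((P[f.val|F0]) ω) ⊔ ENNReal.ofReal ((P[(V n).val|F0]) ω)) with hΨdef
    have hΨmeasm : Measurable[m] Ψ := Measurable.iSup fun n => (hcmeasm f).sup (hcmeasm (V n))
    have hΨint : ∫⁻ ω, Ψ ω ∂P ≤ ∫⁻ ω, Φ ω ∂P := by
      have hMCT2 : ∫⁻ ω, Ψ ω ∂P = ⨆ n, ∫⁻ ω,
          (ENNReal.ofReal ((P[f.val|F0]) ω) ⊔ ENNReal.ofReal ((P[(V n).val|F0]) ω)) ∂P := by
        refine lintegral_iSup' (fun n => ((hcmeasm f).sup (hcmeasm (V n))).aemeasurable) ?_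
        filter_upwards [hVmono_ae] with ω hω
        exact monotone_nat_of_le_succ fun n =>
          sup_le_sup_left (ENNReal.ofReal_le_ofReal (hω n)) _
      rw [hMCT2, hMCT, hTV]
      refine iSup_le fun n => ?_
      refine le_trans ?_ (le_iSup T (dmax f (V n)))
      refine lintegral_mono_ae ?_
      filter_upwards [hdmax1 f (V n), hdmax2 f (V n)] with ω h1 h2
      exact sup_le (ENNReal.ofReal_le_ofReal h1) (ENNReal.ofReal_le_ofReal h2)
    have hΦΨ : ∀ ω, Φ ω ≤ Ψ ω := fun ω => iSup_mono fun n => le_sup_right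
    have hsub : ∫⁻ ω, (Ψ ω - Φ ω) ∂P = ∫⁻ ω, Ψ ω ∂P - ∫⁻ ω, Φ ω ∂P :=
      @lintegral_sub _ m P _ _ hΦmeasm hΦfin (Eventually.of_forall hΦΨ)
    have hzero' : ∫⁻ ω, (Ψ ω - Φ ω) ∂P = 0 := by
      rw [hsub]
      exact tsub_eq_zero_of_le hΨint
    have hae : ∀ᵐ ω ∂P, Ψ ω - Φ ω = 0 := by
      have := (lintegral_eq_zero_iff' ((hΨmeasm.sub hΦmeasm).aemeasurable)).1 hzero'
      filter_upwards [this] with ω hω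
      simpa using hω
    filter_upwards [hae] with ω hω
    have hΨΦ : Ψ ω ≤ Φ ω := tsub_eq_zero_iff_le.1 hω
    refine le_trans ?_ hΨΦ
    exact le_trans le_sup_left (le_iSup (fun n =>
      ENNReal.ofReal ((P[f.val|F0]) ω) ⊔ ENNReal.ofReal ((P[(V n).val|F0]) ω)) 0)
  -- the density Z
  set Z : Ω → ℝ := fun ω => (Φ ω).toReal with hZdef
  have hZmeas : Measurable[F0] Z := hΦmeasF0.ennreal_toReal
  have hZnn : ∀ ω, 0 ≤ Z ω := fun ω => ENNReal.toReal_nonneg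
  have hc0pos : ∀ᵐ ω ∂P, 0 < (P[Ys.2|F0]) ω :=
    Statement4Aux.condexp_pos hm0 (hint Ys hYsmem).2 hYspos
  have hZpos : ∀ᵐ ω ∂P, 0 < Z ω := by
    filter_upwards [hc0pos, hΦlt] with ω h1 h2
    have hle : ENNReal.ofReal ((P[(V 0).val|F0]) ω) ≤ Φ ω :=
      le_iSup (fun n => ENNReal.ofReal ((P[(V n).val|F0]) ω)) 0
    have h0 : (V 0).val = Ys.2 := rfl
    rw [h0] at hle
    have hpos' : (0:ℝ≥0∞) < Φ ω := lt_of_lt_of_le (by simpa [ENNReal.ofReal_pos] using h1) hle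
    exact ENNReal.toReal_pos hpos'.ne' h2.ne
  refine ⟨Z, hZmeas, hZpos, ?_⟩
  intro Y hY
  -- the normalized ratio
  set q : Ω → ℝ := fun ω => Y.2 ω / Y.1 ω with hqdef
  have hqmem : ((fun _ => (1:ℝ)), q) ∈ 𝒴 := hNmem Y hY
  set fq : 𝒟 := ⟨q, hqmem⟩ with hfqdef
  have hq_int : Integrable q P := hD_int fq
  have hY1nn : ∀ ω, 0 ≤ Y.1 ω := fun ω => (hnonneg Y hY ω).1
  have hY2ae : Y.2 =ᵐ[P] fun ω => Y.1 ω * q ω := by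
    filter_upwards [hzero Y hY] with ω hω
    by_cases h : Y.1 ω = 0
    · simp [hqdef, h, hω h]
    · have hq : q ω = Y.2 ω / Y.1 ω := rfl
      rw [hq]
      field_simp
  have hmulint : Integrable (fun ω => Y.1 ω * q ω) P := (hint Y hY).2.congr hY2ae
  have hpull : (P[Y.2|F0]) =ᵐ[P] fun ω => Y.1 ω * (P[q|F0]) ω := by
    have h1 : (P[Y.2|F0]) =ᵐ[P] P[(fun ω => Y.1 ω * q ω)|F0] := condExp_congr_ae hY2ae
    have h2 : (P[(fun ω => Y.1 ω * q ω)|F0]) =ᵐ[P] fun ω => Y.1 ω * (P[q|F0]) ω :=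
      condExp_mul_of_stronglyMeasurable_left (μ := P) (m := F0)
        ((hadapted Y hY).1.stronglyMeasurable) hmulint hq_int
    exact h1.trans h2
  have hqZ : ∀ᵐ ω ∂P, (P[q|F0]) ω ≤ Z ω := by
    filter_upwards [hkey fq, hΦlt, hc_nonneg fq] with ω h1 h2 h3
    have h4 := ENNReal.toReal_mono h2.ne h1
    rwa [ENNReal.toReal_ofReal h3] at h4
  have hZlin : ∫⁻ ω, ENNReal.ofReal (Y.1 ω * Z ω) ∂P ≤ S := by
    have e1 : (fun ω => ENNReal.ofReal (Y.1 ω * Z ω)) =ᵐ[P]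
        fun ω => ENNReal.ofReal (Y.1 ω) * Φ ω := by
      filter_upwards [hΦlt] with ω hω
      rw [ENNReal.ofReal_mul (hY1nn ω)]
      congr 1
      exact ENNReal.ofReal_toReal hω.ne
    rw [lintegral_congr_ae e1]
    have e2 : ∀ ω, ENNReal.ofReal (Y.1 ω) * Φ ω
        = ⨆ n, ENNReal.ofReal (Y.1 ω) * ENNReal.ofReal ((P[(V n).val|F0]) ω) := fun ω =>
      ENNReal.mul_iSup _ _
    rw [lintegral_congr e2]
    have hmeasY1 : Measurable[m] fun ω => ENNReal.ofReal (Y.1 ω) :=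
      ((hadapted Y hY).1.mono hm0 le_rfl).ennreal_ofReal
    have hMCT3 : ∫⁻ ω, (⨆ n, ENNReal.ofReal (Y.1 ω) *
          ENNReal.ofReal ((P[(V n).val|F0]) ω)) ∂P
        = ⨆ n, ∫⁻ ω, ENNReal.ofReal (Y.1 ω) * ENNReal.ofReal ((P[(V n).val|F0]) ω) ∂P := by
      refine lintegral_iSup' (fun n => (hmeasY1.mul (hcmeasm (V n))).aemeasurable) ?_
      filter_upwards [hVmono_ae] with ω hω
      exact monotone_nat_of_le_succ fun n =>
        mul_le_mul_right (ENNReal.ofReal_le_ofReal (hω n)) _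
    rw [hMCT3]
    refine iSup_le fun n => ?_
    have e3 : ∀ ω, ENNReal.ofReal (Y.1 ω) * ENNReal.ofReal ((P[(V n).val|F0]) ω)
        = ENNReal.ofReal (Y.1 ω * (P[(V n).val|F0]) ω) := fun ω =>
      (ENNReal.ofReal_mul (hY1nn ω)).symm
    rw [lintegral_congr e3]
    exact hclaimA Y hY (V n)
  have hZint : Integrable (fun ω => Y.1 ω * Z ω) P := by
    refine integrable_of_lintegral_lt_top ?_
      (Eventually.of_forall fun ω => mul_nonneg (hY1nn ω) (hZnn ω))
      (lt_of_le_of_lt hZlin hL1)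
    exact (((hadapted Y hY).1.mono hm0 le_rfl).mul
      (hZmeas.mono hm0 le_rfl)).aestronglyMeasurable
  refine ⟨hZint, ?_, hZlin⟩
  intro A hA
  have e1 : ∫ ω in A, Y.2 ω ∂P = ∫ ω in A, (P[Y.2|F0]) ω ∂P :=
    (setIntegral_condExp hm0 (hint Y hY).2 hA).symm
  rw [e1]
  have hle : (P[Y.2|F0]) ≤ᵐ[P] fun ω => Y.1 ω * Z ω := by
    filter_upwards [hpull, hqZ] with ω h1 h2
    rw [h1]
    exact mul_le_mul_of_nonneg_left h2 (hY1nn ω)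
  have hi1 : Integrable (fun ω => (P[Y.2|F0]) ω) (P.restrict A) :=
    integrable_condExp.restrict
  have hi2 : Integrable (fun ω => Y.1 ω * Z ω) (P.restrict A) := hZint.restrict
  exact integral_mono_ae hi1 hi2 (ae_restrict_of_ae hle)
end

section
/- Let (Ω, F, P) be a probability space with a filtration (F_k : 0 ≤ k ≤ n), and let 𝒴 be a family of nonnegative adapted processes indexed by {0, …, n} such that: (i) 𝒴 is L¹-bounded, i.e. sup_{Y ∈ 𝒴} max_{k=0,…,n} E[Y_k] < ∞; (ii) 𝒴 is fork-convex: every Y ∈ 𝒴 stays in zero once it hits zero, and for all Y¹, Y², Y³ ∈ 𝒴, every s ∈ {0, …, n}, and every F_s-measurable random variable λ with values in [0,1], the process defined by Y_k = Y¹_k for k < s and Y_k = Y¹_s (λ Y²_k/Y²_s + (1−λ) Y³_k/Y³_s) for k ≥ s belongs to 𝒴 (with the convention 0/0 = 0); (iii) 𝒴 contains the constant process (1, …, 1). Then there exists a strictly positive adapted process (Z_k : 0 ≤ k ≤ n) with Z_n = 1 such that ZY = (Z_k Y_k)_k is a supermartingale for every Y ∈ 𝒴, and Z can be chosen such that max_{k=0,…,n}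 E[Z_k Y_k] ≤ sup_{Y ∈ 𝒴} max_{k=0,…,n} E[Y_k] for every Y ∈ 𝒴. -/
open MeasureTheory Filter Set
open scoped ENNReal NNReal Topology

section Statement5Aux

variable {Ω : Type*} {m : MeasurableSpace Ω} {P : Measure Ω} [IsProbabilityMeasure P]
  {n : ℕ} {ℱ : Filtration (Fin (n + 1)) m} {𝒴 : Set (Fin (n + 1) → Ω → ℝ)}

private lemma st5_leC {Y : Fin (n + 1) → Ω → ℝ} (hY : Y ∈ 𝒴) (k : Fin (n + 1)) :
    ∫⁻ ω, ENNReal.ofReal (Y k ω) ∂P ≤ ⨆ Y ∈ 𝒴, ⨆ k, ∫⁻ ω, ENNReal.ofReal (Y k ω) ∂P :=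
  le_iSup₂_of_le Y hY
    (le_iSup (fun k : Fin (n + 1) => ∫⁻ ω, ENNReal.ofReal (Y k ω) ∂P) k)

private lemma st5_int (hadapted : ∀ Y ∈ 𝒴, Adapted ℱ Y)
    (hnonneg : ∀ Y ∈ 𝒴, ∀ k ω, 0 ≤ Y k ω)
    (hL1 : (⨆ Y ∈ 𝒴, ⨆ k, ∫⁻ ω, ENNReal.ofReal (Y k ω) ∂P) < ⊤)
    {Y : Fin (n + 1) → Ω → ℝ} (hY : Y ∈ 𝒴) (k : Fin (n + 1)) : Integrable (Y k) P := by
  refine ⟨((hadapted Y hY k).mono (ℱ.le k) le_rfl).stronglyMeasurable.aestronglyMeasurable, ?_⟩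
  have heq : ∀ ω, (‖Y k ω‖₊ : ℝ≥0∞) = ENNReal.ofReal (Y k ω) := fun ω => by
    rw [← enorm_eq_nnnorm, ← ofReal_norm, Real.norm_of_nonneg (hnonneg Y hY k ω)]
  show (∫⁻ ω, (‖Y k ω‖₊ : ℝ≥0∞) ∂P) < ⊤
  calc (∫⁻ ω, (‖Y k ω‖₊ : ℝ≥0∞) ∂P) = ∫⁻ ω, ENNReal.ofReal (Y k ω) ∂P := lintegral_congr heq
    _ ≤ ⨆ Y ∈ 𝒴, ⨆ k, ∫⁻ ω, ENNReal.ofReal (Y k ω) ∂P := st5_leC hY k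
    _ < ⊤ := hL1

private lemma st5_lint_condexp (k : Fin (n + 1)) {f : Ω → ℝ} (hf : Integrable f P)
    (hf0 : ∀ ω, 0 ≤ f ω) :
    ∫⁻ ω, ENNReal.ofReal ((P[f|ℱ k]) ω) ∂P = ∫⁻ ω, ENNReal.ofReal (f ω) ∂P := by
  rw [← ofReal_integral_eq_lintegral_ofReal integrable_condExp
      (condExp_nonneg (Eventually.of_forall hf0)),
    integral_condExp (ℱ.le k),
    ofReal_integral_eq_lintegral_ofReal hf (Eventually.of_forall hf0)]

private lemma st5_pkg (hadapted : ∀ Y ∈ 𝒴, Adapted ℱ Y)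
    (hnonneg : ∀ Y ∈ 𝒴, ∀ k ω, 0 ≤ Y k ω)
    (hL1 : (⨆ Y ∈ 𝒴, ⨆ k, ∫⁻ ω, ENNReal.ofReal (Y k ω) ∂P) < ⊤)
    (hfork : ∀ Y1 ∈ 𝒴, ∀ Y2 ∈ 𝒴, ∀ Y3 ∈ 𝒴, ∀ s : Fin (n + 1), ∀ l : Ω → ℝ,
      Measurable[ℱ s] l → (∀ ω, l ω ∈ Icc (0 : ℝ) 1) →
      (fun k ω => if k < s then Y1 k ω
        else Y1 s ω * (l ω * (Y2 k ω / Y2 s ω) + (1 - l ω) * (Y3 k ω / Y3 s ω))) ∈ 𝒴)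
    (hone : (fun _ _ => (1 : ℝ)) ∈ 𝒴) (k : Fin (n + 1)) :
    ∃ (G : Ω → ℝ≥0∞) (W : ℕ → Fin (n + 1) → Ω → ℝ),
      Measurable[ℱ k] G ∧ (∀ᵐ ω ∂P, G ω < ⊤) ∧
      (∀ i, W i ∈ 𝒴) ∧ (∀ i j ω, j ≤ k → W i j ω = 1) ∧
      (∀ᵐ ω ∂P, Monotone fun i => (P[W i (Fin.last n)|ℱ k]) ω) ∧
      (∀ ω, G ω = ⨆ i, ENNReal.ofReal ((P[W i (Fin.last n)|ℱ k]) ω)) ∧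
      (∀ V ∈ 𝒴, (∀ j ω, j ≤ k → V j ω = 1) →
        ∀ᵐ ω ∂P, ENNReal.ofReal ((P[V (Fin.last n)|ℱ k]) ω) ≤ G ω) := by
  classical
  have hint : ∀ Y ∈ 𝒴, ∀ j, Integrable (Y j) P := fun Y hY j =>
    st5_int hadapted hnonneg hL1 hY j
  -- the `λ`-indicator used to combine two processes
  set F := fun (U V' : Fin (n + 1) → Ω → ℝ) (ω : Ω) =>
    if (P[V' (Fin.last n)|ℱ k]) ω ≤ (P[U (Fin.last n)|ℱ k]) ω then (1 : ℝ) else 0 with hF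
  have hFmeas : ∀ U V', Measurable[ℱ k] (F U V') := fun U V' =>
    Measurable.ite (measurableSet_le stronglyMeasurable_condExp.measurable
      stronglyMeasurable_condExp.measurable) measurable_const measurable_const
  have hFrange : ∀ U V' ω, F U V' ω ∈ Icc (0 : ℝ) 1 := fun U V' ω => by
    simp only [hF]; split_ifs <;> norm_num
  -- combined process
  set com := fun (U V' : Fin (n + 1) → Ω → ℝ) (j : Fin (n + 1)) (ω : Ω) =>
    if j < k then U j ω
    else U k ω * (F U V' ω * (U j ω / U k ω) + (1 - F U V' ω) * (V' j ω / V' k ω)) with hcom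
  have hcom_mem : ∀ U ∈ 𝒴, ∀ V' ∈ 𝒴, com U V' ∈ 𝒴 := fun U hU V' hV' =>
    hfork U hU U hU V' hV' k (F U V') (hFmeas U V') (hFrange U V')
  have hcom_one : ∀ U V', (∀ j ω, j ≤ k → U j ω = 1) → (∀ j ω, j ≤ k → V' j ω = 1) →
      ∀ j ω, j ≤ k → com U V' j ω = 1 := by
    intro U V' hU1 hV1 j ω hj
    by_cases hjk : j < k
    · simp only [hcom, if_pos hjk, hU1 j ω hj]
    · have hj' : j = k := le_antisymm hj (not_lt.1 hjk)
      subst hj'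
      simp only [hcom, if_neg hjk, hU1 j ω le_rfl, hV1 j ω le_rfl]
      ring
  have hcom_last : ∀ U V', (∀ j ω, j ≤ k → U j ω = 1) → (∀ j ω, j ≤ k → V' j ω = 1) →
      ∀ ω, com U V' (Fin.last n) ω
        = F U V' ω * U (Fin.last n) ω + (1 - F U V' ω) * V' (Fin.last n) ω := by
    intro U V' hU1 hV1 ω
    have hk : ¬ (Fin.last n < k) := not_lt.2 (Fin.le_last k)
    simp only [hcom, if_neg hk, hU1 k ω le_rfl, hV1 k ω le_rfl, div_one, one_mul]
  have hcom_condexp : ∀ U, U ∈ 𝒴 → ∀ V', V' ∈ 𝒴 → (∀ j ω, j ≤ k → U j ω = 1) →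
      (∀ j ω, j ≤ k → V' j ω = 1) →
      (P[com U V' (Fin.last n)|ℱ k]) =ᵐ[P]
        fun ω => max ((P[U (Fin.last n)|ℱ k]) ω) ((P[V' (Fin.last n)|ℱ k]) ω) := by
    intro U hU V' hV' hU1 hV1
    have h1 : com U V' (Fin.last n)
        = F U V' * U (Fin.last n) + (fun ω => 1 - F U V' ω) * V' (Fin.last n) := by
      funext ω; exact hcom_last U V' hU1 hV1 ω
    have hFb : ∀ ω, ‖F U V' ω‖ ≤ 1 := fun ω => by
      have := hFrange U V' ω
      rw [Real.norm_eq_abs, abs_le]; exact ⟨by linarith [this.1], this.2⟩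
    have hFb' : ∀ ω, ‖1 - F U V' ω‖ ≤ 1 := fun ω => by
      have := hFrange U V' ω
      rw [Real.norm_eq_abs, abs_le]; exact ⟨by linarith [this.2], by linarith [this.1]⟩
    have hFm : StronglyMeasurable[ℱ k] (F U V') := (hFmeas U V').stronglyMeasurable
    have hFm' : StronglyMeasurable[ℱ k] (fun ω => 1 - F U V' ω) :=
      stronglyMeasurable_const.sub hFm
    have hintU := hint U hU (Fin.last n)
    have hintV := hint V' hV' (Fin.last n)
    have hi1 : Integrable (F U V' * U (Fin.last n)) P :=
      hintU.bdd_mul (c := 1) ((hFm.mono (ℱ.le k)).aestronglyMeasurable) (Eventually.of_forall hFb)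
    have hi2 : Integrable ((fun ω => 1 - F U V' ω) * V' (Fin.last n)) P :=
      hintV.bdd_mul (c := 1) ((hFm'.mono (ℱ.le k)).aestronglyMeasurable) (Eventually.of_forall hFb')
    have hadd := condExp_add (m := ℱ k) (μ := P) hi1 hi2
    have hm1 := condExp_mul_of_stronglyMeasurable_left hFm hi1 hintU
    have hm2 := condExp_mul_of_stronglyMeasurable_left hFm' hi2 hintV
    rw [h1]
    refine hadd.trans ?_
    filter_upwards [hm1, hm2] with ω h1ω h2ω
    rw [Pi.add_apply, h1ω, h2ω, Pi.mul_apply, Pi.mul_apply]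
    by_cases hle : (P[V' (Fin.last n)|ℱ k]) ω ≤ (P[U (Fin.last n)|ℱ k]) ω
    · simp only [hF, if_pos hle]
      rw [max_eq_left hle]; ring
    · simp only [hF, if_neg hle]
      rw [max_eq_right (le_of_lt (not_le.1 hle))]; ring
  -- the supremum of achievable values
  set 𝒲 := {W : Fin (n + 1) → Ω → ℝ | W ∈ 𝒴 ∧ ∀ j ω, j ≤ k → W j ω = 1} with h𝒲
  have hone𝒲 : (fun _ _ => (1 : ℝ)) ∈ 𝒲 := ⟨hone, fun _ _ _ => rfl⟩
  set Sset := (fun W : Fin (n + 1) → Ω → ℝ =>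
    ∫⁻ ω, ENNReal.ofReal (W (Fin.last n) ω) ∂P) '' 𝒲 with hSset
  have hne : Sset.Nonempty := ⟨_, ⟨_, hone𝒲, rfl⟩⟩
  have hSC : sSup Sset ≤ ⨆ Y ∈ 𝒴, ⨆ k, ∫⁻ ω, ENNReal.ofReal (Y k ω) ∂P := by
    refine sSup_le ?_
    rintro _ ⟨W', hW', rfl⟩
    exact st5_leC hW'.1 (Fin.last n)
  have hSne : sSup Sset ≠ ⊤ := (lt_of_le_of_lt hSC hL1).ne
  obtain ⟨u, humono, hutend, humem⟩ := exists_seq_tendsto_sSup hne (OrderTop.bddAbove Sset)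
  choose V hVmem hVeq using humem
  -- the approximating sequence, combined recursively
  set W : ℕ → Fin (n + 1) → Ω → ℝ :=
    fun i => Nat.rec (motive := fun _ => Fin (n + 1) → Ω → ℝ) (V 0)
      (fun i' Wi' => com Wi' (V (i' + 1))) i with hW
  have hWsucc : ∀ i, W (i + 1) = com (W i) (V (i + 1)) := fun i => rfl
  have hW𝒲 : ∀ i, W i ∈ 𝒲 := by
    intro i
    induction i with
    | zero => exact hVmem 0
    | succ i ih =>
      rw [hWsucc i]
      exact ⟨hcom_mem _ ih.1 _ (hVmem (i + 1)).1, hcom_one _ _ ih.2 (hVmem (i + 1)).2⟩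
  have hWstep : ∀ i, (P[W (i + 1) (Fin.last n)|ℱ k]) =ᵐ[P]
      fun ω => max ((P[W i (Fin.last n)|ℱ k]) ω) ((P[V (i + 1) (Fin.last n)|ℱ k]) ω) := by
    intro i
    rw [hWsucc i]
    exact hcom_condexp _ (hW𝒲 i).1 _ (hVmem (i + 1)).1 (hW𝒲 i).2 (hVmem (i + 1)).2
  have hmono_ae : ∀ᵐ ω ∂P, Monotone fun i => (P[W i (Fin.last n)|ℱ k]) ω := by
    have h : ∀ᵐ ω ∂P, ∀ i,
        (P[W i (Fin.last n)|ℱ k]) ω ≤ (P[W (i + 1) (Fin.last n)|ℱ k]) ω := by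
      rw [ae_all_iff]
      intro i
      filter_upwards [hWstep i] with ω hω
      rw [hω]; exact le_max_left _ _
    filter_upwards [h] with ω hω
    exact monotone_nat_of_le_succ hω
  have hcexp_meas : ∀ (f : Ω → ℝ), Measurable (fun ω => ENNReal.ofReal ((P[f|ℱ k]) ω)) :=
    fun f => ENNReal.measurable_ofReal.comp
      ((stronglyMeasurable_condExp.mono (ℱ.le k)).measurable)
  have hb : ∀ i, ∫⁻ ω, ENNReal.ofReal ((P[W i (Fin.last n)|ℱ k]) ω) ∂P
      = ∫⁻ ω, ENNReal.ofReal (W i (Fin.last n) ω) ∂P := fun i =>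
    st5_lint_condexp k (hint _ (hW𝒲 i).1 _) (fun ω => hnonneg _ (hW𝒲 i).1 _ ω)
  have hbS : ∀ i, ∫⁻ ω, ENNReal.ofReal ((P[W i (Fin.last n)|ℱ k]) ω) ∂P ≤ sSup Sset := by
    intro i
    rw [hb i]
    exact le_sSup ⟨W i, hW𝒲 i, rfl⟩
  have hub : (⨆ i, ∫⁻ ω, ENNReal.ofReal ((P[W i (Fin.last n)|ℱ k]) ω) ∂P) = sSup Sset := by
    refine le_antisymm (iSup_le hbS) ?_
    have h1 : sSup Sset = ⨆ i, u i :=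
      tendsto_nhds_unique hutend (tendsto_atTop_iSup humono)
    rw [h1]
    refine iSup_le fun i => ?_
    match i with
    | 0 =>
      rw [← hVeq 0]
      have : W 0 = V 0 := rfl
      calc ∫⁻ ω, ENNReal.ofReal (V 0 (Fin.last n) ω) ∂P
          = ∫⁻ ω, ENNReal.ofReal ((P[W 0 (Fin.last n)|ℱ k]) ω) ∂P := by rw [hb 0, this]
        _ ≤ _ := le_iSup (fun i => ∫⁻ ω, ENNReal.ofReal ((P[W i (Fin.last n)|ℱ k]) ω) ∂P) 0
    | (i + 1) =>
      rw [← hVeq (i + 1)]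
      calc ∫⁻ ω, ENNReal.ofReal (V (i + 1) (Fin.last n) ω) ∂P
          = ∫⁻ ω, ENNReal.ofReal ((P[V (i + 1) (Fin.last n)|ℱ k]) ω) ∂P :=
            (st5_lint_condexp k (hint _ (hVmem (i + 1)).1 _)
              (fun ω => hnonneg _ (hVmem (i + 1)).1 _ ω)).symm
        _ ≤ ∫⁻ ω, ENNReal.ofReal ((P[W (i + 1) (Fin.last n)|ℱ k]) ω) ∂P := by
            refine lintegral_mono_ae ?_
            filter_upwards [hWstep i] with ω hω
            refine ENNReal.ofReal_le_ofReal ?_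
            rw [hω]; exact le_max_right _ _
        _ ≤ _ := le_iSup (fun i => ∫⁻ ω, ENNReal.ofReal ((P[W i (Fin.last n)|ℱ k]) ω) ∂P) (i + 1)
  refine ⟨fun ω => ⨆ i, ENNReal.ofReal ((P[W i (Fin.last n)|ℱ k]) ω), W,
    Measurable.iSup (fun i =>
      ENNReal.measurable_ofReal.comp stronglyMeasurable_condExp.measurable),
    ?_, fun i => (hW𝒲 i).1, fun i => (hW𝒲 i).2, hmono_ae, fun ω => rfl, ?_⟩
  · -- a.e. finiteness
    refine ae_lt_top (Measurable.iSup fun i => hcexp_meas _) ?_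
    have : ∫⁻ ω, (⨆ i, ENNReal.ofReal ((P[W i (Fin.last n)|ℱ k]) ω)) ∂P
        = ⨆ i, ∫⁻ ω, ENNReal.ofReal ((P[W i (Fin.last n)|ℱ k]) ω) ∂P := by
      refine lintegral_iSup' (fun i => (hcexp_meas _).aemeasurable) ?_
      filter_upwards [hmono_ae] with ω hω
      exact fun a b hab => ENNReal.ofReal_le_ofReal (hω hab)
    rw [this, hub]
    exact hSne
  · -- domination
    intro V' hV'𝒴 hV'1
    have hpos : ∀ᵐ ω ∂P, ∀ i, 0 ≤ (P[W i (Fin.last n)|ℱ k]) ω :=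
      ae_all_iff.2 fun i =>
        condExp_nonneg (Eventually.of_forall (hnonneg _ (hW𝒲 i).1 _))
    have key1 : ∀ i, ∫⁻ ω, ENNReal.ofReal
        (max ((P[W i (Fin.last n)|ℱ k]) ω) ((P[V' (Fin.last n)|ℱ k]) ω)) ∂P ≤ sSup Sset := by
      intro i
      have hcc := hcom_condexp (W i) (hW𝒲 i).1 V' hV'𝒴 (hW𝒲 i).2 hV'1
      have hmem : com (W i) V' ∈ 𝒲 :=
        ⟨hcom_mem _ (hW𝒲 i).1 _ hV'𝒴, hcom_one _ _ (hW𝒲 i).2 hV'1⟩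
      calc ∫⁻ ω, ENNReal.ofReal
            (max ((P[W i (Fin.last n)|ℱ k]) ω) ((P[V' (Fin.last n)|ℱ k]) ω)) ∂P
          = ∫⁻ ω, ENNReal.ofReal ((P[com (W i) V' (Fin.last n)|ℱ k]) ω) ∂P := by
            refine lintegral_congr_ae ?_
            filter_upwards [hcc] with ω hω
            rw [hω]
        _ = ∫⁻ ω, ENNReal.ofReal (com (W i) V' (Fin.last n) ω) ∂P :=
            st5_lint_condexp k (hint _ hmem.1 _) (fun ω => hnonneg _ hmem.1 _ ω)
        _ ≤ sSup Sset := le_sSup ⟨com (W i) V', hmem, rfl⟩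
    have key2 : ∀ i, ∫⁻ ω, ENNReal.ofReal
        ((P[V' (Fin.last n)|ℱ k]) ω - (P[W i (Fin.last n)|ℱ k]) ω) ∂P
        ≤ sSup Sset - ∫⁻ ω, ENNReal.ofReal ((P[W i (Fin.last n)|ℱ k]) ω) ∂P := by
      intro i
      refine ENNReal.le_sub_of_add_le_left
        (ne_top_of_le_ne_top hSne (hbS i)) ?_
      have hae : (fun ω => ENNReal.ofReal ((P[W i (Fin.last n)|ℱ k]) ω)
          + ENNReal.ofReal ((P[V' (Fin.last n)|ℱ k]) ω - (P[W i (Fin.last n)|ℱ k]) ω))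
          =ᵐ[P] fun ω => ENNReal.ofReal
            (max ((P[W i (Fin.last n)|ℱ k]) ω) ((P[V' (Fin.last n)|ℱ k]) ω)) := by
        filter_upwards [hpos] with ω hω
        rcases le_or_gt ((P[V' (Fin.last n)|ℱ k]) ω) ((P[W i (Fin.last n)|ℱ k]) ω) with hle | hlt
        · rw [max_eq_left hle, ENNReal.ofReal_eq_zero.2 (sub_nonpos.2 hle), add_zero]
        · rw [max_eq_right hlt.le, ← ENNReal.ofReal_add (hω i) (sub_nonneg.2 hlt.le),
            add_sub_cancel]
      calc (∫⁻ ω, ENNReal.ofReal ((P[W i (Fin.last n)|ℱ k]) ω) ∂P)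
            + ∫⁻ ω, ENNReal.ofReal
              ((P[V' (Fin.last n)|ℱ k]) ω - (P[W i (Fin.last n)|ℱ k]) ω) ∂P
          = ∫⁻ ω, (ENNReal.ofReal ((P[W i (Fin.last n)|ℱ k]) ω)
              + ENNReal.ofReal
                ((P[V' (Fin.last n)|ℱ k]) ω - (P[W i (Fin.last n)|ℱ k]) ω)) ∂P :=
            (lintegral_add_left (hcexp_meas _) _).symm
        _ = ∫⁻ ω, ENNReal.ofReal
              (max ((P[W i (Fin.last n)|ℱ k]) ω) ((P[V' (Fin.last n)|ℱ k]) ω)) ∂P :=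
            lintegral_congr_ae hae
        _ ≤ sSup Sset := key1 i
    have hmeas_gh : ∀ i, Measurable fun ω => ENNReal.ofReal
        ((P[V' (Fin.last n)|ℱ k]) ω - (P[W i (Fin.last n)|ℱ k]) ω) := fun i =>
      ENNReal.measurable_ofReal.comp
        (((stronglyMeasurable_condExp.mono (ℱ.le k)).measurable).sub
          ((stronglyMeasurable_condExp.mono (ℱ.le k)).measurable))
    have hinf0 : (⨅ i, ∫⁻ ω, ENNReal.ofReal
        ((P[V' (Fin.last n)|ℱ k]) ω - (P[W i (Fin.last n)|ℱ k]) ω) ∂P) = 0 := by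
      refine le_antisymm ?_ zero_le
      calc (⨅ i, ∫⁻ ω, ENNReal.ofReal
            ((P[V' (Fin.last n)|ℱ k]) ω - (P[W i (Fin.last n)|ℱ k]) ω) ∂P)
          ≤ ⨅ i, (sSup Sset - ∫⁻ ω, ENNReal.ofReal ((P[W i (Fin.last n)|ℱ k]) ω) ∂P) :=
            iInf_mono key2
        _ = sSup Sset - ⨆ i, ∫⁻ ω, ENNReal.ofReal ((P[W i (Fin.last n)|ℱ k]) ω) ∂P :=
            (ENNReal.sub_iSup hSne).symm
        _ = 0 := by rw [hub, tsub_self]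
    have hae0 : ∀ᵐ ω ∂P, (⨅ i, ENNReal.ofReal
        ((P[V' (Fin.last n)|ℱ k]) ω - (P[W i (Fin.last n)|ℱ k]) ω)) = 0 := by
      have h0 : ∫⁻ ω, (⨅ i, ENNReal.ofReal
          ((P[V' (Fin.last n)|ℱ k]) ω - (P[W i (Fin.last n)|ℱ k]) ω)) ∂P = 0 := by
        refine le_antisymm ?_ zero_le
        calc ∫⁻ ω, (⨅ i, ENNReal.ofReal
            ((P[V' (Fin.last n)|ℱ k]) ω - (P[W i (Fin.last n)|ℱ k]) ω)) ∂P
          ≤ ⨅ i, ∫⁻ ω, ENNReal.ofReal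
              ((P[V' (Fin.last n)|ℱ k]) ω - (P[W i (Fin.last n)|ℱ k]) ω) ∂P :=
              le_iInf fun i => lintegral_mono fun ω => iInf_le _ i
          _ = 0 := hinf0
      filter_upwards [(lintegral_eq_zero_iff (Measurable.iInf hmeas_gh)).1 h0] with ω hω
      simpa using hω
    filter_upwards [hae0, hpos] with ω hω hωpos
    refine ENNReal.le_of_forall_pos_le_add fun ε hε _ => ?_
    have hlt' : (⨅ i, ENNReal.ofReal
        ((P[V' (Fin.last n)|ℱ k]) ω - (P[W i (Fin.last n)|ℱ k]) ω)) < (ε : ℝ≥0∞) := by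
      rw [hω]; exact ENNReal.coe_pos.2 hε
    obtain ⟨i, hi⟩ := iInf_lt_iff.1 hlt'
    rcases le_or_gt ((P[V' (Fin.last n)|ℱ k]) ω) ((P[W i (Fin.last n)|ℱ k]) ω) with hle | hgt
    · exact le_trans (le_trans (ENNReal.ofReal_le_ofReal hle)
        (le_iSup (fun i => ENNReal.ofReal ((P[W i (Fin.last n)|ℱ k]) ω)) i)) le_self_add
    · have hεR : (0 : ℝ) < (ε : ℝ) := hε
      have hlt2 : (P[V' (Fin.last n)|ℱ k]) ω - (P[W i (Fin.last n)|ℱ k]) ω < (ε : ℝ) := by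
        rw [← ENNReal.ofReal_coe_nnreal] at hi
        exact (ENNReal.ofReal_lt_ofReal_iff hεR).1 hi
      have hg : (P[V' (Fin.last n)|ℱ k]) ω ≤ (P[W i (Fin.last n)|ℱ k]) ω + (ε : ℝ) := by
        linarith
      calc ENNReal.ofReal ((P[V' (Fin.last n)|ℱ k]) ω)
          ≤ ENNReal.ofReal ((P[W i (Fin.last n)|ℱ k]) ω + (ε : ℝ)) :=
            ENNReal.ofReal_le_ofReal hg
        _ = ENNReal.ofReal ((P[W i (Fin.last n)|ℱ k]) ω) + ENNReal.ofReal (ε : ℝ) :=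
            ENNReal.ofReal_add (hωpos i) hεR.le
        _ ≤ (⨆ i, ENNReal.ofReal ((P[W i (Fin.last n)|ℱ k]) ω)) + (ε : ℝ≥0∞) := by
            rw [ENNReal.ofReal_coe_nnreal]
            exact add_le_add_left
              (le_iSup (fun i => ENNReal.ofReal ((P[W i (Fin.last n)|ℱ k]) ω)) i) _

end Statement5Aux

/-- (Discrete-time supermartingale density.) For an `L¹`-bounded,
fork-convex family `𝒴` of nonnegative adapted processes indexed by `{0, …, n}` containing
the constant process `1`, there is a strictly positive adapted process `Z` with `Z_n = 1`
such that `ZY` is a supermartingale for every `Y ∈ 𝒴`, and `Z` can be chosen with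
`max_k E[Z_k Y_k] ≤ sup_{Y ∈ 𝒴} max_k E[Y_k]`. -/
theorem statement5 {Ω : Type*} {m : MeasurableSpace Ω} (P : Measure Ω) [IsProbabilityMeasure P]
    (n : ℕ) (ℱ : Filtration (Fin (n + 1)) m)
    (𝒴 : Set (Fin (n + 1) → Ω → ℝ))
    (hadapted : ∀ Y ∈ 𝒴, Adapted ℱ Y)
    (hnonneg : ∀ Y ∈ 𝒴, ∀ k ω, 0 ≤ Y k ω)
    (hL1 : (⨆ Y ∈ 𝒴, ⨆ k, ∫⁻ ω, ENNReal.ofReal (Y k ω) ∂P) < ⊤)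
    (hzero : ∀ Y ∈ 𝒴, ∀ ω, ∀ k l : Fin (n + 1), k ≤ l → Y k ω = 0 → Y l ω = 0)
    (hfork : ∀ Y1 ∈ 𝒴, ∀ Y2 ∈ 𝒴, ∀ Y3 ∈ 𝒴, ∀ s : Fin (n + 1), ∀ l : Ω → ℝ,
      Measurable[ℱ s] l → (∀ ω, l ω ∈ Icc (0 : ℝ) 1) →
      (fun k ω => if k < s then Y1 k ω
        else Y1 s ω * (l ω * (Y2 k ω / Y2 s ω) + (1 - l ω) * (Y3 k ω / Y3 s ω))) ∈ 𝒴)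
    (hone : (fun _ _ => (1 : ℝ)) ∈ 𝒴) :
    ∃ Z : Fin (n + 1) → Ω → ℝ, Adapted ℱ Z ∧ (∀ᵐ ω ∂P, ∀ k, 0 < Z k ω) ∧
      Z (Fin.last n) = (fun _ => 1) ∧
      (∀ Y ∈ 𝒴, Supermartingale (fun k ω => Z k ω * Y k ω) ℱ P) ∧
      ∀ Y ∈ 𝒴, (⨆ k, ∫⁻ ω, ENNReal.ofReal (Z k ω * Y k ω) ∂P) ≤
        ⨆ Y' ∈ 𝒴, ⨆ k, ∫⁻ ω, ENNReal.ofReal (Y' k ω) ∂P := by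
  classical
  have hint : ∀ Y ∈ 𝒴, ∀ j, Integrable (Y j) P := fun Y hY j =>
    st5_int hadapted hnonneg hL1 hY j
  choose G W hGmeas hGfin hWmem hWone hWmono hGrep hGdom using
    st5_pkg hadapted hnonneg hL1 hfork hone
  -- basic facts about G
  have hG1 : ∀ k, ∀ᵐ ω ∂P, 1 ≤ G k ω ∧ G k ω < ⊤ := by
    intro k
    have hd := hGdom k (fun _ _ => (1 : ℝ)) hone (fun _ _ _ => rfl)
    have hc : P[(fun _ _ => (1 : ℝ)) (Fin.last n)|ℱ k] = fun _ => (1 : ℝ) :=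
      condExp_const (ℱ.le k) 1
    filter_upwards [hd, hGfin k] with ω h1 h2
    refine ⟨?_, h2⟩
    rw [hc] at h1
    simpa using h1
  set Z : Fin (n + 1) → Ω → ℝ := fun k =>
    if k = Fin.last n then (fun _ => 1) else fun ω => max ((G k ω).toReal) 1 with hZdef
  have hZ1 : ∀ k ω, 1 ≤ Z k ω := by
    intro k ω
    by_cases hk : k = Fin.last n
    · simp [hZdef, hk]
    · simp only [hZdef, if_neg hk]
      exact le_max_right _ _
  have hZ0 : ∀ k ω, 0 ≤ Z k ω := fun k ω => le_trans zero_le_one (hZ1 k ω)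
  have hZadapted : Adapted ℱ Z := by
    intro k
    by_cases hk : k = Fin.last n
    · rw [hZdef]; simp only [if_pos hk]; exact measurable_const
    · rw [hZdef]; simp only [if_neg hk]
      exact ((ENNReal.measurable_toReal.comp (hGmeas k)).max measurable_const)
  have hZlast : Z (Fin.last n) = fun _ => (1 : ℝ) := by rw [hZdef]; simp
  -- the key inequality
  have hKEY : ∀ Y, Y ∈ 𝒴 → ∀ k : Fin (n + 1), ∀ T, T ∈ 𝒴 →
      (∀ j ω, j ≤ k → T j ω = Y j ω) →
      ∀ᵐ ω ∂P, (P[T (Fin.last n)|ℱ k]) ω ≤ Z k ω * Y k ω := by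
    intro Y hY k T hT hagree
    by_cases hk : k = Fin.last n
    · subst hk
      have hce : P[T (Fin.last n)|ℱ (Fin.last n)] = T (Fin.last n) :=
        condExp_of_stronglyMeasurable (ℱ.le _) (hadapted T hT _).stronglyMeasurable (hint T hT _)
      refine Eventually.of_forall fun ω => ?_
      rw [hce, hagree (Fin.last n) ω le_rfl]
      have hz : Z (Fin.last n) ω = 1 := by rw [hZlast]
      rw [hz, one_mul]
    · set l : Ω → ℝ := fun ω => if 0 < Y k ω then 1 else 0 with hl
      have hlmeas : Measurable[ℱ k] l :=
        Measurable.ite (measurableSet_lt measurable_const (hadapted Y hY k))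
          measurable_const measurable_const
      have hlrange : ∀ ω, l ω ∈ Icc (0 : ℝ) 1 := fun ω => by
        simp only [hl]; split_ifs <;> norm_num
      set V : Fin (n + 1) → Ω → ℝ := fun j ω =>
        if j < k then (fun _ _ => (1 : ℝ)) j ω
        else (fun _ _ => (1 : ℝ)) k ω * (l ω * (T j ω / T k ω)
          + (1 - l ω) * ((fun _ _ => (1 : ℝ)) j ω / (fun _ _ => (1 : ℝ)) k ω)) with hV
      have hVmem : V ∈ 𝒴 := hfork _ hone T hT _ hone k l hlmeas hlrange
      have hVone : ∀ j ω, j ≤ k → V j ω = 1 := by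
        intro j ω hj
        by_cases hjk : j < k
        · simp [hV, hjk]
        · have hj' : j = k := le_antisymm hj (not_lt.1 hjk)
          subst hj'
          simp only [hV, if_neg hjk]
          by_cases hY0 : 0 < Y j ω
          · have hTk : T j ω = Y j ω := hagree j ω le_rfl
            simp [hl, hY0, hTk, div_self (ne_of_gt hY0)]
          · simp [hl, hY0]
      have hVlast : ∀ ω, T (Fin.last n) ω = Y k ω * V (Fin.last n) ω := by
        intro ω
        have hnlt : ¬ (Fin.last n < k) := not_lt.2 (Fin.le_last k)
        simp only [hV, if_neg hnlt]
        by_cases hY0 : 0 < Y k ω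
        · have hTk : T k ω = Y k ω := hagree k ω le_rfl
          simp only [hl, if_pos hY0, hTk]
          field_simp
          ring
        · have hYk0 : Y k ω = 0 := le_antisymm (not_lt.1 hY0) (hnonneg Y hY k ω)
          have hT0 : T (Fin.last n) ω = 0 :=
            hzero T hT ω k (Fin.last n) (Fin.le_last k)
              (by rw [hagree k ω le_rfl, hYk0])
          rw [hT0, hYk0, zero_mul]
      have heq : T (Fin.last n) = Y k * V (Fin.last n) := funext fun ω => hVlast ω
      have hTint : Integrable (Y k * V (Fin.last n)) P := by
        rw [← heq]; exact hint T hT _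
      have hpull := condExp_mul_of_stronglyMeasurable_left (hadapted Y hY k).stronglyMeasurable hTint (hint V hVmem _)
      have hdom := hGdom k V hVmem hVone
      filter_upwards [hpull, hdom, hG1 k] with ω hω hdomω hGω
      have h1 : (P[T (Fin.last n)|ℱ k]) ω = Y k ω * (P[V (Fin.last n)|ℱ k]) ω := by
        rw [heq]; exact hω
      rw [h1]
      have hZk : (P[V (Fin.last n)|ℱ k]) ω ≤ Z k ω := by
        rcases le_or_gt ((P[V (Fin.last n)|ℱ k]) ω) 0 with hc0 | hc0
        · linarith [hZ1 k ω]
        · have h2 : (P[V (Fin.last n)|ℱ k]) ω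
              = (ENNReal.ofReal ((P[V (Fin.last n)|ℱ k]) ω)).toReal :=
            (ENNReal.toReal_ofReal hc0.le).symm
          rw [h2]
          calc (ENNReal.ofReal ((P[V (Fin.last n)|ℱ k]) ω)).toReal
              ≤ (G k ω).toReal := ENNReal.toReal_mono hGω.2.ne hdomω
            _ ≤ Z k ω := by simp only [hZdef, if_neg hk]; exact le_max_left _ _
      calc Y k ω * (P[V (Fin.last n)|ℱ k]) ω ≤ Y k ω * Z k ω :=
            mul_le_mul_of_nonneg_left hZk (hnonneg Y hY k ω)
        _ = Z k ω * Y k ω := mul_comm _ _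
  -- the fork of `Y` with `W k i` at time `k`
  have hTfork : ∀ Y, Y ∈ 𝒴 → ∀ k : Fin (n + 1), ∀ i : ℕ, ∃ T, T ∈ 𝒴 ∧
      (∀ j ω, j ≤ k → T j ω = Y j ω) ∧
      ((P[T (Fin.last n)|ℱ k]) =ᵐ[P]
        fun ω => Y k ω * (P[W k i (Fin.last n)|ℱ k]) ω) := by
    intro Y hY k i
    obtain ⟨T, hT𝒴, hTag, hTlast⟩ :
        ∃ T, T ∈ 𝒴 ∧ (∀ j ω, j ≤ k → T j ω = Y j ω) ∧
          (T (Fin.last n) = Y k * W k i (Fin.last n)) := by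
      refine ⟨_, hfork Y hY (W k i) (hWmem k i) (W k i) (hWmem k i) k (fun _ => 1)
        measurable_const (fun ω => ⟨zero_le_one, le_rfl⟩), ?_, ?_⟩
      · intro j ω hj
        by_cases hjk : j < k
        · simp [hjk]
        · have hj' : j = k := le_antisymm hj (not_lt.1 hjk)
          subst hj'
          simp [hjk, hWone j i j ω le_rfl]
      · funext ω
        have hnlt : ¬ (Fin.last n < k) := not_lt.2 (Fin.le_last k)
        simp [hnlt, hWone k i k ω le_rfl]
    have hTint : Integrable (Y k * W k i (Fin.last n)) P := by
      rw [← hTlast]; exact hint T hT𝒴 _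
    have hpull := condExp_mul_of_stronglyMeasurable_left (hadapted Y hY k).stronglyMeasurable hTint
      (hint _ (hWmem k i) _)
    refine ⟨T, hT𝒴, hTag, ?_⟩
    rw [hTlast]
    exact hpull.mono fun ω hω => hω
  -- representation of `ofReal (Z k ω * Y k ω)` for `k ≠ last`
  have hrep : ∀ Y, Y ∈ 𝒴 → ∀ k, k ≠ Fin.last n → ∀ᵐ ω ∂P,
      ENNReal.ofReal (Z k ω * Y k ω)
        = ⨆ i, ENNReal.ofReal (Y k ω * (P[W k i (Fin.last n)|ℱ k]) ω) := by
    intro Y hY k hk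
    have hWpos : ∀ᵐ ω ∂P, ∀ i, 0 ≤ (P[W k i (Fin.last n)|ℱ k]) ω :=
      ae_all_iff.2 fun i =>
        condExp_nonneg (Eventually.of_forall (hnonneg _ (hWmem k i) _))
    filter_upwards [hG1 k, hWpos] with ω h1 h2
    have hfin : G k ω ≠ ⊤ := h1.2.ne
    have hZeq : Z k ω = (G k ω).toReal := by
      simp only [hZdef, if_neg hk]
      refine max_eq_left ?_
      calc (1 : ℝ) = (1 : ℝ≥0∞).toReal := by simp
        _ ≤ (G k ω).toReal := ENNReal.toReal_mono hfin h1.1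
    calc ENNReal.ofReal (Z k ω * Y k ω)
        = ENNReal.ofReal (Z k ω) * ENNReal.ofReal (Y k ω) :=
          ENNReal.ofReal_mul (hZ0 k ω)
      _ = G k ω * ENNReal.ofReal (Y k ω) := by rw [hZeq, ENNReal.ofReal_toReal hfin]
      _ = (⨆ i, ENNReal.ofReal ((P[W k i (Fin.last n)|ℱ k]) ω)) * ENNReal.ofReal (Y k ω) := by
          rw [hGrep k ω]
      _ = ⨆ i, ENNReal.ofReal ((P[W k i (Fin.last n)|ℱ k]) ω) * ENNReal.ofReal (Y k ω) :=
          ENNReal.iSup_mul _ _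
      _ = ⨆ i, ENNReal.ofReal (Y k ω * (P[W k i (Fin.last n)|ℱ k]) ω) := by
          refine iSup_congr fun i => ?_
          rw [← ENNReal.ofReal_mul (h2 i), mul_comm ((P[W k i (Fin.last n)|ℱ k]) ω) (Y k ω)]
  have hmono2 : ∀ Y, Y ∈ 𝒴 → ∀ k, ∀ᵐ ω ∂P,
      Monotone fun i => ENNReal.ofReal (Y k ω * (P[W k i (Fin.last n)|ℱ k]) ω) := by
    intro Y hY k
    filter_upwards [hWmono k] with ω hω
    intro a b hab
    exact ENNReal.ofReal_le_ofReal (mul_le_mul_of_nonneg_left (hω hab) (hnonneg Y hY k ω))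
  have hmeas2 : ∀ Y, Y ∈ 𝒴 → ∀ k (i : ℕ),
      Measurable fun ω => ENNReal.ofReal (Y k ω * (P[W k i (Fin.last n)|ℱ k]) ω) := by
    intro Y hY k i
    exact ENNReal.measurable_ofReal.comp
      (((hadapted Y hY k).mono (ℱ.le k) le_rfl).mul
        ((stronglyMeasurable_condExp.mono (ℱ.le k)).measurable))
  -- integral bound
  have hINT : ∀ Y, Y ∈ 𝒴 → ∀ k, ∫⁻ ω, ENNReal.ofReal (Z k ω * Y k ω) ∂P ≤
      ⨆ Y' ∈ 𝒴, ⨆ k, ∫⁻ ω, ENNReal.ofReal (Y' k ω) ∂P := by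
    intro Y hY k
    by_cases hk : k = Fin.last n
    · subst hk
      have hz : ∀ ω, Z (Fin.last n) ω * Y (Fin.last n) ω = Y (Fin.last n) ω := fun ω => by
        rw [hZlast]; exact one_mul _
      calc ∫⁻ ω, ENNReal.ofReal (Z (Fin.last n) ω * Y (Fin.last n) ω) ∂P
          = ∫⁻ ω, ENNReal.ofReal (Y (Fin.last n) ω) ∂P :=
            lintegral_congr fun ω => by rw [hz ω]
        _ ≤ _ := st5_leC hY _
    · calc ∫⁻ ω, ENNReal.ofReal (Z k ω * Y k ω) ∂P
          = ∫⁻ ω, (⨆ i, ENNReal.ofReal (Y k ω * (P[W k i (Fin.last n)|ℱ k]) ω)) ∂P :=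
            lintegral_congr_ae (hrep Y hY k hk)
        _ = ⨆ i, ∫⁻ ω, ENNReal.ofReal (Y k ω * (P[W k i (Fin.last n)|ℱ k]) ω) ∂P :=
            lintegral_iSup' (fun i => (hmeas2 Y hY k i).aemeasurable) (hmono2 Y hY k)
        _ ≤ _ := by
            refine iSup_le fun i => ?_
            obtain ⟨T, hT𝒴, hTag, hTce⟩ := hTfork Y hY k i
            calc ∫⁻ ω, ENNReal.ofReal (Y k ω * (P[W k i (Fin.last n)|ℱ k]) ω) ∂P
                = ∫⁻ ω, ENNReal.ofReal ((P[T (Fin.last n)|ℱ k]) ω) ∂P :=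
                  lintegral_congr_ae (by filter_upwards [hTce] with ω hω; rw [hω])
              _ = ∫⁻ ω, ENNReal.ofReal (T (Fin.last n) ω) ∂P :=
                  st5_lint_condexp k (hint T hT𝒴 _) (fun ω => hnonneg T hT𝒴 _ ω)
              _ ≤ _ := st5_leC hT𝒴 _
  -- set-integral identity across times
  have hL1set : ∀ T, T ∈ 𝒴 → ∀ (k1 k2 : Fin (n + 1)), k1 ≤ k2 → ∀ s : Set Ω,
      MeasurableSet[ℱ k1] s →
      ∫⁻ ω in s, ENNReal.ofReal ((P[T (Fin.last n)|ℱ k2]) ω) ∂P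
        = ∫⁻ ω in s, ENNReal.ofReal ((P[T (Fin.last n)|ℱ k1]) ω) ∂P := by
    intro T hT k1 k2 hk s hs
    have hs2 : MeasurableSet[ℱ k2] s := ℱ.mono hk _ hs
    have e1 : ∫⁻ ω in s, ENNReal.ofReal ((P[T (Fin.last n)|ℱ k2]) ω) ∂P
        = ENNReal.ofReal (∫ ω in s, (P[T (Fin.last n)|ℱ k2]) ω ∂P) :=
      (ofReal_integral_eq_lintegral_ofReal integrable_condExp.integrableOn
        (ae_restrict_of_ae (condExp_nonneg
          (Eventually.of_forall fun ω => hnonneg T hT _ ω)))).symm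
    have e2 : ∫⁻ ω in s, ENNReal.ofReal ((P[T (Fin.last n)|ℱ k1]) ω) ∂P
        = ENNReal.ofReal (∫ ω in s, (P[T (Fin.last n)|ℱ k1]) ω ∂P) :=
      (ofReal_integral_eq_lintegral_ofReal integrable_condExp.integrableOn
        (ae_restrict_of_ae (condExp_nonneg
          (Eventually.of_forall fun ω => hnonneg T hT _ ω)))).symm
    rw [e1, e2, setIntegral_condExp (ℱ.le k2) (hint T hT _) hs2,
      setIntegral_condExp (ℱ.le k1) (hint T hT _) hs]
  -- the supermartingale set-inequality, lintegral version
  have hSET : ∀ Y, Y ∈ 𝒴 → ∀ i j : Fin (n + 1), i ≤ j → ∀ s : Set Ω, MeasurableSet[ℱ i] s →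
      ∫⁻ ω in s, ENNReal.ofReal (Z j ω * Y j ω) ∂P
        ≤ ∫⁻ ω in s, ENNReal.ofReal (Z i ω * Y i ω) ∂P := by
    intro Y hY i j hij s hs
    have hKEYr : ∀ T, T ∈ 𝒴 → (∀ j' ω, j' ≤ i → T j' ω = Y j' ω) →
        ∫⁻ ω in s, ENNReal.ofReal ((P[T (Fin.last n)|ℱ i]) ω) ∂P
          ≤ ∫⁻ ω in s, ENNReal.ofReal (Z i ω * Y i ω) ∂P := by
      intro T hT hag
      refine lintegral_mono_ae ?_
      exact ae_restrict_of_ae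
        ((hKEY Y hY i T hT hag).mono fun ω hω => ENNReal.ofReal_le_ofReal hω)
    by_cases hk : j = Fin.last n
    · subst hk
      have hcT : P[Y (Fin.last n)|ℱ (Fin.last n)] = Y (Fin.last n) :=
        condExp_of_stronglyMeasurable (ℱ.le _) (hadapted Y hY _).stronglyMeasurable (hint Y hY _)
      calc ∫⁻ ω in s, ENNReal.ofReal (Z (Fin.last n) ω * Y (Fin.last n) ω) ∂P
          = ∫⁻ ω in s, ENNReal.ofReal ((P[Y (Fin.last n)|ℱ (Fin.last n)]) ω) ∂P := by
            refine lintegral_congr fun ω => ?_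
            rw [hcT, hZlast]
            simp
        _ = ∫⁻ ω in s, ENNReal.ofReal ((P[Y (Fin.last n)|ℱ i]) ω) ∂P :=
            hL1set Y hY i (Fin.last n) hij s hs
        _ ≤ _ := hKEYr Y hY (fun _ _ _ => rfl)
    · calc ∫⁻ ω in s, ENNReal.ofReal (Z j ω * Y j ω) ∂P
          = ∫⁻ ω in s, (⨆ i', ENNReal.ofReal (Y j ω * (P[W j i' (Fin.last n)|ℱ j]) ω)) ∂P :=
            lintegral_congr_ae (ae_restrict_of_ae (hrep Y hY j hk))
        _ = ⨆ i', ∫⁻ ω in s, ENNReal.ofReal (Y j ω * (P[W j i' (Fin.last n)|ℱ j]) ω) ∂P :=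
            lintegral_iSup' (fun i' => (hmeas2 Y hY j i').aemeasurable)
              (ae_restrict_of_ae (hmono2 Y hY j))
        _ ≤ _ := by
            refine iSup_le fun i' => ?_
            obtain ⟨T, hT𝒴, hTag, hTce⟩ := hTfork Y hY j i'
            calc ∫⁻ ω in s, ENNReal.ofReal (Y j ω * (P[W j i' (Fin.last n)|ℱ j]) ω) ∂P
                = ∫⁻ ω in s, ENNReal.ofReal ((P[T (Fin.last n)|ℱ j]) ω) ∂P :=
                  lintegral_congr_ae (ae_restrict_of_ae
                    (by filter_upwards [hTce] with ω hω; rw [hω]))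
              _ = ∫⁻ ω in s, ENNReal.ofReal ((P[T (Fin.last n)|ℱ i]) ω) ∂P :=
                  hL1set T hT𝒴 i j hij s hs
              _ ≤ _ := hKEYr T hT𝒴 (fun j' ω hj' => hTag j' ω (le_trans hj' hij))
  -- integrability of `Z * Y`
  have hZYint : ∀ Y, Y ∈ 𝒴 → ∀ k, Integrable (fun ω => Z k ω * Y k ω) P := by
    intro Y hY k
    refine ⟨(((hZadapted k).mono (ℱ.le k) le_rfl).mul
      ((hadapted Y hY k).mono (ℱ.le k) le_rfl)).stronglyMeasurable.aestronglyMeasurable, ?_⟩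
    show (∫⁻ ω, (‖Z k ω * Y k ω‖₊ : ℝ≥0∞) ∂P) < ⊤
    have heq : ∀ ω, (‖Z k ω * Y k ω‖₊ : ℝ≥0∞) = ENNReal.ofReal (Z k ω * Y k ω) := fun ω => by
      rw [← enorm_eq_nnnorm, ← ofReal_norm,
        Real.norm_of_nonneg (mul_nonneg (hZ0 k ω) (hnonneg Y hY k ω))]
    calc (∫⁻ ω, (‖Z k ω * Y k ω‖₊ : ℝ≥0∞) ∂P)
        = ∫⁻ ω, ENNReal.ofReal (Z k ω * Y k ω) ∂P := lintegral_congr heq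
      _ ≤ ⨆ Y' ∈ 𝒴, ⨆ k, ∫⁻ ω, ENNReal.ofReal (Y' k ω) ∂P := hINT Y hY k
      _ < ⊤ := hL1
  -- Bochner version of the set inequality
  have hSETb : ∀ Y, Y ∈ 𝒴 → ∀ i j : Fin (n + 1), i ≤ j → ∀ s : Set Ω, MeasurableSet[ℱ i] s →
      ∫ ω in s, Z j ω * Y j ω ∂P ≤ ∫ ω in s, Z i ω * Y i ω ∂P := by
    intro Y hY i j hij s hs
    have h1 : ∫ ω in s, Z j ω * Y j ω ∂P
        = (∫⁻ ω in s, ENNReal.ofReal (Z j ω * Y j ω) ∂P).toReal := by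
      rw [integral_eq_lintegral_of_nonneg_ae
        (ae_restrict_of_ae (Eventually.of_forall fun ω =>
          mul_nonneg (hZ0 j ω) (hnonneg Y hY j ω)))
        ((hZYint Y hY j).aestronglyMeasurable.restrict)]
    have h2 : ∫ ω in s, Z i ω * Y i ω ∂P
        = (∫⁻ ω in s, ENNReal.ofReal (Z i ω * Y i ω) ∂P).toReal := by
      rw [integral_eq_lintegral_of_nonneg_ae
        (ae_restrict_of_ae (Eventually.of_forall fun ω =>
          mul_nonneg (hZ0 i ω) (hnonneg Y hY i ω)))
        ((hZYint Y hY i).aestronglyMeasurable.restrict)]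
    rw [h1, h2]
    refine ENNReal.toReal_mono ?_ (hSET Y hY i j hij s hs)
    refine ne_top_of_le_ne_top hL1.ne (le_trans ?_ (hINT Y hY i))
    exact lintegral_mono' Measure.restrict_le_self le_rfl
  -- conclusion
  refine ⟨Z, hZadapted,
    Eventually.of_forall (fun ω k => lt_of_lt_of_le zero_lt_one (hZ1 k ω)), hZlast, ?_,
    fun Y hY => iSup_le fun k => hINT Y hY k⟩
  intro Y hY
  have hsub : Submartingale (fun k ω => -(Z k ω * Y k ω)) ℱ P := by
    refine submartingale_of_setIntegral_le ?_ ?_ ?_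
    · exact fun k => (((hZadapted k).mul (hadapted Y hY k)).neg).stronglyMeasurable
    · exact fun k => (hZYint Y hY k).neg
    · intro i j hij s hs
      have hle := hSETb Y hY i j hij s hs
      rw [integral_neg, integral_neg]
      linarith
  have hsuper := hsub.neg
  have heqf : (-fun (k : Fin (n + 1)) (ω : Ω) => -(Z k ω * Y k ω))
      = fun k ω => Z k ω * Y k ω := by
    funext k ω; simp
  rw [heqf] at hsuper
  exact hsuper
end

section
/- Let (Ω, F, P) be a probability space and, for every n ∈ ℕ, let (Aⁿ_k : 1 ≤ k ≤ 2ⁿ) be a measurable partition of Ω with P(Aⁿ_k) = 2^{−n} for all k. Define Yⁿ_k = (2ⁿ/n) 1_{Aⁿ_k} and let F₀ = σ(Aⁿ_k : 1 ≤ k ≤ 2ⁿ, n ∈ ℕ). Then: (i) the family (Yⁿ_k : n, k) is uniformly integrable; (ii) if Z is a nonnegative random variable such that E[1_A Yⁿ_k] ≤ E[1_A Z] for every A ∈ F₀ and all n, k, then E[Z] = ∞. -/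
open MeasureTheory Filter Set
open scoped ENNReal NNReal Topology

lemma statement6_aux_sq (m : ℕ) : m * m ≤ 4 ^ m := by
  induction m with
  | zero => simp
  | succ m ih =>
    have h1 : m < 4 ^ m := Nat.lt_pow_self (by norm_num)
    have h3 : (4:ℕ) ^ (m + 1) = 4 * 4 ^ m := by ring
    have h4 : (m + 1) * (m + 1) = m * m + 2 * m + 1 := by ring
    omega

lemma statement6_aux_nat (m : ℕ) : m * (2 * m + 2) ≤ 2 ^ (2 * m + 2) := by
  have h1 := statement6_aux_sq m
  have h2 : m < 4 ^ m := Nat.lt_pow_self (by norm_num)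
  have h3 : (2:ℕ) ^ (2 * m + 2) = 4 * 4 ^ m := by
    have h4 : (2:ℕ) ^ (2 * m + 2) = 4 ^ (m + 1) := by
      rw [show 2 * m + 2 = 2 * (m + 1) by ring, pow_mul]
      norm_num
    rw [h4, pow_succ, Nat.mul_comm]
  have : m * (2 * m + 2) = 2 * (m * m) + 2 * m := by ring
  omega

/-- For measurable partitions `(Aⁿ_k)_{1 ≤ k ≤ 2ⁿ}` (here indexed by
`n + 1`, i.e. `n ≥ 1`) of `Ω` with `P(Aⁿ_k) = 2⁻ⁿ`, `Yⁿ_k = (2ⁿ/n) 1_{Aⁿ_k}` and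
`F₀ = σ(Aⁿ_k : n, k)`: (i) the family `(Yⁿ_k)` is uniformly integrable; (ii) if `Z ≥ 0`
satisfies `E[1_A Yⁿ_k] ≤ E[1_A Z]` for all `A ∈ F₀` and all `n, k`, then `E[Z] = ∞`. -/
theorem statement6 {Ω : Type*} [MeasurableSpace Ω] (P : Measure Ω) [IsProbabilityMeasure P]
    (A : (n : ℕ) → Fin (2 ^ (n + 1)) → Set Ω)
    (hmeas : ∀ n k, MeasurableSet (A n k))
    (hdisj : ∀ n, Pairwise fun k l => Disjoint (A n k) (A n l))
    (hcover : ∀ n, ⋃ k, A n k = univ)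
    (hprob : ∀ n k, P (A n k) = 1 / 2 ^ (n + 1))
    (Y : (n : ℕ) → Fin (2 ^ (n + 1)) → Ω → ℝ)
    (hY : ∀ n k ω, Y n k ω = (2 ^ (n + 1) : ℝ) / (n + 1) * (A n k).indicator 1 ω) :
    Tendsto (fun M : ℝ => ⨆ n, ⨆ k, ∫⁻ ω in {ω | M ≤ |Y n k ω|}, ENNReal.ofReal |Y n k ω| ∂P)
      atTop (𝓝 0) ∧
    ∀ Z : Ω → ℝ, Measurable Z → (∀ ω, 0 ≤ Z ω) →
      (∀ n k, ∀ A0 : Set Ω,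
        MeasurableSet[MeasurableSpace.generateFrom {s | ∃ n' k', s = A n' k'}] A0 →
        ∫⁻ ω in A0, ENNReal.ofReal (Y n k ω) ∂P ≤ ∫⁻ ω in A0, ENNReal.ofReal (Z ω) ∂P) →
      ∫⁻ ω, ENNReal.ofReal (Z ω) ∂P = ⊤ := by
  -- notation for the constant value of Yⁿ_k
  have hc_pos : ∀ n : ℕ, (0:ℝ) < (2 ^ (n + 1) : ℝ) / (n + 1) := by
    intro n; positivity
  -- value of Y on A n k and off
  have hY_mem : ∀ n k ω, ω ∈ A n k → Y n k ω = (2 ^ (n + 1) : ℝ) / (n + 1) := by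
    intro n k ω hω; rw [hY]; simp [Set.indicator_of_mem hω]
  have hY_not : ∀ n k ω, ω ∉ A n k → Y n k ω = 0 := by
    intro n k ω hω; rw [hY]; simp [Set.indicator_of_notMem hω]
  -- ofReal of the constant
  have hval : ∀ n : ℕ, ENNReal.ofReal ((2 ^ (n + 1) : ℝ) / (n + 1))
      = 2 ^ (n + 1) * (((n : ℝ≥0∞) + 1))⁻¹ := by
    intro n
    rw [ENNReal.ofReal_div_of_pos (by positivity), div_eq_mul_inv]
    congr 1
    · rw [ENNReal.ofReal_pow (by norm_num)]
      norm_num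
    · congr 1
      rw [show ((n : ℝ) + 1) = ((n + 1 : ℕ) : ℝ) by push_cast; ring,
        ENNReal.ofReal_natCast]
      push_cast; ring
  have hne0 : ∀ n : ℕ, ((n : ℝ≥0∞) + 1) ≠ 0 := by
    intro n; simp
  have hnetop : ∀ n : ℕ, ((n : ℝ≥0∞) + 1) ≠ ⊤ := by
    intro n
    exact ENNReal.add_ne_top.2 ⟨ENNReal.natCast_ne_top n, ENNReal.one_ne_top⟩
  have hpow_ne0 : ∀ n : ℕ, ((2 : ℝ≥0∞) ^ (n + 1)) ≠ 0 := by
    intro n; positivity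
  have hpow_netop : ∀ n : ℕ, ((2 : ℝ≥0∞) ^ (n + 1)) ≠ ⊤ := by
    intro n; exact ENNReal.pow_ne_top (by norm_num)
  -- ofReal c * P (A n k) = (n+1)⁻¹
  have hIA : ∀ (n : ℕ) (k : Fin (2 ^ (n + 1))), ENNReal.ofReal ((2 ^ (n + 1) : ℝ) / (n + 1)) * P (A n k)
      = (((n : ℝ≥0∞) + 1))⁻¹ := by
    intro n k
    rw [hval, hprob, one_div, mul_comm ((2 : ℝ≥0∞) ^ (n + 1)), mul_assoc,
      ENNReal.mul_inv_cancel (hpow_ne0 n) (hpow_netop n), mul_one]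
  constructor
  · -- Part (i): uniform integrability
    rw [ENNReal.tendsto_nhds_zero]
    intro ε hε
    obtain ⟨N, hN⟩ := ENNReal.exists_inv_nat_lt hε.ne'
    filter_upwards [eventually_ge_atTop ((2:ℝ) ^ (N + 1) + 1)] with M hM
    refine iSup_le fun n => iSup_le fun k => ?_
    by_cases hn : n ≤ N
    · -- the set is empty
      have hset : {ω | M ≤ |Y n k ω|} = ∅ := by
        ext ω
        simp only [Set.mem_setOf_eq, Set.mem_empty_iff_false, iff_false, not_le]
        have hle : |Y n k ω| ≤ (2 : ℝ) ^ (n + 1) := by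
          by_cases hω : ω ∈ A n k
          · rw [hY_mem n k ω hω, abs_of_pos (hc_pos n)]
            exact div_le_self (by positivity)
              ((le_add_iff_nonneg_left 1).2 (Nat.cast_nonneg n))
          · rw [hY_not n k ω hω, abs_zero]; positivity
        have h2 : (2 : ℝ) ^ (n + 1) ≤ (2 : ℝ) ^ (N + 1) :=
          pow_le_pow_right₀ (by norm_num) (by omega)
        linarith
      rw [hset]
      simp
    · -- n > N
      push_neg at hn
      calc ∫⁻ ω in {ω | M ≤ |Y n k ω|}, ENNReal.ofReal |Y n k ω| ∂P
          ≤ ∫⁻ ω, ENNReal.ofReal |Y n k ω| ∂P := setLIntegral_le_lintegral _ _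
        _ = ∫⁻ ω, (A n k).indicator
              (fun _ => ENNReal.ofReal ((2 ^ (n + 1) : ℝ) / (n + 1))) ω ∂P := by
            refine lintegral_congr fun ω => ?_
            by_cases hω : ω ∈ A n k
            · rw [hY_mem n k ω hω, Set.indicator_of_mem hω,
                abs_of_pos (hc_pos n)]
            · rw [hY_not n k ω hω, Set.indicator_of_notMem hω]; simp
        _ = ENNReal.ofReal ((2 ^ (n + 1) : ℝ) / (n + 1)) * P (A n k) := by
            rw [lintegral_indicator (hmeas n k), setLIntegral_const]
        _ = (((n : ℝ≥0∞) + 1))⁻¹ := hIA n k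
        _ ≤ ((N : ℝ≥0∞))⁻¹ := by
            refine ENNReal.inv_le_inv.2 ?_
            calc (N : ℝ≥0∞) ≤ (n : ℝ≥0∞) := by exact_mod_cast Nat.cast_le.2 hn.le
              _ ≤ (n : ℝ≥0∞) + 1 := le_self_add
        _ ≤ ε := hN.le
  · -- Part (ii)
    intro Z hZm hZ0 hle
    have hA0 : ∀ n k, MeasurableSet[MeasurableSpace.generateFrom
        {s | ∃ n' k', s = A n' k'}] (A n k) :=
      fun n k => MeasurableSpace.measurableSet_generateFrom ⟨n, k, rfl⟩
    have hlow : ∀ (n : ℕ) (k : Fin (2 ^ (n + 1))), (((n : ℝ≥0∞) + 1))⁻¹ ≤ ∫⁻ ω in A n k, ENNReal.ofReal (Z ω) ∂P := by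
      intro n k
      refine le_trans ?_ (hle n k (A n k) (hA0 n k))
      rw [setLIntegral_congr_fun (hmeas n k)
        (fun ω hω => by
          simp only []; rw [hY_mem n k ω hω] :
          EqOn (fun ω => ENNReal.ofReal (Y n k ω))
            (fun _ => ENNReal.ofReal ((2 ^ (n + 1) : ℝ) / (n + 1))) (A n k)),
        setLIntegral_const, hIA n k]
    have hsum : ∀ n : ℕ, (2 : ℝ≥0∞) ^ (n + 1) * (((n : ℝ≥0∞) + 1))⁻¹
        ≤ ∫⁻ ω, ENNReal.ofReal (Z ω) ∂P := by
      intro n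
      have h1 : ∫⁻ ω, ENNReal.ofReal (Z ω) ∂P
          = ∑' k : Fin (2 ^ (n + 1)), ∫⁻ ω in A n k, ENNReal.ofReal (Z ω) ∂P := by
        conv_lhs => rw [← setLIntegral_univ, ← hcover n]
        exact lintegral_iUnion (fun k => hmeas n k) (hdisj n) _
      rw [h1]
      calc (2 : ℝ≥0∞) ^ (n + 1) * (((n : ℝ≥0∞) + 1))⁻¹
          = ∑' _ : Fin (2 ^ (n + 1)), (((n : ℝ≥0∞) + 1))⁻¹ := by
            rw [tsum_fintype, Finset.sum_const, Finset.card_univ, Fintype.card_fin,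
              nsmul_eq_mul]
            push_cast; ring
        _ ≤ ∑' k : Fin (2 ^ (n + 1)), ∫⁻ ω in A n k, ENNReal.ofReal (Z ω) ∂P :=
            ENNReal.tsum_le_tsum fun k => hlow n k
    by_contra hne
    obtain ⟨m, hm⟩ := ENNReal.exists_nat_gt hne
    have hkey : (m : ℝ≥0∞) ≤ (2 : ℝ≥0∞) ^ (2 * m + 1 + 1) * (((2 * m + 1 : ℕ) : ℝ≥0∞) + 1)⁻¹ := by
      have hb : ((2 * m + 1 : ℕ) : ℝ≥0∞) + 1 = ((2 * m + 2 : ℕ) : ℝ≥0∞) := by push_cast; ring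
      rw [hb]
      have hb0 : ((2 * m + 2 : ℕ) : ℝ≥0∞) ≠ 0 := Nat.cast_ne_zero.2 (by omega)
      have hbt : ((2 * m + 2 : ℕ) : ℝ≥0∞) ≠ ⊤ := ENNReal.natCast_ne_top _
      have hcast : ((m * (2 * m + 2) : ℕ) : ℝ≥0∞) ≤ (2 : ℝ≥0∞) ^ (2 * m + 1 + 1) := by
        calc ((m * (2 * m + 2) : ℕ) : ℝ≥0∞) ≤ ((2 ^ (2 * m + 2) : ℕ) : ℝ≥0∞) :=
              Nat.cast_le.2 (statement6_aux_nat m)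
          _ = (2 : ℝ≥0∞) ^ (2 * m + 1 + 1) := by push_cast; ring_nf
      calc (m : ℝ≥0∞) = (m : ℝ≥0∞) * (((2 * m + 2 : ℕ) : ℝ≥0∞) * ((2 * m + 2 : ℕ) : ℝ≥0∞)⁻¹) := by
            rw [ENNReal.mul_inv_cancel hb0 hbt, mul_one]
        _ = ((m * (2 * m + 2) : ℕ) : ℝ≥0∞) * ((2 * m + 2 : ℕ) : ℝ≥0∞)⁻¹ := by
            push_cast; ring
        _ ≤ (2 : ℝ≥0∞) ^ (2 * m + 1 + 1) * ((2 * m + 2 : ℕ) : ℝ≥0∞)⁻¹ :=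
            mul_le_mul_left hcast _
    exact absurd (le_trans hkey (hsum (2 * m + 1))) (not_le.2 hm)
end

section
/- Let μ and ν be two probability measures on a filtered measurable space (Θ, 𝒢, (𝒢_t)_{t≥0}), let τ be a stopping time, and let (ζ_t)_{t≥0} be an adapted nonnegative process such that: (i) μ(τ = ∞) = 1; (ii) for every t ≥ 0 and every A ∈ 𝒢_t, ν(A ∩ {τ > t}) = ∫_A ζ_t dμ; and (iii) ζ_t converges μ-almost surely as t → ∞ to a limit ζ_∞ with μ(ζ_∞ > 0) = 1. Let 𝒢_∞ = ⋁_{t≥0} 𝒢_t be the σ-algebra generated by all the 𝒢_t. Then μ restricted to 𝒢_∞ is absolutely continuous with respect to ν restricted to 𝒢_∞. In fact, ν(A ∩ {τ = ∞}) ≥ ∫_A ζ_∞ dμ for every A ∈ 𝒢_∞. -/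
open MeasureTheory Filter Set
open scoped ENNReal NNReal Topology symmDiff

/-- Let `μ, ν` be probability measures on a filtered measurable space,
`τ` a stopping time and `(ζ_t)` an adapted nonnegative process with `μ(τ = ∞) = 1`,
`ν(A ∩ {τ > t}) = ∫_A ζ_t dμ` for `A ∈ 𝒢_t`, and `ζ_t → ζ_∞` μ-a.s. with `μ(ζ_∞ > 0) = 1`.
Then `μ|𝒢_∞ ≪ ν|𝒢_∞`; in fact `ν(A ∩ {τ = ∞}) ≥ ∫_A ζ_∞ dμ` for every `A ∈ 𝒢_∞`. -/
theorem statement11 {Θ : Type*} {m0 : MeasurableSpace Θ} (μ ν : Measure Θ)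
    [IsProbabilityMeasure μ] [IsProbabilityMeasure ν]
    (𝒢 : Filtration ℝ≥0 m0)
    (τ : Θ → ℝ≥0∞) (hτ : ∀ t : ℝ≥0, MeasurableSet[𝒢 t] {θ | τ θ ≤ (t : ℝ≥0∞)})
    (ζ : ℝ≥0 → Θ → ℝ)
    (hζmeas : ∀ t, Measurable[𝒢 t] (ζ t)) (hζnonneg : ∀ t θ, 0 ≤ ζ t θ)
    (hτμ : μ {θ | τ θ = ⊤} = 1)
    (hν : ∀ t : ℝ≥0, ∀ A : Set Θ, MeasurableSet[𝒢 t] A →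
      ν (A ∩ {θ | (t : ℝ≥0∞) < τ θ}) = ∫⁻ θ in A, ENNReal.ofReal (ζ t θ) ∂μ)
    (ζinf : Θ → ℝ)
    (hζconv : ∀ᵐ θ ∂μ, Tendsto (fun t => ζ t θ) atTop (𝓝 (ζinf θ)))
    (hζinfpos : μ {θ | 0 < ζinf θ} = 1) :
    μ.trim (iSup_le fun t => 𝒢.le t) ≪ ν.trim (iSup_le fun t => 𝒢.le t) ∧
    ∀ A : Set Θ, MeasurableSet[⨆ t : ℝ≥0, (𝒢 t : MeasurableSpace Θ)] A →
      ∫⁻ θ in A, ENNReal.ofReal (ζinf θ) ∂μ ≤ ν (A ∩ {θ | τ θ = ⊤}) := by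
  classical
  have hle : (⨆ t : ℝ≥0, (𝒢 t : MeasurableSpace Θ)) ≤ m0 := iSup_le fun t => 𝒢.le t
  -- measurability of tail sets of τ
  have hτmeas : ∀ t : ℝ≥0, MeasurableSet {θ | (t : ℝ≥0∞) < τ θ} := by
    intro t
    have h : {θ | (t : ℝ≥0∞) < τ θ} = {θ | τ θ ≤ (t : ℝ≥0∞)}ᶜ := by
      ext θ; simp [not_le]
    rw [h]
    exact (𝒢.le t _ (hτ t)).compl
  have hτtop_eq : ∀ B : Set Θ, B ∩ {θ | τ θ = ⊤}
      = ⋂ n : ℕ, B ∩ {θ | ((n : ℝ≥0) : ℝ≥0∞) < τ θ} := by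
    intro B
    ext θ
    simp only [mem_iInter, mem_inter_iff, mem_setOf_eq]
    constructor
    · rintro ⟨hB, hτθ⟩ n
      exact ⟨hB, by simp [hτθ]⟩
    · intro h
      refine ⟨(h 0).1, ?_⟩
      by_contra hne
      obtain ⟨n, hn⟩ := ENNReal.exists_nat_gt hne
      have h2 := (h n).2
      simp only [ENNReal.coe_natCast] at h2
      exact absurd hn (not_lt.2 h2.le)
  have hτtop : MeasurableSet {θ | τ θ = ⊤} := by
    have h := hτtop_eq univ
    simp only [univ_inter] at h
    rw [h]
    exact MeasurableSet.iInter fun n => hτmeas _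
  -- the measurable density candidate
  set g : Θ → ℝ≥0∞ := fun θ => limsup (fun n : ℕ => ENNReal.ofReal (ζ n θ)) atTop with hgdef
  have hζm0 : ∀ t : ℝ≥0, Measurable (ζ t) := fun t => (hζmeas t).mono (𝒢.le t) le_rfl
  have hg_meas : Measurable g :=
    Measurable.limsup fun n => (hζm0 n).ennreal_ofReal
  have hgζ : (fun θ => ENNReal.ofReal (ζinf θ)) =ᵐ[μ] g := by
    filter_upwards [hζconv] with θ hθ
    have h1 : Tendsto (fun n : ℕ => ENNReal.ofReal (ζ n θ)) atTop
        (𝓝 (ENNReal.ofReal (ζinf θ))) :=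
      (ENNReal.continuous_ofReal.tendsto _).comp (hθ.comp tendsto_natCast_atTop_atTop)
    exact (h1.limsup_eq).symm
  set κ : Measure Θ := μ.withDensity g with hκdef
  -- key inequality on the union of the filtration
  have hκν' : ∀ t : ℝ≥0, ∀ A : Set Θ, MeasurableSet[𝒢 t] A →
      κ A ≤ ν (A ∩ {θ | τ θ = ⊤}) := by
    intro t A hA
    have hAm : MeasurableSet A := 𝒢.le t A hA
    have hanti : Antitone (fun n : ℕ => A ∩ {θ | ((t + n : ℝ≥0) : ℝ≥0∞) < τ θ}) := by
      intro n m hnm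
      refine inter_subset_inter_right _ fun θ hθ => ?_
      simp only [mem_setOf_eq] at hθ ⊢
      refine lt_of_le_of_lt ?_ hθ
      exact_mod_cast add_le_add_right (by exact_mod_cast hnm) t
    have hiInter : ⋂ n : ℕ, (A ∩ {θ | ((t + n : ℝ≥0) : ℝ≥0∞) < τ θ})
        = A ∩ {θ | τ θ = ⊤} := by
      rw [hτtop_eq A]
      ext θ
      simp only [mem_iInter, mem_inter_iff, mem_setOf_eq]
      constructor
      · intro h n
        refine ⟨(h n).1, lt_of_le_of_lt ?_ (h n).2⟩
        exact_mod_cast (le_add_self : (n : ℝ≥0) ≤ t + n)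
      · intro h n
        refine ⟨(h n).1, ?_⟩
        have htop : τ θ = ⊤ := by
          by_contra hne
          obtain ⟨m, hm⟩ := ENNReal.exists_nat_gt hne
          have h2 := (h m).2
          simp only [ENNReal.coe_natCast] at h2
          exact absurd hm (not_lt.2 h2.le)
        rw [htop]
        exact ENNReal.coe_lt_top
    have htend : Tendsto (fun n : ℕ => ν (A ∩ {θ | ((t + n : ℝ≥0) : ℝ≥0∞) < τ θ}))
        atTop (𝓝 (ν (A ∩ {θ | τ θ = ⊤}))) := by
      have h := tendsto_measure_iInter_atTop (μ := ν)
        (s := fun n : ℕ => A ∩ {θ | ((t + n : ℝ≥0) : ℝ≥0∞) < τ θ})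
        (fun n => (hAm.inter (hτmeas _)).nullMeasurableSet) hanti
        ⟨0, measure_ne_top _ _⟩
      rwa [hiInter] at h
    have heqn : ∀ n : ℕ, ν (A ∩ {θ | ((t + n : ℝ≥0) : ℝ≥0∞) < τ θ})
        = ∫⁻ θ in A, ENNReal.ofReal (ζ (t + n) θ) ∂μ := fun n =>
      hν (t + n) A (𝒢.mono le_self_add A hA)
    have hκA : κ A = ∫⁻ θ in A, g θ ∂μ := withDensity_apply g hAm
    have hglim : ∀ᵐ θ ∂(μ.restrict A),
        g θ = liminf (fun n : ℕ => ENNReal.ofReal (ζ (t + n) θ)) atTop := by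
      filter_upwards [ae_restrict_of_ae hζconv] with θ hθ
      have h1 : Tendsto (fun n : ℕ => ENNReal.ofReal (ζ n θ)) atTop
          (𝓝 (ENNReal.ofReal (ζinf θ))) :=
        (ENNReal.continuous_ofReal.tendsto _).comp (hθ.comp tendsto_natCast_atTop_atTop)
      have h2 : Tendsto (fun n : ℕ => ENNReal.ofReal (ζ (t + n) θ)) atTop
          (𝓝 (ENNReal.ofReal (ζinf θ))) := by
        refine (ENNReal.continuous_ofReal.tendsto _).comp (hθ.comp ?_)
        exact tendsto_atTop_mono (fun n => le_add_self) tendsto_natCast_atTop_atTop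
      exact h1.limsup_eq.trans h2.liminf_eq.symm
    calc κ A = ∫⁻ θ in A, liminf (fun n : ℕ => ENNReal.ofReal (ζ (t + n) θ)) atTop ∂μ := by
          rw [hκA]; exact lintegral_congr_ae hglim
      _ ≤ liminf (fun n : ℕ => ∫⁻ θ in A, ENNReal.ofReal (ζ (t + n) θ) ∂μ) atTop :=
          lintegral_liminf_le fun n => (hζm0 _).ennreal_ofReal
      _ = liminf (fun n : ℕ => ν (A ∩ {θ | ((t + n : ℝ≥0) : ℝ≥0∞) < τ θ})) atTop := by
          simp_rw [heqn]
      _ = ν (A ∩ {θ | τ θ = ⊤}) := htend.liminf_eq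
  haveI hκfin : IsFiniteMeasure κ :=
    ⟨lt_of_le_of_lt (hκν' 0 univ (@MeasurableSet.univ Θ (𝒢 0))) (measure_lt_top ν _)⟩
  -- the algebra generating the supremum σ-algebra
  set 𝒜 : Set (Set Θ) := {s : Set Θ | ∃ t : ℝ≥0, MeasurableSet[𝒢 t] s} with h𝒜def
  have h𝒜 : IsSetAlgebra 𝒜 := by
    constructor
    · exact ⟨0, @MeasurableSet.empty Θ (𝒢 0)⟩
    · rintro s ⟨t, hs⟩; exact ⟨t, hs.compl⟩
    · rintro s u ⟨a, hs⟩ ⟨b, hu⟩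
      exact ⟨a ⊔ b, (𝒢.mono le_sup_left s hs).union (𝒢.mono le_sup_right u hu)⟩
  have hgen : (⨆ t : ℝ≥0, (𝒢 t : MeasurableSpace Θ)) = MeasurableSpace.generateFrom 𝒜 :=
    MeasurableSpace.measurableSpace_iSup_eq _
  set ν' : Measure Θ := ν.restrict {θ | τ θ = ⊤} with hν'def
  set ρ : Measure Θ := κ + ν' with hρdef
  haveI : IsFiniteMeasure ρ := by
    refine ⟨?_⟩
    rw [hρdef, Measure.add_apply]
    exact ENNReal.add_lt_top.2 ⟨measure_lt_top _ _, measure_lt_top _ _⟩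
  have hdense : @Measure.MeasureDense Θ (⨆ t : ℝ≥0, (𝒢 t : MeasurableSpace Θ)) (ρ.trim hle) 𝒜 :=
    @Measure.MeasureDense.of_generateFrom_isSetAlgebra_finite Θ
      (⨆ t : ℝ≥0, (𝒢 t : MeasurableSpace Θ)) (ρ.trim hle) 𝒜 (isFiniteMeasure_trim hle) h𝒜 hgen
  -- extension of the key inequality to the supremum σ-algebra
  have key : ∀ A : Set Θ, MeasurableSet[⨆ t : ℝ≥0, (𝒢 t : MeasurableSpace Θ)] A →
      κ A ≤ ν (A ∩ {θ | τ θ = ⊤}) := by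
    intro A hA
    have hAm0 : MeasurableSet A := hle _ hA
    refine ENNReal.le_of_forall_pos_le_add fun ε hε _ => ?_
    obtain ⟨B, hB𝒜, hAB⟩ := (@Measure.MeasureDense.approx Θ (⨆ t : ℝ≥0, (𝒢 t : MeasurableSpace Θ)) (ρ.trim hle) 𝒜 hdense) A hA
      (by rw [trim_measurableSet_eq hle hA]; exact measure_ne_top _ _)
      ((ε : ℝ) / 2) (by positivity)
    obtain ⟨tB, hB⟩ := hB𝒜
    have hBmS : MeasurableSet[⨆ t : ℝ≥0, (𝒢 t : MeasurableSpace Θ)] B :=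
      le_iSup (fun t => (𝒢 t : MeasurableSpace Θ)) tB B hB
    have hABmS : MeasurableSet[⨆ t : ℝ≥0, (𝒢 t : MeasurableSpace Θ)] (A ∆ B) :=
      hA.symmDiff hBmS
    rw [trim_measurableSet_eq hle hABmS] at hAB
    have hρAB : ρ (A ∆ B) ≤ ENNReal.ofReal ((ε : ℝ) / 2) := hAB.le
    have hκρ : ∀ s : Set Θ, κ s ≤ ρ s := fun s => by
      rw [hρdef, Measure.add_apply]; exact le_self_add
    have hν'ρ : ∀ s : Set Θ, ν' s ≤ ρ s := fun s => by
      rw [hρdef, Measure.add_apply]; exact le_add_self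
    have hdiffsub : A \ B ⊆ A ∆ B := by
      rw [Set.symmDiff_def]; exact subset_union_left
    have hκAB : κ (A \ B) ≤ ENNReal.ofReal ((ε : ℝ) / 2) :=
      ((measure_mono hdiffsub).trans (hκρ _)).trans hρAB
    have hνBA : ν ((B \ A) ∩ {θ | τ θ = ⊤}) ≤ ENNReal.ofReal ((ε : ℝ) / 2) := by
      have h1 : ν ((B \ A) ∩ {θ | τ θ = ⊤}) ≤ ν' (A ∆ B) := by
        rw [hν'def, Measure.restrict_apply' hτtop]
        refine measure_mono (inter_subset_inter_left _ ?_)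
        rw [Set.symmDiff_def]
        exact subset_union_right
      exact h1.trans ((hν'ρ _).trans hρAB)
    calc κ A ≤ κ (A ∩ B) + κ (A \ B) := measure_le_inter_add_diff κ A B
      _ ≤ κ B + ENNReal.ofReal ((ε : ℝ) / 2) :=
          add_le_add (measure_mono inter_subset_right) hκAB
      _ ≤ ν (B ∩ {θ | τ θ = ⊤}) + ENNReal.ofReal ((ε : ℝ) / 2) :=
          add_le_add_left (hκν' tB B hB) _
      _ ≤ (ν (A ∩ {θ | τ θ = ⊤}) + ν ((B \ A) ∩ {θ | τ θ = ⊤}))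
            + ENNReal.ofReal ((ε : ℝ) / 2) := by
          refine add_le_add_left (le_trans (measure_mono ?_) (measure_union_le _ _)) _
          rintro θ ⟨hθB, hθτ⟩
          by_cases hθA : θ ∈ A
          · exact Or.inl ⟨hθA, hθτ⟩
          · exact Or.inr ⟨⟨hθB, hθA⟩, hθτ⟩
      _ ≤ ν (A ∩ {θ | τ θ = ⊤}) + (ENNReal.ofReal ((ε : ℝ) / 2)
            + ENNReal.ofReal ((ε : ℝ) / 2)) := by
          rw [← add_assoc]
          exact add_le_add_left (add_le_add_right hνBA _) _
      _ = ν (A ∩ {θ | τ θ = ⊤}) + ε := by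
          rw [← ENNReal.ofReal_add (by positivity) (by positivity)]
          norm_num [ENNReal.ofReal_coe_nnreal]
  -- second conclusion
  have conc2 : ∀ A : Set Θ, MeasurableSet[⨆ t : ℝ≥0, (𝒢 t : MeasurableSpace Θ)] A →
      ∫⁻ θ in A, ENNReal.ofReal (ζinf θ) ∂μ ≤ ν (A ∩ {θ | τ θ = ⊤}) := by
    intro A hA
    have hAm0 : MeasurableSet A := hle _ hA
    have h1 : ∫⁻ θ in A, ENNReal.ofReal (ζinf θ) ∂μ = κ A := by
      rw [hκdef, withDensity_apply g hAm0]
      exact lintegral_congr_ae (ae_restrict_of_ae hgζ)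
    rw [h1]
    exact key A hA
  refine ⟨?_, conc2⟩
  -- absolute continuity
  refine Measure.AbsolutelyContinuous.mk fun s hs hνs => ?_
  rw [trim_measurableSet_eq hle hs] at hνs
  rw [trim_measurableSet_eq hle hs]
  have hsm0 : MeasurableSet s := hle _ hs
  have hκs : κ s = 0 :=
    le_antisymm (le_of_le_of_eq (key s hs) (measure_mono_null inter_subset_left hνs)) zero_le
  have hgs : g =ᵐ[μ.restrict s] 0 := by
    rw [← lintegral_eq_zero_iff hg_meas]
    rwa [hκdef, withDensity_apply g hsm0] at hκs
  have hmeasg : MeasurableSet {θ | g θ ≠ 0} := by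
    have h : {θ | g θ ≠ 0} = g ⁻¹' {0}ᶜ := by ext θ; simp
    rw [h]
    exact hg_meas (measurableSet_singleton 0).compl
  -- μ-a.e. g ≠ 0
  have hgne : μ {θ | g θ = 0} = 0 := by
    have hN : μ {θ | ¬ ENNReal.ofReal (ζinf θ) = g θ} = 0 := by
      rw [← ae_iff]; exact hgζ
    have hsub : {θ | 0 < ζinf θ} ⊆ {θ | g θ ≠ 0} ∪ {θ | ¬ ENNReal.ofReal (ζinf θ) = g θ} := by
      intro θ hθ
      by_cases hE : ENNReal.ofReal (ζinf θ) = g θ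
      · left
        simp only [mem_setOf_eq, ← hE]
        simp only [ne_eq, ENNReal.ofReal_eq_zero, not_le]
        exact hθ
      · exact Or.inr hE
    have h1 : (1 : ℝ≥0∞) ≤ μ {θ | g θ ≠ 0} := by
      calc (1 : ℝ≥0∞) = μ {θ | 0 < ζinf θ} := hζinfpos.symm
        _ ≤ μ ({θ | g θ ≠ 0} ∪ {θ | ¬ ENNReal.ofReal (ζinf θ) = g θ}) := measure_mono hsub
        _ ≤ μ {θ | g θ ≠ 0} + μ {θ | ¬ ENNReal.ofReal (ζinf θ) = g θ} := measure_union_le _ _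
        _ = μ {θ | g θ ≠ 0} := by rw [hN, add_zero]
    have h2 : μ {θ | g θ ≠ 0} = 1 := le_antisymm prob_le_one h1
    have h3 : {θ | g θ = 0} = {θ | g θ ≠ 0}ᶜ := by ext θ; simp
    rw [h3, prob_compl_eq_zero_iff hmeasg]
    exact h2
  have hrs : μ (s ∩ {θ | g θ ≠ 0}) = 0 := by
    have h : μ.restrict s {θ | g θ ≠ 0} = 0 := by
      have h' := ae_iff.mp hgs
      simpa using h'
    rwa [Measure.restrict_apply hmeasg, inter_comm] at h
  refine le_antisymm ?_ zero_le
  calc μ s ≤ μ (s ∩ {θ | g θ ≠ 0}) + μ (s \ {θ | g θ ≠ 0}) :=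
        measure_le_inter_add_diff μ s _
    _ ≤ 0 + μ {θ | g θ = 0} := by
        refine add_le_add hrs.le (measure_mono ?_)
        intro θ hθ
        simpa using hθ.2
    _ ≤ 0 := by rw [hgne, add_zero]
end

section
/- Let (Ω, F, (F_t)_{t≥0}) be a filtered measurable space with right-continuous filtration carrying two probability measures P and Q with P ≪ Q. Let γ be a right-continuous version of the density process γ_t = dP/dQ|_{F_t}, let T = inf{ t ≥ 0 : γ_t = 0 }, and define Z_t = 1_{{t < T}}/γ_t (with the convention 1_{{t<T}}/γ_t = 0 when γ_t = 0; note that P-almost surely γ_t > 0 for all t). Then for every nonnegative Q-supermartingale X, the process (Z_t X_t)_{t≥0} is a P-supermartingale; that is, for all s, t ≥ 0 and all A ∈ F_t, E_P[1_A Z_{t+s} X_{t+s}] ≤ E_P[1_A Z_t X_t]. -/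
open MeasureTheory Filter Set
open scoped ENNReal NNReal Topology

lemma aux_density {Ω : Type*} {m : MeasurableSpace Ω} (P Q : Measure Ω)
    (ℱ : Filtration ℝ≥0 m) (γ : ℝ≥0 → Ω → ℝ)
    (hγmeas : ∀ t, Measurable[ℱ t] (γ t))
    (hγdens : ∀ t : ℝ≥0, ∀ A : Set Ω, MeasurableSet[ℱ t] A →
      P A = ∫⁻ ω in A, ENNReal.ofReal (γ t ω) ∂Q)
    (u : ℝ≥0) {f : Ω → ℝ≥0∞} (hf : Measurable[ℱ u] f)
    {A : Set Ω} (hA : MeasurableSet[ℱ u] A) :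
    ∫⁻ ω in A, f ω ∂P = ∫⁻ ω in A, f ω * ENNReal.ofReal (γ u ω) ∂Q := by
  have hm := ℱ.le u
  have hg : Measurable[ℱ u] fun ω => ENNReal.ofReal (γ u ω) :=
    ENNReal.measurable_ofReal.comp (hγmeas u)
  have hP : P.trim hm = (Q.trim hm).withDensity (fun ω => ENNReal.ofReal (γ u ω)) := by
    refine @Measure.ext _ (ℱ u) _ _ fun s hs => ?_
    rw [trim_measurableSet_eq hm hs, hγdens u s hs, withDensity_apply _ hs,
      restrict_trim hm Q hs, lintegral_trim _ hg]
  have hif : Measurable[ℱ u] (A.indicator f) := hf.indicator hA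
  calc ∫⁻ ω in A, f ω ∂P = ∫⁻ ω, A.indicator f ω ∂P := (lintegral_indicator (hm A hA) f).symm
    _ = ∫⁻ ω, A.indicator f ω ∂(P.trim hm) := (lintegral_trim hm hif).symm
    _ = ∫⁻ ω, ((fun ω => ENNReal.ofReal (γ u ω)) * A.indicator f) ω ∂(Q.trim hm) := by
        rw [hP, lintegral_withDensity_eq_lintegral_mul _ hg hif]
    _ = ∫⁻ ω, ((fun ω => ENNReal.ofReal (γ u ω)) * A.indicator f) ω ∂Q :=
        lintegral_trim hm (hg.mul hif)
    _ = ∫⁻ ω in A, f ω * ENNReal.ofReal (γ u ω) ∂Q := by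
        rw [← lintegral_indicator (hm A hA)]
        congr 1; funext ω
        by_cases hω : ω ∈ A <;> simp [hω, mul_comm]

-- absorption: once γ is 0 it stays 0, Q-a.e.
lemma aux_absorb {Ω : Type*} {m : MeasurableSpace Ω} (P Q : Measure Ω)
    (ℱ : Filtration ℝ≥0 m) (γ : ℝ≥0 → Ω → ℝ)
    (hγmeas : ∀ t, Measurable[ℱ t] (γ t))
    (hγnonneg : ∀ t ω, 0 ≤ γ t ω)
    (hγdens : ∀ t : ℝ≥0, ∀ A : Set Ω, MeasurableSet[ℱ t] A →
      P A = ∫⁻ ω in A, ENNReal.ofReal (γ t ω) ∂Q)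
    {u v : ℝ≥0} (huv : u ≤ v) :
    ∀ᵐ ω ∂Q, γ u ω = 0 → γ v ω = 0 := by
  set A : Set Ω := {ω | γ u ω = 0} with hAdef
  have hA : MeasurableSet[ℱ u] A := hγmeas u (measurableSet_singleton 0)
  have hAm : MeasurableSet A := ℱ.le u A hA
  have h1 : P A = 0 := by
    rw [hγdens u A hA]
    have : ∀ ω ∈ A, ENNReal.ofReal (γ u ω) = 0 := fun ω hω => by
      simp [hAdef] at hω; simp [hω]
    rw [setLIntegral_congr_fun (f := fun ω => ENNReal.ofReal (γ u ω)) (g := fun _ => 0) hAm this]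
    simp
  have h2 : ∫⁻ ω in A, ENNReal.ofReal (γ v ω) ∂Q = 0 := by
    rw [← hγdens v A (ℱ.mono huv A hA), h1]
  have h3 : ∀ᵐ ω ∂(Q.restrict A), ENNReal.ofReal (γ v ω) = 0 := by
    have hmv : Measurable fun ω => ENNReal.ofReal (γ v ω) :=
      ENNReal.measurable_ofReal.comp ((hγmeas v).mono (ℱ.le v) le_rfl)
    have := (lintegral_eq_zero_iff hmv).mp h2
    filter_upwards [this] with ω hω using hω
  rw [ae_restrict_iff' hAm] at h3
  filter_upwards [h3] with ω hω h0
  have := hω h0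
  have : γ v ω ≤ 0 := by simpa [ENNReal.ofReal_eq_zero] using this
  exact le_antisymm this (hγnonneg v ω)

-- finite union bound
lemma aux_finbound {Ω : Type*} {m : MeasurableSpace Ω} (P Q : Measure Ω)
    (ℱ : Filtration ℝ≥0 m) (γ : ℝ≥0 → Ω → ℝ)
    (hγmeas : ∀ t, Measurable[ℱ t] (γ t))
    (hγdens : ∀ t : ℝ≥0, ∀ A : Set Ω, MeasurableSet[ℱ t] A →
      P A = ∫⁻ ω in A, ENNReal.ofReal (γ t ω) ∂Q)
    (d : ℕ → ℝ≥0) (ε : ℝ) (F : Finset ℕ) :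
    P (⋃ k ∈ F, {ω | γ (d k) ω < ε}) ≤
      ENNReal.ofReal ε * Q (⋃ k ∈ F, {ω | γ (d k) ω < ε}) := by
  classical
  induction F using Finset.induction_on_max_value d with
  | empty => simp
  | insert a s _ hmax ih =>
    set S : ℕ → Set Ω := fun k => {ω | γ (d k) ω < ε} with hS
    have hSmeas : ∀ k, MeasurableSet[ℱ (d k)] (S k) := fun k => hγmeas (d k) measurableSet_Iio
    have hU : MeasurableSet[ℱ (d a)] (⋃ k ∈ s, S k) := by
      refine MeasurableSet.biUnion s.countable_toSet fun k hk => ?_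
      exact ℱ.mono (hmax k hk) _ (hSmeas k)
    have hB : MeasurableSet[ℱ (d a)] (S a \ ⋃ k ∈ s, S k) := (hSmeas a).diff hU
    have hBm : MeasurableSet (S a \ ⋃ k ∈ s, S k) := ℱ.le (d a) _ hB
    have hset : (⋃ k ∈ insert a s, S k) = (⋃ k ∈ s, S k) ∪ (S a \ ⋃ k ∈ s, S k) := by
      rw [Set.union_diff_self, Finset.set_biUnion_insert, Set.union_comm]
    have hPB : P (S a \ ⋃ k ∈ s, S k) ≤ ENNReal.ofReal ε * Q (S a \ ⋃ k ∈ s, S k) := by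
      rw [hγdens (d a) _ hB]
      calc ∫⁻ ω in (S a \ ⋃ k ∈ s, S k), ENNReal.ofReal (γ (d a) ω) ∂Q
          ≤ ∫⁻ _ in (S a \ ⋃ k ∈ s, S k), ENNReal.ofReal ε ∂Q := by
            refine setLIntegral_mono measurable_const fun ω hω => ?_
            exact ENNReal.ofReal_le_ofReal (le_of_lt hω.1)
        _ = ENNReal.ofReal ε * Q (S a \ ⋃ k ∈ s, S k) := by rw [setLIntegral_const, mul_comm]
    calc P (⋃ k ∈ insert a s, S k)
        ≤ P (⋃ k ∈ s, S k) + P (S a \ ⋃ k ∈ s, S k) := by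
          rw [hset]; exact measure_union_le _ _
      _ ≤ ENNReal.ofReal ε * Q (⋃ k ∈ s, S k) + ENNReal.ofReal ε * Q (S a \ ⋃ k ∈ s, S k) :=
          add_le_add ih hPB
      _ = ENNReal.ofReal ε * Q (⋃ k ∈ insert a s, S k) := by
          rw [← mul_add, hset, measure_union (Set.disjoint_sdiff_right) hBm]

noncomputable def dseq : ℕ → ℝ≥0 := fun k => Real.toNNReal ((Denumerable.ofNat ℚ k : ℚ) : ℝ)

lemma dseq_surj (q : ℚ) : ∃ k, dseq k = Real.toNNReal (q : ℝ) := by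
  obtain ⟨k, hk⟩ := (Denumerable.eqv ℚ).symm.surjective q
  exact ⟨k, by unfold dseq; rw [show Denumerable.ofNat ℚ k = q from hk ▸ rfl]⟩

lemma aux_null {Ω : Type*} {m : MeasurableSpace Ω} (P Q : Measure Ω)
    [IsProbabilityMeasure Q]
    (ℱ : Filtration ℝ≥0 m) (γ : ℝ≥0 → Ω → ℝ)
    (hγmeas : ∀ t, Measurable[ℱ t] (γ t))
    (hγnonneg : ∀ t ω, 0 ≤ γ t ω)
    (hγdens : ∀ t : ℝ≥0, ∀ A : Set Ω, MeasurableSet[ℱ t] A →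
      P A = ∫⁻ ω in A, ENNReal.ofReal (γ t ω) ∂Q)
    (hγrc : ∀ ω t, ContinuousWithinAt (fun s => γ s ω) (Ici t) t)
    (T : Ω → ℝ≥0∞)
    (hT : ∀ ω, T ω = ⨅ (t : ℝ≥0) (_ : γ t ω = 0), (t : ℝ≥0∞))
    (u : ℝ≥0) :
    P {ω | ¬ ((u : ℝ≥0∞) < T ω)} = 0 := by
  set N : Set Ω := ⋂ n : ℕ, ⋃ k : ℕ, {ω | γ (dseq k) ω < 1 / (n + 1)} with hNdef
  have hsub : {ω | ¬ ((u : ℝ≥0∞) < T ω)} ⊆ N := by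
    intro ω hω
    simp only [Set.mem_setOf_eq, not_lt] at hω
    -- there is some s with γ s ω = 0
    have hzero : ∃ s : ℝ≥0, γ s ω = 0 := by
      by_contra hno
      push_neg at hno
      rw [hT ω] at hω
      have htop : (⊤ : ℝ≥0∞) ≤ (u : ℝ≥0∞) := by simpa [hno] using hω
      exact ENNReal.coe_ne_top (top_le_iff.mp htop)
    obtain ⟨s, hs⟩ := hzero
    refine Set.mem_iInter.2 fun n => ?_
    have hεpos : (0:ℝ) < 1 / (n + 1) := by positivity
    have rc := (Metric.continuousWithinAt_iff).1 (hγrc ω s) (1 / (n + 1)) hεpos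
    obtain ⟨δ, hδpos, hδ⟩ := rc
    obtain ⟨q, hq1, hq2⟩ := exists_rat_btwn (lt_add_of_pos_right (s:ℝ) hδpos)
    have hq0 : (0:ℝ) ≤ (q:ℝ) := le_trans s.coe_nonneg hq1.le
    obtain ⟨k, hk⟩ := dseq_surj q
    have hxq : ((dseq k : ℝ≥0) : ℝ) = (q:ℝ) := by rw [hk]; exact Real.coe_toNNReal _ hq0
    have hmem : dseq k ∈ Ici s := by
      rw [Set.mem_Ici, ← NNReal.coe_le_coe, hxq]; exact hq1.le
    have hdist : dist (dseq k) s < δ := by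
      rw [NNReal.dist_eq, hxq, abs_of_nonneg (by linarith)]
      linarith
    have := hδ hmem hdist
    rw [hs, dist_zero_right, Real.norm_eq_abs] at this
    exact Set.mem_iUnion.2 ⟨k, lt_of_le_of_lt (le_abs_self _) this⟩
  refine measure_mono_null hsub ?_
  have hb : ∀ n : ℕ, P N ≤ ENNReal.ofReal (1 / (n + 1)) := by
    intro n
    set ε : ℝ := 1 / (n + 1) with hε
    refine (measure_mono (Set.iInter_subset _ n)).trans ?_
    rw [measure_iUnion_eq_iSup_accumulate]
    refine iSup_le fun n' => ?_
    have hacc : accumulate (fun k => {ω | γ (dseq k) ω < ε}) n'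
        = ⋃ k ∈ Finset.Iic n', {ω | γ (dseq k) ω < ε} := by
      ext ω
      simp [Set.mem_accumulate, Set.accumulate_def]
    rw [hacc]
    calc P (⋃ k ∈ Finset.Iic n', {ω | γ (dseq k) ω < ε})
        ≤ ENNReal.ofReal ε * Q (⋃ k ∈ Finset.Iic n', {ω | γ (dseq k) ω < ε}) :=
          aux_finbound P Q ℱ γ hγmeas hγdens dseq ε (Finset.Iic n')
      _ ≤ ENNReal.ofReal ε * 1 := mul_le_mul_right prob_le_one _
      _ = ENNReal.ofReal ε := mul_one _
  have htend : Tendsto (fun n : ℕ => ENNReal.ofReal (1 / (n + 1))) atTop (𝓝 0) := by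
    rw [← ENNReal.ofReal_zero]
    exact (ENNReal.continuous_ofReal.tendsto 0).comp tendsto_one_div_add_atTop_nhds_zero_nat
  exact le_antisymm (ge_of_tendsto' htend hb) zero_le

/-- Let `P ≪ Q` on a filtered measurable space with right-continuous
filtration, let `γ` be a right-continuous version of the density process
`γ_t = dP/dQ|_{F_t}`, let `T = inf{t : γ_t = 0}` and `Z_t = 1_{t < T}/γ_t`. Then for every
nonnegative `Q`-supermartingale `X`, the process `ZX` is a `P`-supermartingale:
`E_P[1_A Z_{t+s} X_{t+s}] ≤ E_P[1_A Z_t X_t]` for all `s, t ≥ 0` and `A ∈ F_t`. -/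
theorem statement13 {Ω : Type*} {m : MeasurableSpace Ω} (P Q : Measure Ω)
    [IsProbabilityMeasure P] [IsProbabilityMeasure Q] (hPQ : P ≪ Q)
    (ℱ : Filtration ℝ≥0 m)
    (hright : ∀ t : ℝ≥0, ℱ t = ⨅ (s : ℝ≥0) (_ : t < s), ℱ s)
    (γ : ℝ≥0 → Ω → ℝ)
    (hγmeas : ∀ t, Measurable[ℱ t] (γ t))
    (hγnonneg : ∀ t ω, 0 ≤ γ t ω)
    (hγdens : ∀ t : ℝ≥0, ∀ A : Set Ω, MeasurableSet[ℱ t] A →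
      P A = ∫⁻ ω in A, ENNReal.ofReal (γ t ω) ∂Q)
    (hγrc : ∀ ω t, ContinuousWithinAt (fun s => γ s ω) (Ici t) t)
    (T : Ω → ℝ≥0∞)
    (hT : ∀ ω, T ω = ⨅ (t : ℝ≥0) (_ : γ t ω = 0), (t : ℝ≥0∞))
    (Z : ℝ≥0 → Ω → ℝ)
    (hZ : ∀ t ω, Z t ω = if (t : ℝ≥0∞) < T ω then (γ t ω)⁻¹ else 0)
    (X : ℝ≥0 → Ω → ℝ) (hX : Supermartingale X ℱ Q) (hXnonneg : ∀ t ω, 0 ≤ X t ω) :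
    ∀ s t : ℝ≥0, ∀ A : Set Ω, MeasurableSet[ℱ t] A →
      ∫⁻ ω in A, ENNReal.ofReal (Z (t + s) ω * X (t + s) ω) ∂P ≤
        ∫⁻ ω in A, ENNReal.ofReal (Z t ω * X t ω) ∂P := by
  intro s t A hA
  have hXm : ∀ v : ℝ≥0, Measurable[ℱ v] (X v) := fun v => (hX.stronglyAdapted v).measurable
  -- the key density computation, valid at any time `u` and any `B ∈ ℱ u`
  have key : ∀ u : ℝ≥0, ∀ B : Set Ω, MeasurableSet[ℱ u] B →
      ∫⁻ ω in B, ENNReal.ofReal ((γ u ω)⁻¹ * X u ω) ∂P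
        = ∫⁻ ω in {ω | 0 < γ u ω} ∩ B, ENNReal.ofReal (X u ω) ∂Q := by
    intro u B hB
    have hf : Measurable[ℱ u] fun ω => ENNReal.ofReal ((γ u ω)⁻¹ * X u ω) :=
      ENNReal.measurable_ofReal.comp ((hγmeas u).inv.mul (hXm u))
    rw [aux_density P Q ℱ γ hγmeas hγdens u hf hB]
    have hpt : (fun ω => ENNReal.ofReal ((γ u ω)⁻¹ * X u ω) * ENNReal.ofReal (γ u ω))
        = ({ω | 0 < γ u ω}).indicator (fun ω => ENNReal.ofReal (X u ω)) := by
      funext ω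
      by_cases h : 0 < γ u ω
      · have hmem : ω ∈ {ω | 0 < γ u ω} := h
        rw [Set.indicator_of_mem hmem,
          ← ENNReal.ofReal_mul (mul_nonneg (inv_nonneg.2 (hγnonneg u ω)) (hXnonneg u ω))]
        congr 1
        field_simp
      · have h0 : γ u ω = 0 := le_antisymm (not_lt.1 h) (hγnonneg u ω)
        have hmem : ω ∉ {ω | 0 < γ u ω} := h
        rw [Set.indicator_of_notMem hmem, h0]
        simp
    have hSmeas : MeasurableSet ({ω | 0 < γ u ω}) :=
      (ℱ.le u) _ (hγmeas u measurableSet_Ioi)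
    calc ∫⁻ ω in B, ENNReal.ofReal ((γ u ω)⁻¹ * X u ω) * ENNReal.ofReal (γ u ω) ∂Q
        = ∫⁻ ω in B, ({ω | 0 < γ u ω}).indicator (fun ω => ENNReal.ofReal (X u ω)) ω ∂Q := by
          rw [hpt]
      _ = ∫⁻ ω in {ω | 0 < γ u ω} ∩ B, ENNReal.ofReal (X u ω) ∂Q := by
          rw [lintegral_indicator hSmeas, Measure.restrict_restrict hSmeas]
  -- step 1 : pointwise bound `Z ≤ γ⁻¹`
  have step1 : ∫⁻ ω in A, ENNReal.ofReal (Z (t + s) ω * X (t + s) ω) ∂P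
      ≤ ∫⁻ ω in A, ENNReal.ofReal ((γ (t + s) ω)⁻¹ * X (t + s) ω) ∂P := by
    refine lintegral_mono fun ω => ENNReal.ofReal_le_ofReal ?_
    rw [hZ]
    split_ifs with h
    · exact le_rfl
    · rw [zero_mul]
      exact mul_nonneg (inv_nonneg.2 (hγnonneg _ ω)) (hXnonneg _ ω)
  -- step 2 : density at time `t+s`
  have hAts : MeasurableSet[ℱ (t + s)] A := ℱ.mono le_self_add A hA
  have step2 := key (t + s) A hAts
  -- step 3 : absorption
  have habs := aux_absorb P Q ℱ γ hγmeas hγnonneg hγdens (le_self_add : t ≤ t + s)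
  have step3 : ∫⁻ ω in {ω | 0 < γ (t + s) ω} ∩ A, ENNReal.ofReal (X (t + s) ω) ∂Q
      ≤ ∫⁻ ω in {ω | 0 < γ t ω} ∩ A, ENNReal.ofReal (X (t + s) ω) ∂Q := by
    refine lintegral_mono' (Measure.restrict_mono_ae ?_) le_rfl
    filter_upwards [habs] with ω hω
    intro hmem
    refine ⟨?_, hmem.2⟩
    by_contra hc
    have h0 : γ t ω = 0 := le_antisymm (not_lt.1 hc) (hγnonneg t ω)
    exact absurd (hω h0) (ne_of_gt hmem.1)
  -- step 4 : supermartingale property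
  have hB : MeasurableSet[ℱ t] ({ω | 0 < γ t ω} ∩ A) :=
    (hγmeas t measurableSet_Ioi).inter hA
  have hBm : MeasurableSet ({ω | 0 < γ t ω} ∩ A) := ℱ.le t _ hB
  have conv : ∀ v : ℝ≥0, ∫⁻ ω in {ω | 0 < γ t ω} ∩ A, ENNReal.ofReal (X v ω) ∂Q
      = ENNReal.ofReal (∫ ω in {ω | 0 < γ t ω} ∩ A, X v ω ∂Q) :=
    fun v => (ofReal_integral_eq_lintegral_ofReal (hX.integrable v).integrableOn
      (ae_of_all _ (hXnonneg v))).symm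
  have step4 : ∫⁻ ω in {ω | 0 < γ t ω} ∩ A, ENNReal.ofReal (X (t + s) ω) ∂Q
      ≤ ∫⁻ ω in {ω | 0 < γ t ω} ∩ A, ENNReal.ofReal (X t ω) ∂Q := by
    rw [conv (t + s), conv t]
    exact ENNReal.ofReal_le_ofReal (hX.setIntegral_le le_self_add hB)
  -- step 5 : density at time `t`, reversed
  have step5 := (key t A hA).symm
  -- step 6 : replace `γ⁻¹` by `Z t` using the null set
  have hnull := aux_null P Q ℱ γ hγmeas hγnonneg hγdens hγrc T hT t
  have hz : (fun ω => ENNReal.ofReal ((γ t ω)⁻¹ * X t ω))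
      =ᵐ[P] fun ω => ENNReal.ofReal (Z t ω * X t ω) := by
    refine (ae_iff).2 (measure_mono_null ?_ hnull)
    intro ω hω
    simp only [Set.mem_setOf_eq] at hω ⊢
    intro hlt
    exact hω (by rw [hZ, if_pos hlt])
  have step6 : ∫⁻ ω in A, ENNReal.ofReal ((γ t ω)⁻¹ * X t ω) ∂P
      = ∫⁻ ω in A, ENNReal.ofReal (Z t ω * X t ω) ∂P :=
    lintegral_congr_ae (ae_restrict_of_ae hz)
  calc ∫⁻ ω in A, ENNReal.ofReal (Z (t + s) ω * X (t + s) ω) ∂P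
      ≤ ∫⁻ ω in A, ENNReal.ofReal ((γ (t + s) ω)⁻¹ * X (t + s) ω) ∂P := step1
    _ = ∫⁻ ω in {ω | 0 < γ (t + s) ω} ∩ A, ENNReal.ofReal (X (t + s) ω) ∂Q := step2
    _ ≤ ∫⁻ ω in {ω | 0 < γ t ω} ∩ A, ENNReal.ofReal (X (t + s) ω) ∂Q := step3
    _ ≤ ∫⁻ ω in {ω | 0 < γ t ω} ∩ A, ENNReal.ofReal (X t ω) ∂Q := step4
    _ = ∫⁻ ω in A, ENNReal.ofReal ((γ t ω)⁻¹ * X t ω) ∂P := step5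
    _ = ∫⁻ ω in A, ENNReal.ofReal (Z t ω * X t ω) ∂P := step6
end
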